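/- arXiv:1710.00374 — 4 statements merged into one kernel-verified Lean document; each statement's English description precedes it below -/
import Mathlib

section
/- Let ℓ ≥ 2 and let I₂ denote the 2×2 identity matrix (equivalently, F_{0,1,1,0}). Then forb(m, 3, (𝒯_ℓ(3) \ 𝒯_ℓ(2)) ∪ {I₂}) is Θ(forbmax(m, I₂)); in particular there exist constants c₁, c₂ > 0 such that for all m ≥ 1, c₁ · m ≤ forb(m, 3, (𝒯_ℓ(3) \ 𝒯_ℓ(2)) ∪ {I₂}) ≤ c₂ · m. -/
/-- A matrix with natural number entries, of size `k × p`. -/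
abbrev MatN (k p : ℕ) := Matrix (Fin k) (Fin p) ℕ

/-- A matrix bundled with its dimensions. -/
structure CMat where
  rows : ℕ
  cols : ℕ
  mat : MatN rows cols

/-- A matrix is simple if no two of its columns are equal. -/
def SimpleM {m n : ℕ} (A : MatN m n) : Prop :=
  ∀ j₁ j₂ : Fin n, (∀ i, A i j₁ = A i j₂) → j₁ = j₂

/-- An `r`-matrix: all entries lie in `{0, 1, …, r-1}`. -/
def RMat (r : ℕ) {m n : ℕ} (A : MatN m n) : Prop := ∀ i j, A i j < r

/-- `F` is a configuration of `A` (written `F ≺ A`): some submatrix of `A` is a row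
and column permutation of `F`; equivalently there are injections of the rows and
columns of `F` into those of `A` realizing the entries of `F`. -/
def IsConfig {k p m n : ℕ} (F : MatN k p) (A : MatN m n) : Prop :=
  ∃ f : Fin k → Fin m, ∃ g : Fin p → Fin n,
    Function.Injective f ∧ Function.Injective g ∧ ∀ i j, A (f i) (g j) = F i j

/-- `A` avoids every matrix of the family `𝓕` as a configuration. -/
def AvoidsFam {m n : ℕ} (A : MatN m n) (𝓕 : Set CMat) : Prop :=
  ∀ F ∈ 𝓕, ¬ IsConfig F.mat A

/-- `forb m r 𝓕`: the maximum number of columns of an `m`-rowed simple `r`-matrix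
having no member of `𝓕` as a configuration. -/
noncomputable def forb (m r : ℕ) (𝓕 : Set CMat) : ℕ :=
  sSup { n : ℕ | ∃ A : MatN m n, RMat r A ∧ SimpleM A ∧ AvoidsFam A 𝓕 }

/-- `forbmax m r 𝓕`: the maximum of `forb m' r 𝓕` over `m' ≤ m`. -/
noncomputable def forbmax (m r : ℕ) (𝓕 : Set CMat) : ℕ :=
  sSup { x : ℕ | ∃ m' ≤ m, x = forb m' r 𝓕 }

/-- The number of 1's in column `j` of `A` (the column sum). -/
def colSum {m n : ℕ} (A : MatN m n) (j : Fin n) : ℕ :=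
  (Finset.univ.filter (fun i => A i j = 1)).card

/-- `forbK k m r 𝓕`: as `forb`, but restricted to matrices all of whose columns
have exactly `k` entries equal to 1. -/
noncomputable def forbK (k m r : ℕ) (𝓕 : Set CMat) : ℕ :=
  sSup { n : ℕ | ∃ A : MatN m n, RMat r A ∧ SimpleM A ∧ (∀ j, colSum A j = k) ∧
    AvoidsFam A 𝓕 }

/-- `forbmaxK k m r 𝓕`: the maximum of `forbK k m' r 𝓕` over `m' ≤ m`. -/
noncomputable def forbmaxK (k m r : ℕ) (𝓕 : Set CMat) : ℕ :=
  sSup { x : ℕ | ∃ m' ≤ m, x = forbK k m' r 𝓕 }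

/-- `Imat ℓ a b`: the `ℓ × ℓ` matrix with `a` on the diagonal and `b` off the diagonal. -/
def Imat (ℓ a b : ℕ) : MatN ℓ ℓ := fun i j => if i = j then a else b

/-- `Tmat ℓ a b`: the `ℓ × ℓ` matrix with `a` below the diagonal and `b` on or above it. -/
def Tmat (ℓ a b : ℕ) : MatN ℓ ℓ := fun i j => if (j : ℕ) < (i : ℕ) then a else b

/-- `Tmat3 ℓ a b c`: the `ℓ × ℓ` matrix with `a` below, `b` on, and `c` above the diagonal. -/
def Tmat3 (ℓ a b c : ℕ) : MatN ℓ ℓ :=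
  fun i j => if (j : ℕ) < (i : ℕ) then a else if i = j then b else c

/-- The family `𝒯_ℓ(r)` of all `I_ℓ(a,b)` and `T_ℓ(a,b)` with `a,b ∈ {0,…,r-1}`, `a ≠ b`. -/
def TFam (ℓ r : ℕ) : Set CMat :=
  { M | ∃ a b : ℕ, a < r ∧ b < r ∧ a ≠ b ∧
      (M = ⟨ℓ, ℓ, Imat ℓ a b⟩ ∨ M = ⟨ℓ, ℓ, Tmat ℓ a b⟩) }

/-- `t·F`: the concatenation of `t` copies of `F` side by side. -/
def tcopies {k p : ℕ} (t : ℕ) (F : MatN k p) : MatN k (t * p) :=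
  fun i j => F i ⟨(j : ℕ) % p, Nat.mod_lt _ (by
    rcases Nat.eq_zero_or_pos p with h | h
    · exact absurd j.isLt (by simp [h])
    · exact h)⟩

/-- `0×1×F`: `F` with an extra row of 0's and an extra row of 1's appended. -/
def zeroOneTop {k p : ℕ} (F : MatN k p) : MatN (k + 2) p :=
  fun i j => if h : (i : ℕ) < k then F ⟨i, h⟩ j else if (i : ℕ) = k then 0 else 1

/-- `F_{a,b,c,d}`: the `(a+b+c+d) × 2` matrix with `a` rows `[1 1]`, `b` rows `[1 0]`,
`c` rows `[0 1]` and `d` rows `[0 0]`. -/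
def Fabcd (a b c d : ℕ) : MatN (a + b + c + d) 2 :=
  fun i j =>
    if (i : ℕ) < a then 1
    else if (i : ℕ) < a + b then (if (j : ℕ) = 0 then 1 else 0)
    else if (i : ℕ) < a + b + c then (if (j : ℕ) = 0 then 0 else 1)
    else 0

namespace Stmt4Aux



/-- cons-like helper: prepend a value to a sequence. -/
def natCons {α : Type*} (x : α) {L : ℕ} (f : Fin L → α) : Fin (L+1) → α :=
  fun t => if h : (t : ℕ) = 0 then x else f ⟨(t : ℕ) - 1, by omega⟩

lemma natCons_zero {α : Type*} (x : α) {L : ℕ} (f : Fin L → α) (t : Fin (L+1))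
    (h : (t:ℕ) = 0) : natCons x f t = x := by simp [natCons, h]

lemma natCons_succ {α : Type*} (x : α) {L : ℕ} (f : Fin L → α) (t : Fin (L+1))
    (h : (t:ℕ) ≠ 0) : natCons x f t = f ⟨(t:ℕ)-1, by omega⟩ := by simp [natCons, h]

lemma natCons_strictMono (x : ℕ) {L : ℕ} (f : Fin L → ℕ) (hf : StrictMono f)
    (hx : ∀ i, x < f i) : StrictMono (natCons x f) := by
  intro a b hab
  rcases Nat.eq_zero_or_pos (a : ℕ) with ha | ha
  · rw [natCons_zero x f a ha, natCons_succ x f b (by have := (Fin.lt_def.mp hab); omega)]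
    exact hx _
  · have hb : (b:ℕ) ≠ 0 := by have := (Fin.lt_def.mp hab); omega
    rw [natCons_succ x f a (by omega), natCons_succ x f b hb]
    exact hf (by simp [Fin.lt_def]; have := (Fin.lt_def.mp hab); omega)

/-- finite Ramsey for pairs, pre-homogeneous form -/
lemma prehomogPairs (k : ℕ) (hk : 0 < k) (L : ℕ) :
    ∃ N, ∀ χ : ℕ → ℕ → Fin k, ∃ (a : Fin L → ℕ) (cl : Fin L → Fin k),
      StrictMono a ∧ (∀ i, a i < N) ∧ ∀ i j : Fin L, i < j → χ (a i) (a j) = cl i := by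
  induction L with
  | zero =>
    exact ⟨1, fun χ => ⟨Fin.elim0, Fin.elim0, fun a => a.elim0, fun a => a.elim0,
      fun a => a.elim0⟩⟩
  | succ L ih =>
    obtain ⟨N, hN⟩ := ih
    refine ⟨k * N + 2, fun χ => ?_⟩
    set S : Finset ℕ := Finset.Ico 1 (k*N+2) with hS
    have hScard : S.card = k * N + 1 := by simp [hS]
    have hpig : ∃ c : Fin k, N ≤ (S.filter (fun x => χ 0 x = c)).card := by
      by_contra hcon
      push_neg at hcon
      have hN1 : 1 ≤ N := by have := hcon ⟨0, hk⟩; omega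
      have h1 : S.card = ∑ c : Fin k, (S.filter (fun x => χ 0 x = c)).card :=
        Finset.card_eq_sum_card_fiberwise (fun x _ => Finset.mem_univ _)
      have h2 : ∑ c : Fin k, (S.filter (fun x => χ 0 x = c)).card ≤
          (Finset.univ : Finset (Fin k)).card • (N - 1) := by
        apply Finset.sum_le_card_nsmul
        intro c _
        have := hcon c
        omega
      have h3 : k * (N-1) + k = k * N := by
        rw [← Nat.mul_succ]; congr 1; omega
      simp only [Finset.card_univ, Fintype.card_fin, smul_eq_mul] at h2
      omega
    obtain ⟨c, hc⟩ := hpig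
    obtain ⟨S', hS'sub, hS'card⟩ := Finset.exists_subset_card_eq hc
    set e := S'.orderEmbOfFin hS'card with he
    have hemem : ∀ i : Fin N, (e i) ∈ S' := fun i => S'.orderEmbOfFin_mem hS'card i
    set ee : ℕ → ℕ := fun t => if h : t < N then e ⟨t, h⟩ else 0 with hee
    obtain ⟨a', cl', hmono', hbound', hcl'⟩ := hN (fun x y => χ (ee x) (ee y))
    refine ⟨natCons 0 (fun i => ee (a' i)), natCons c cl', ?_, ?_, ?_⟩
    · apply natCons_strictMono
      · intro i j hij
        have hi := hbound' i; have hj := hbound' j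
        simp only [hee, dif_pos hi, dif_pos hj]
        exact e.strictMono (by simpa [Fin.lt_def] using hmono' hij)
      · intro i
        have hi := hbound' i
        simp only [hee, dif_pos hi]
        have := hS'sub (hemem ⟨a' i, hi⟩)
        simp [hS, Finset.mem_Ico] at this
        omega
    · intro t
      rcases Nat.eq_zero_or_pos (t : ℕ) with h0 | h0
      · rw [natCons_zero _ _ _ h0]; omega
      · rw [natCons_succ _ _ _ (by omega)]
        set i : Fin L := ⟨(t:ℕ)-1, by omega⟩
        have hi := hbound' i
        simp only [hee, dif_pos hi]
        have := hS'sub (hemem ⟨a' i, hi⟩)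
        simp [hS, Finset.mem_Ico] at this
        omega
    · intro i j hij
      rcases Nat.eq_zero_or_pos (i : ℕ) with h0 | h0
      · rw [natCons_zero 0 _ i h0, natCons_zero c _ i h0,
          natCons_succ _ _ j (by have := Fin.lt_def.mp hij; omega)]
        set jj : Fin L := ⟨(j:ℕ)-1, by omega⟩
        have hj := hbound' jj
        have hmem : ee (a' jj) ∈ S' := by
          simp only [hee, dif_pos hj]; exact hemem _
        have h2 := hS'sub hmem
        simp only [Finset.mem_filter] at h2
        exact h2.2
      · rw [natCons_succ 0 _ i (by omega), natCons_succ c _ i (by omega),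
          natCons_succ _ _ j (by have := Fin.lt_def.mp hij; omega)]
        apply hcl'
        simp only [Fin.lt_def]
        have := Fin.lt_def.mp hij; omega

/-- finite Ramsey for pairs (ordered, monochromatic increasing subset). -/
theorem ramseyPairs (k s : ℕ) (hk : 0 < k) :
    ∃ N, ∀ χ : ℕ → ℕ → Fin k, ∃ (g : Fin s → ℕ) (c : Fin k),
      StrictMono g ∧ (∀ i, g i < N) ∧ ∀ i j : Fin s, i < j → χ (g i) (g j) = c := by
  rcases Nat.eq_zero_or_pos s with hs | hs
  · subst hs
    exact ⟨1, fun χ => ⟨Fin.elim0, ⟨0, hk⟩, fun a => a.elim0, fun a => a.elim0,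
      fun a => a.elim0⟩⟩
  obtain ⟨N, hN⟩ := prehomogPairs k hk (k * s)
  refine ⟨N, fun χ => ?_⟩
  obtain ⟨a, cl, hmono, hbound, hcl⟩ := hN χ
  have hpig : ∃ c : Fin k, s ≤ ((Finset.univ : Finset (Fin (k*s))).filter
      (fun x => cl x = c)).card := by
    by_contra hcon
    push_neg at hcon
    have h1 : (Finset.univ : Finset (Fin (k*s))).card =
        ∑ c : Fin k, ((Finset.univ : Finset (Fin (k*s))).filter (fun x => cl x = c)).card :=
      Finset.card_eq_sum_card_fiberwise (fun x _ => Finset.mem_univ _)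
    have h2 : ∑ c : Fin k, ((Finset.univ : Finset (Fin (k*s))).filter
        (fun x => cl x = c)).card ≤ (Finset.univ : Finset (Fin k)).card • (s-1) := by
      apply Finset.sum_le_card_nsmul
      intro c _
      have := hcon c; omega
    have h3 : k * (s-1) + k = k * s := by
      rw [← Nat.mul_succ]; congr 1; omega
    simp only [Finset.card_univ, Fintype.card_fin, smul_eq_mul] at h1 h2
    omega
  obtain ⟨c, hc⟩ := hpig
  obtain ⟨S', hS'sub, hS'card⟩ := Finset.exists_subset_card_eq hc
  set t := S'.orderEmbOfFin hS'card with ht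
  refine ⟨fun i => a (t i), c, ?_, fun i => hbound _, ?_⟩
  · intro i j hij
    exact hmono (t.strictMono hij)
  · intro i j hij
    have h1 : cl (t i) = c := by
      have := hS'sub (S'.orderEmbOfFin_mem hS'card i)
      simp only [Finset.mem_filter] at this
      exact this.2
    rw [← h1]
    exact hcl _ _ (t.strictMono hij)


/-- pre-homogeneous Ramsey for triples -/
lemma prehomogTriples (k : ℕ) (hk : 0 < k) (L : ℕ) :
    ∃ N, ∀ χ : ℕ → ℕ → ℕ → Fin k, ∃ (a : Fin L → ℕ) (cl : Fin L → Fin k),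
      StrictMono a ∧ (∀ i, a i < N) ∧
      ∀ i j l : Fin L, i < j → j < l → χ (a i) (a j) (a l) = cl i := by
  induction L with
  | zero =>
    exact ⟨1, fun χ => ⟨Fin.elim0, Fin.elim0, fun a => a.elim0, fun a => a.elim0,
      fun a => a.elim0⟩⟩
  | succ L ih =>
    obtain ⟨N', hN'⟩ := ih
    obtain ⟨P, hP⟩ := ramseyPairs k N' hk
    refine ⟨P + 1, fun χ => ?_⟩
    obtain ⟨g, c₀, hgmono, hgbound, hgc⟩ := hP (fun x y => χ 0 (x+1) (y+1))
    set gg : ℕ → ℕ := fun t => if h : t < N' then g ⟨t, h⟩ else 0 with hgg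
    obtain ⟨a', cl', hmono', hbound', hcl'⟩ :=
      hN' (fun x y z => χ (gg x + 1) (gg y + 1) (gg z + 1))
    refine ⟨natCons 0 (fun i => gg (a' i) + 1), natCons c₀ cl', ?_, ?_, ?_⟩
    · apply natCons_strictMono
      · intro i j hij
        have hi := hbound' i; have hj := hbound' j
        simp only [hgg, dif_pos hi, dif_pos hj]
        have := hgmono (show (⟨a' i, hi⟩ : Fin N') < ⟨a' j, hj⟩ by
          simp [Fin.lt_def]; exact hmono' hij)
        omega
      · intro i; omega
    · intro t
      rcases Nat.eq_zero_or_pos (t : ℕ) with h0 | h0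
      · rw [natCons_zero _ _ _ h0]; omega
      · rw [natCons_succ _ _ _ (by omega)]
        set i : Fin L := ⟨(t:ℕ)-1, by omega⟩
        have hi := hbound' i
        simp only [hgg, dif_pos hi]
        have := hgbound ⟨a' i, hi⟩
        omega
    · intro i j l hij hjl
      have hjpos : (j:ℕ) ≠ 0 := by have := Fin.lt_def.mp hij; omega
      have hlpos : (l:ℕ) ≠ 0 := by have h1 := Fin.lt_def.mp hjl; omega
      rcases Nat.eq_zero_or_pos (i : ℕ) with h0 | h0
      · rw [natCons_zero 0 _ i h0, natCons_zero c₀ _ i h0,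
          natCons_succ _ _ j hjpos, natCons_succ _ _ l hlpos]
        set jj : Fin L := ⟨(j:ℕ)-1, by omega⟩
        set ll : Fin L := ⟨(l:ℕ)-1, by omega⟩
        have hj := hbound' jj
        have hl := hbound' ll
        simp only [hgg, dif_pos hj, dif_pos hl]
        exact hgc ⟨a' jj, hj⟩ ⟨a' ll, hl⟩ (by
          simp [Fin.lt_def]
          exact hmono' (show jj < ll by
            simp [Fin.lt_def, jj, ll]
            have h1 := Fin.lt_def.mp hjl; omega))
      · rw [natCons_succ 0 _ i (by omega), natCons_succ c₀ _ i (by omega),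
          natCons_succ _ _ j hjpos, natCons_succ _ _ l hlpos]
        apply hcl'
        · simp only [Fin.lt_def]; have := Fin.lt_def.mp hij; omega
        · simp only [Fin.lt_def]; have := Fin.lt_def.mp hjl; omega

/-- finite Ramsey for triples -/
theorem ramseyTriples (k s : ℕ) (hk : 0 < k) :
    ∃ N, ∀ χ : ℕ → ℕ → ℕ → Fin k, ∃ (g : Fin s → ℕ) (c : Fin k),
      StrictMono g ∧ (∀ i, g i < N) ∧
      ∀ i j l : Fin s, i < j → j < l → χ (g i) (g j) (g l) = c := by
  rcases Nat.eq_zero_or_pos s with hs | hs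
  · subst hs
    exact ⟨1, fun χ => ⟨Fin.elim0, ⟨0, hk⟩, fun a => a.elim0, fun a => a.elim0,
      fun a => a.elim0⟩⟩
  obtain ⟨N, hN⟩ := prehomogTriples k hk (k * s)
  refine ⟨N, fun χ => ?_⟩
  obtain ⟨a, cl, hmono, hbound, hcl⟩ := hN χ
  have hpig : ∃ c : Fin k, s ≤ ((Finset.univ : Finset (Fin (k*s))).filter
      (fun x => cl x = c)).card := by
    by_contra hcon
    push_neg at hcon
    have h1 : (Finset.univ : Finset (Fin (k*s))).card =
        ∑ c : Fin k, ((Finset.univ : Finset (Fin (k*s))).filter (fun x => cl x = c)).card :=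
      Finset.card_eq_sum_card_fiberwise (fun x _ => Finset.mem_univ _)
    have h2 : ∑ c : Fin k, ((Finset.univ : Finset (Fin (k*s))).filter
        (fun x => cl x = c)).card ≤ (Finset.univ : Finset (Fin k)).card • (s-1) := by
      apply Finset.sum_le_card_nsmul
      intro c _
      have := hcon c; omega
    have h3 : k * (s-1) + k = k * s := by
      rw [← Nat.mul_succ]; congr 1; omega
    simp only [Finset.card_univ, Fintype.card_fin, smul_eq_mul] at h1 h2
    omega
  obtain ⟨c, hc⟩ := hpig
  obtain ⟨S', hS'sub, hS'card⟩ := Finset.exists_subset_card_eq hc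
  set t := S'.orderEmbOfFin hS'card with ht
  refine ⟨fun i => a (t i), c, ?_, fun i => hbound _, ?_⟩
  · intro i j hij
    exact hmono (t.strictMono hij)
  · intro i j l hij hjl
    have h1 : cl (t i) = c := by
      have := hS'sub (S'.orderEmbOfFin_mem hS'card i)
      simp only [Finset.mem_filter] at this
      exact this.2
    rw [← h1]
    exact hcl _ _ _ (t.strictMono hij) (t.strictMono hjl)




def famF (ℓ : ℕ) : Set CMat := (TFam ℓ 3 \ TFam ℓ 2) ∪ {⟨2, 2, !![1, 0; 0, 1]⟩}

variable {ℓ : ℕ}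

lemma cmat_eq_iff {M M' : MatN ℓ ℓ} :
    (⟨ℓ, ℓ, M⟩ : CMat) = ⟨ℓ, ℓ, M'⟩ ↔ M = M' := by
  simp [CMat.mk.injEq]

lemma Imat_eval_eq (a b : ℕ) (i j : Fin ℓ) (h : i = j) : Imat ℓ a b i j = a := by
  simp [Imat, h]
lemma Imat_eval_ne (a b : ℕ) (i j : Fin ℓ) (h : i ≠ j) : Imat ℓ a b i j = b := by
  simp [Imat, h]
lemma Tmat_eval_lt (a b : ℕ) (i j : Fin ℓ) (h : (j:ℕ) < (i:ℕ)) : Tmat ℓ a b i j = a := by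
  simp [Tmat, h]
lemma Tmat_eval_ge (a b : ℕ) (i j : Fin ℓ) (h : ¬ (j:ℕ) < (i:ℕ)) : Tmat ℓ a b i j = b := by
  simp [Tmat, h]

lemma Imat_inj (hl : 2 ≤ ℓ) {a b a' b' : ℕ} (h : Imat ℓ a b = Imat ℓ a' b') :
    a = a' ∧ b = b' := by
  have i0 : Fin ℓ := ⟨0, by omega⟩
  have e00 := congrFun (congrFun h ⟨0, by omega⟩) ⟨0, by omega⟩
  have e01 := congrFun (congrFun h ⟨0, by omega⟩) ⟨1, by omega⟩
  rw [Imat_eval_eq _ _ _ _ rfl, Imat_eval_eq _ _ _ _ rfl] at e00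
  rw [Imat_eval_ne _ _ _ _ (by simp [Fin.ext_iff]),
    Imat_eval_ne _ _ _ _ (by simp [Fin.ext_iff])] at e01
  exact ⟨e00, e01⟩

lemma Imat_ne_Tmat (hl : 2 ≤ ℓ) {a b a' b' : ℕ} (hab : a ≠ b)
    (h : Imat ℓ a b = Tmat ℓ a' b') : False := by
  have e00 := congrFun (congrFun h ⟨0, by omega⟩) ⟨0, by omega⟩
  have e01 := congrFun (congrFun h ⟨0, by omega⟩) ⟨1, by omega⟩
  rw [Imat_eval_eq _ _ _ _ rfl, Tmat_eval_ge _ _ _ _ (by simp)] at e00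
  rw [Imat_eval_ne _ _ _ _ (by simp [Fin.ext_iff]), Tmat_eval_ge _ _ _ _ (by simp)] at e01
  exact hab (e00.trans e01.symm)

lemma Tmat_inj (hl : 2 ≤ ℓ) {a b a' b' : ℕ} (h : Tmat ℓ a b = Tmat ℓ a' b') :
    a = a' ∧ b = b' := by
  have e00 := congrFun (congrFun h ⟨0, by omega⟩) ⟨0, by omega⟩
  have e10 := congrFun (congrFun h ⟨1, by omega⟩) ⟨0, by omega⟩
  rw [Tmat_eval_ge _ _ _ _ (by simp), Tmat_eval_ge _ _ _ _ (by simp)] at e00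
  rw [Tmat_eval_lt _ _ _ _ (by simp), Tmat_eval_lt _ _ _ _ (by simp)] at e10
  exact ⟨e10, e00⟩

lemma mem_famF_I (hl : 2 ≤ ℓ) (a b : ℕ) (ha : a < 3) (hb : b < 3) (hab : a ≠ b)
    (h2 : a = 2 ∨ b = 2) : (⟨ℓ, ℓ, Imat ℓ a b⟩ : CMat) ∈ famF ℓ := by
  left
  refine ⟨⟨a, b, ha, hb, hab, Or.inl rfl⟩, ?_⟩
  rintro ⟨a', b', ha', hb', hab', (h | h)⟩
  · rw [cmat_eq_iff] at h
    obtain ⟨h1, h2'⟩ := Imat_inj hl h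
    omega
  · rw [cmat_eq_iff] at h
    exact Imat_ne_Tmat hl hab h

lemma mem_famF_T (hl : 2 ≤ ℓ) (a b : ℕ) (ha : a < 3) (hb : b < 3) (hab : a ≠ b)
    (h2 : a = 2 ∨ b = 2) : (⟨ℓ, ℓ, Tmat ℓ a b⟩ : CMat) ∈ famF ℓ := by
  left
  refine ⟨⟨a, b, ha, hb, hab, Or.inr rfl⟩, ?_⟩
  rintro ⟨a', b', ha', hb', hab', (h | h)⟩
  · rw [cmat_eq_iff] at h
    exact Imat_ne_Tmat hl hab' h.symm
  · rw [cmat_eq_iff] at h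
    obtain ⟨h1, h2'⟩ := Tmat_inj hl h
    omega

/-- generic contradiction builder -/
lemma build_contra {m n : ℕ} (A : MatN m n) (FAM : Set CMat)
    (hAv : AvoidsFam A FAM) (F : MatN ℓ ℓ) (hF : (⟨ℓ, ℓ, F⟩ : CMat) ∈ FAM)
    (r : Fin ℓ → Fin m) (c : Fin ℓ → Fin n) (hc : Function.Injective c)
    (hmatch : ∀ i j, A (r i) (c j) = F i j)
    (hrows : ∀ i i' : Fin ℓ, i ≠ i' → ∃ j, F i j ≠ F i' j) : False := by
  apply hAv ⟨ℓ, ℓ, F⟩ hF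
  refine ⟨r, c, ?_, hc, hmatch⟩
  intro i i' hii
  by_contra hne
  obtain ⟨j, hj⟩ := hrows i i' hne
  apply hj
  rw [← hmatch i j, ← hmatch i' j, hii]

lemma Imat_rows_distinct (a b : ℕ) (hab : a ≠ b) (i i' : Fin ℓ) (h : i ≠ i') :
    ∃ j, Imat ℓ a b i j ≠ Imat ℓ a b i' j := by
  refine ⟨i, ?_⟩
  rw [Imat_eval_eq _ _ _ _ rfl, Imat_eval_ne _ _ _ _ (Ne.symm h)]
  exact hab

lemma Tmat_rows_distinct (a b : ℕ) (hab : a ≠ b) (i i' : Fin ℓ) (h : i ≠ i') :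
    ∃ j, Tmat ℓ a b i j ≠ Tmat ℓ a b i' j := by
  rcases lt_or_gt_of_ne (fun he => h (Fin.ext he) : (i:ℕ) ≠ (i':ℕ)) with hlt | hlt
  · refine ⟨i, ?_⟩
    rw [Tmat_eval_ge _ _ _ _ (by omega), Tmat_eval_lt _ _ _ _ (by omega)]
    exact fun he => hab he.symm
  · refine ⟨i', ?_⟩
    rw [Tmat_eval_lt _ _ _ _ (by omega), Tmat_eval_ge _ _ _ _ (by omega)]
    exact hab

/-- The I₂ dichotomy. -/
lemma i2_dichotomy {m n : ℕ} (A : MatN m n) (FAM : Set CMat)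
    (hI2 : (⟨2, 2, !![1, 0; 0, 1]⟩ : CMat) ∈ FAM)
    (hAv : AvoidsFam A FAM) (j k : Fin n) (hjk : j ≠ k) :
    (∀ x, ¬(A x j = 1 ∧ A x k = 0)) ∨ (∀ y, ¬(A y k = 1 ∧ A y j = 0)) := by
  by_contra hcon
  push_neg at hcon
  obtain ⟨⟨x, hx1, hx0⟩, ⟨y, hy1, hy0⟩⟩ := hcon
  have hxy : x ≠ y := by
    intro he; rw [he] at hx1; rw [hx1] at hy0; omega
  apply hAv _ hI2
  refine ⟨![x, y], ![j, k], ?_, ?_, ?_⟩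
  · intro a b hab
    fin_cases a <;> fin_cases b <;> simp_all
  · intro a b hab
    fin_cases a <;> fin_cases b <;> simp_all
  · intro a b
    fin_cases a <;> fin_cases b <;>
      simp_all [Matrix.cons_val_zero, Matrix.cons_val_one, Matrix.head_cons]


/-- endgame: a (2ℓ)×(2ℓ) staircase pattern with u on the diagonal, v above,
w below yields a contradiction. -/
lemma endgame (hl : 2 ≤ ℓ) {m n : ℕ} (A : MatN m n) (FAM : Set CMat)
    (hAv : AvoidsFam A FAM) (u v w : ℕ) (huv : u ≠ v)
    (hIuv : (⟨ℓ, ℓ, Imat ℓ u v⟩ : CMat) ∈ FAM)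
    (hTwv : w ≠ v → (⟨ℓ, ℓ, Tmat ℓ w v⟩ : CMat) ∈ FAM)
    (R : Fin (2*ℓ) → Fin m) (C : Fin (2*ℓ) → Fin n) (hC : Function.Injective C)
    (hdiag : ∀ i, A (R i) (C i) = u)
    (habove : ∀ i j, i < j → A (R i) (C j) = v)
    (hbelow : ∀ i j, j < i → A (R i) (C j) = w) : False := by
  by_cases hwv : w = v
  · -- Imat ℓ u v
    subst hwv
    refine build_contra A FAM hAv (Imat ℓ u w) hIuv
      (fun t => R ⟨t, by omega⟩) (fun t => C ⟨t, by omega⟩) ?_ ?_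
      (Imat_rows_distinct u w huv)
    · intro a b hab
      have := hC hab
      simp only [Fin.mk.injEq] at this
      exact Fin.ext this
    · intro t s
      by_cases hts : t = s
      · subst hts
        rw [Imat_eval_eq _ _ _ _ rfl]
        exact hdiag _
      · rw [Imat_eval_ne _ _ _ _ hts]
        rcases lt_or_gt_of_ne (fun he => hts (Fin.ext he) : (t:ℕ) ≠ (s:ℕ)) with hlt | hlt
        · exact habove _ _ (Fin.mk_lt_mk.mpr (by omega))
        · exact hbelow _ _ (Fin.mk_lt_mk.mpr (by omega))
  · -- Tmat ℓ w v
    refine build_contra A FAM hAv (Tmat ℓ w v) (hTwv hwv)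
      (fun t => R ⟨2*(t:ℕ), by omega⟩) (fun s => C ⟨2*(s:ℕ)+1, by omega⟩) ?_ ?_
      (Tmat_rows_distinct w v hwv)
    · intro a b hab
      have := hC hab
      simp only [Fin.mk.injEq] at this
      exact Fin.ext (by omega)
    · intro t s
      by_cases hts : (s:ℕ) < (t:ℕ)
      · rw [Tmat_eval_lt _ _ _ _ hts]
        exact hbelow _ _ (Fin.mk_lt_mk.mpr (by omega))
      · rw [Tmat_eval_ge _ _ _ _ hts]
        exact habove _ _ (Fin.mk_lt_mk.mpr (by omega))




set_option maxHeartbeats 1000000 in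
/-- The core machine. -/
lemma zlemma (hl : 2 ≤ ℓ) (FAM : Set CMat) (u v : ℕ) (huv : u ≠ v) (W : ℕ → Prop)
    (hIuv : (⟨ℓ, ℓ, Imat ℓ u v⟩ : CMat) ∈ FAM)
    (hIvu : (⟨ℓ, ℓ, Imat ℓ v u⟩ : CMat) ∈ FAM)
    (hT : ∀ w, W w → w ≠ v → (⟨ℓ, ℓ, Tmat ℓ w v⟩ : CMat) ∈ FAM) :
    ∃ Q : ℕ, 2 ≤ Q ∧ ∀ (m n : ℕ) (A : MatN m n), RMat 3 A → AvoidsFam A FAM →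
      ∀ (cc : Fin Q → Fin n), Function.Injective cc →
      ∀ (z : ∀ i j : Fin Q, i < j → Fin m),
      (∀ i j h, A (z i j h) (cc i) = u) →
      (∀ i j h, A (z i j h) (cc j) = v) →
      (∀ i j h (s : Fin Q), i < s → (A (z i j h) (cc s) = u ∨ A (z i j h) (cc s) = v)) →
      (∀ i j h (s : Fin Q), s < i → W (A (z i j h) (cc s))) →
      False := by
  obtain ⟨P1, hP1⟩ := ramseyPairs 3 (4*ℓ) (by norm_num)
  obtain ⟨P2, hP2⟩ := ramseyPairs 3 (2*ℓ) (by norm_num)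
  obtain ⟨p, hpP1, hpP2, hpl, hppos⟩ :
      ∃ p : ℕ, P1 < p ∧ P2 < p ∧ ℓ < p ∧ 0 < p :=
    ⟨P1 + P2 + ℓ + 3, by omega, by omega, by omega, by omega⟩
  obtain ⟨Q, hQ⟩ := ramseyTriples 4 p (by norm_num)
  have hQ2 : 2 ≤ Q := by
    obtain ⟨g, c, hm, hb, _⟩ := hQ (fun _ _ _ => ⟨0, by norm_num⟩)
    have h01 : g ⟨0, by omega⟩ < g ⟨1, by omega⟩ := hm (Fin.mk_lt_mk.mpr (by omega))
    have := hb ⟨1, by omega⟩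
    omega
  refine ⟨Q, hQ2, ?_⟩
  intro m n A hR hAv cc hcc z hzu hzv hgt hlt
  obtain ⟨ccf, hccf⟩ : ∃ f : ℕ → Fin n, ∀ (t : ℕ) (h : t < Q), f t = cc ⟨t, h⟩ :=
    ⟨fun t => if h : t < Q then cc ⟨t, h⟩ else cc ⟨0, by omega⟩,
      fun t h => by simp only [dif_pos h]⟩
  obtain ⟨zf, hzf⟩ : ∃ f : ℕ → ℕ → Fin m,
      ∀ (a b : ℕ) (ha : a < Q) (hb : b < Q) (hab : a < b),
        f a b = z ⟨a, ha⟩ ⟨b, hb⟩ (Fin.mk_lt_mk.mpr hab) := by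
    refine ⟨fun a b =>
      if h : a < Q ∧ b < Q ∧ a < b then
        z ⟨a, h.1⟩ ⟨b, h.2.1⟩ (Fin.mk_lt_mk.mpr h.2.2)
      else z ⟨0, by omega⟩ ⟨1, by omega⟩ (Fin.mk_lt_mk.mpr (by omega)), ?_⟩
    intro a b ha hb hab
    simp only [dif_pos (show a < Q ∧ b < Q ∧ a < b from ⟨ha, hb, hab⟩)]
  obtain ⟨M, c₃, hMmono, hMb, hMc⟩ := hQ (fun x y k =>
    if A (zf x y) (ccf k) = v then
      (if A (zf x k) (ccf y) = v then ⟨0, by omega⟩ else ⟨1, by omega⟩)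
    else
      (if A (zf x k) (ccf y) = v then ⟨2, by omega⟩ else ⟨3, by omega⟩))
  have hMQ : ∀ x : Fin p, M x < Q := hMb
  have hMlt : ∀ x y : Fin p, x < y → M x < M y := fun x y h => hMmono h
  have F1 : ∀ x y : Fin p, x < y → A (zf (M x) (M y)) (ccf (M x)) = u := by
    intro x y h
    rw [hzf _ _ (hMQ x) (hMQ y) (hMlt x y h), hccf _ (hMQ x)]
    exact hzu _ _ _
  have F2 : ∀ x y : Fin p, x < y → A (zf (M x) (M y)) (ccf (M y)) = v := by
    intro x y h
    rw [hzf _ _ (hMQ x) (hMQ y) (hMlt x y h), hccf _ (hMQ y)]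
    exact hzv _ _ _
  have F3 : ∀ x y s : Fin p, x < y → x < s →
      A (zf (M x) (M y)) (ccf (M s)) = u ∨ A (zf (M x) (M y)) (ccf (M s)) = v := by
    intro x y s h hs
    rw [hzf _ _ (hMQ x) (hMQ y) (hMlt x y h), hccf _ (hMQ s)]
    exact hgt _ _ _ _ (Fin.mk_lt_mk.mpr (hMlt x s hs))
  have F4 : ∀ x y s : Fin p, x < y → s < x →
      W (A (zf (M x) (M y)) (ccf (M s))) := by
    intro x y s h hs
    rw [hzf _ _ (hMQ x) (hMQ y) (hMlt x y h), hccf _ (hMQ s)]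
    exact hlt _ _ _ _ (Fin.mk_lt_mk.mpr (hMlt s x hs))
  have key : ∀ x y k : Fin p, x < y → y < k →
      ((A (zf (M x) (M y)) (ccf (M k)) = v) ↔ (c₃ : ℕ) ≤ 1) ∧
      ((A (zf (M x) (M k)) (ccf (M y)) = v) ↔ ((c₃:ℕ) = 0 ∨ (c₃:ℕ) = 2)) := by
    intro x y k hxy hyk
    have h := hMc x y k hxy hyk
    split_ifs at h with h1 h2 h2 <;>
      (replace h := congrArg Fin.val h; simp at h; constructor <;> constructor <;>
        intro hh <;> first | omega | tauto)
  obtain ⟨Mf, hMf⟩ : ∃ f : ℕ → ℕ, ∀ (t : ℕ) (h : t < p), f t = M ⟨t, h⟩ :=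
    ⟨fun t => if h : t < p then M ⟨t, h⟩ else 0, fun t h => by simp only [dif_pos h]⟩
  rcases Nat.lt_or_ge (c₃ : ℕ) 2 with hcase | hcase
  · -- CASE A
    have hA : ∀ x y k : Fin p, x < y → y < k →
        A (zf (M x) (M y)) (ccf (M k)) = v := by
      intro x y k h1 h2
      exact ((key x y k h1 h2).1).mpr (by omega)
    obtain ⟨T, w₀, hTmono, hTb, hTc⟩ :=
      hP1 (fun s t => (⟨A (zf (Mf t) (Mf (t+1))) (ccf (Mf s)), hR _ _⟩ : Fin 3))
    have hT4 : ∀ x : Fin (4*ℓ), T x < P1 := hTb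
    have h2i : ∀ i : Fin (2*ℓ), 2*(i:ℕ) < 4*ℓ := fun i => by omega
    have h2i1 : ∀ i : Fin (2*ℓ), 2*(i:ℕ)+1 < 4*ℓ := fun i => by omega
    have hpib : ∀ i : Fin (2*ℓ), T ⟨2*(i:ℕ), h2i i⟩ + 1 < p := by
      intro i; have := hT4 ⟨2*(i:ℕ), h2i i⟩; omega
    have hpia : ∀ i : Fin (2*ℓ), T ⟨2*(i:ℕ), h2i i⟩ < p := by
      intro i; have := hpib i; omega
    set pii : Fin (2*ℓ) → Fin p := fun i => ⟨T ⟨2*(i:ℕ), h2i i⟩, hpia i⟩ with hpii_def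
    set pii1 : Fin (2*ℓ) → Fin p := fun i => ⟨T ⟨2*(i:ℕ), h2i i⟩ + 1, hpib i⟩ with hpii1_def
    have hpilt : ∀ i, pii i < pii1 i := by
      intro i
      exact Fin.mk_lt_mk.mpr (by omega)
    have hpi1lt : ∀ i j : Fin (2*ℓ), i < j → pii1 i < pii j := by
      intro i j hij
      have h1 : T ⟨2*(i:ℕ), h2i i⟩ < T ⟨2*(i:ℕ)+1, h2i1 i⟩ :=
        hTmono (Fin.mk_lt_mk.mpr (by omega))
      have h2 : T ⟨2*(i:ℕ)+1, h2i1 i⟩ < T ⟨2*(j:ℕ), h2i j⟩ :=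
        hTmono (Fin.mk_lt_mk.mpr (by have := Fin.lt_def.mp hij; omega))
      exact Fin.mk_lt_mk.mpr (by omega)
    have hpimono : ∀ i j : Fin (2*ℓ), i < j → pii i < pii j :=
      fun i j hij => lt_trans (hpilt i) (hpi1lt i j hij)
    have hCinj : Function.Injective (fun j : Fin (2*ℓ) => ccf (M (pii j))) := by
      intro a b hab
      simp only at hab
      rw [hccf _ (hMQ (pii a)), hccf _ (hMQ (pii b))] at hab
      have h1 := hcc hab
      simp only [Fin.mk.injEq] at h1
      have h2 : pii a = pii b := hMmono.injective h1
      by_contra hne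
      rcases lt_or_gt_of_ne hne with hl2 | hl2
      · exact absurd h2 (ne_of_lt (hpimono a b hl2))
      · exact absurd h2.symm (ne_of_lt (hpimono b a hl2))
    have hdiag : ∀ i : Fin (2*ℓ),
        A (zf (M (pii i)) (M (pii1 i))) (ccf (M (pii i))) = u :=
      fun i => F1 _ _ (hpilt i)
    have habove : ∀ i j : Fin (2*ℓ), i < j →
        A (zf (M (pii i)) (M (pii1 i))) (ccf (M (pii j))) = v := by
      intro i j hij
      exact hA (pii i) (pii1 i) (pii j) (hpilt i) (hpi1lt i j hij)
    have hbelow : ∀ i j : Fin (2*ℓ), j < i →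
        A (zf (M (pii i)) (M (pii1 i))) (ccf (M (pii j))) = (w₀ : ℕ) := by
      intro i j hij
      have h := hTc ⟨2*(j:ℕ), h2i j⟩ ⟨2*(i:ℕ), h2i i⟩
        (Fin.mk_lt_mk.mpr (by have := Fin.lt_def.mp hij; omega))
      have h2 : A (zf (Mf (T ⟨2*(i:ℕ), h2i i⟩)) (Mf (T ⟨2*(i:ℕ), h2i i⟩ + 1)))
          (ccf (Mf (T ⟨2*(j:ℕ), h2i j⟩))) = (w₀ : ℕ) := congrArg Fin.val h
      have e1 : Mf (T ⟨2*(i:ℕ), h2i i⟩) = M (pii i) := hMf _ (hpia i)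
      have e2 : Mf (T ⟨2*(i:ℕ), h2i i⟩ + 1) = M (pii1 i) := hMf _ (hpib i)
      have e3 : Mf (T ⟨2*(j:ℕ), h2i j⟩) = M (pii j) := hMf _ (hpia j)
      have hAA : A (zf (Mf (T ⟨2*(i:ℕ), h2i i⟩)) (Mf (T ⟨2*(i:ℕ), h2i i⟩ + 1)))
          (ccf (Mf (T ⟨2*(j:ℕ), h2i j⟩)))
          = A (zf (M (pii i)) (M (pii1 i))) (ccf (M (pii j))) := by
        rw [e1, e2, e3]
      exact hAA.symm.trans h2
    have hW : W (w₀ : ℕ) := by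
      have h10 : (⟨0, by omega⟩ : Fin (2*ℓ)) < ⟨1, by omega⟩ :=
        Fin.mk_lt_mk.mpr (by omega)
      have hb := hbelow ⟨1, by omega⟩ ⟨0, by omega⟩ h10
      rw [← hb]
      exact F4 (pii ⟨1, by omega⟩) (pii1 ⟨1, by omega⟩) (pii ⟨0, by omega⟩)
        (hpilt _) (hpimono _ _ h10)
    exact endgame hl A FAM hAv u v (w₀:ℕ) huv hIuv (fun hne => hT _ hW hne)
      (fun i => zf (M (pii i)) (M (pii1 i))) (fun j => ccf (M (pii j)))
      hCinj hdiag habove hbelow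
  · rcases Nat.lt_or_ge (c₃ : ℕ) 3 with hcase3 | hcase3
    · -- CASE B : c₃ = 2
      have hBsecond : ∀ x y k : Fin p, x < y → y < k →
          A (zf (M x) (M k)) (ccf (M y)) = v := by
        intro x y k h1 h2
        exact ((key x y k h1 h2).2).mpr (by omega)
      obtain ⟨T, w₀, hTmono, hTb, hTc⟩ :=
        hP2 (fun s t => (⟨A (zf (Mf t) (Mf (p-1))) (ccf (Mf s)), hR _ _⟩ : Fin 3))
      have hT2 : ∀ x : Fin (2*ℓ), T x < P2 := hTb
      have hpl : p - 1 < p := by omega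
      have hTp : ∀ x : Fin (2*ℓ), T x < p := fun x => by have := hT2 x; omega
      set plast : Fin p := ⟨p-1, hpl⟩ with hplast
      set pii : Fin (2*ℓ) → Fin p := fun i => ⟨T i, hTp i⟩ with hpii_def
      have hpimono : ∀ i j : Fin (2*ℓ), i < j → pii i < pii j := by
        intro i j hij
        exact Fin.mk_lt_mk.mpr (hTmono hij)
      have hpilast : ∀ i, pii i < plast := by
        intro i
        exact Fin.mk_lt_mk.mpr (by have := hT2 i; omega)
      have hCinj : Function.Injective (fun j : Fin (2*ℓ) => ccf (M (pii j))) := by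
        intro a b hab
        simp only at hab
        rw [hccf _ (hMQ (pii a)), hccf _ (hMQ (pii b))] at hab
        have h1 := hcc hab
        simp only [Fin.mk.injEq] at h1
        have h2 : pii a = pii b := hMmono.injective h1
        by_contra hne
        rcases lt_or_gt_of_ne hne with hl2 | hl2
        · exact absurd h2 (ne_of_lt (hpimono a b hl2))
        · exact absurd h2.symm (ne_of_lt (hpimono b a hl2))
      have hdiag : ∀ i : Fin (2*ℓ),
          A (zf (M (pii i)) (M plast)) (ccf (M (pii i))) = u :=
        fun i => F1 _ _ (hpilast i)
      have habove : ∀ i j : Fin (2*ℓ), i < j →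
          A (zf (M (pii i)) (M plast)) (ccf (M (pii j))) = v := by
        intro i j hij
        exact hBsecond (pii i) (pii j) plast (hpimono i j hij) (hpilast j)
      have hbelow : ∀ i j : Fin (2*ℓ), j < i →
          A (zf (M (pii i)) (M plast)) (ccf (M (pii j))) = (w₀ : ℕ) := by
        intro i j hij
        have h := hTc j i hij
        have h2 : A (zf (Mf (T i)) (Mf (p-1))) (ccf (Mf (T j))) = (w₀ : ℕ) :=
          congrArg Fin.val h
        have e1 : Mf (T i) = M (pii i) := hMf _ (hTp i)
        have e2 : Mf (p-1) = M plast := hMf _ hpl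
        have e3 : Mf (T j) = M (pii j) := hMf _ (hTp j)
        have hAA : A (zf (Mf (T i)) (Mf (p-1))) (ccf (Mf (T j)))
            = A (zf (M (pii i)) (M plast)) (ccf (M (pii j))) := by
          rw [e1, e2, e3]
        exact hAA.symm.trans h2
      have hW : W (w₀ : ℕ) := by
        have h10 : (⟨0, by omega⟩ : Fin (2*ℓ)) < ⟨1, by omega⟩ :=
          Fin.mk_lt_mk.mpr (by omega)
        have hb := hbelow ⟨1, by omega⟩ ⟨0, by omega⟩ h10
        rw [← hb]
        exact F4 (pii ⟨1, by omega⟩) plast (pii ⟨0, by omega⟩)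
          (hpilast _) (hpimono _ _ h10)
      exact endgame hl A FAM hAv u v (w₀:ℕ) huv hIuv (fun hne => hT _ hW hne)
        (fun i => zf (M (pii i)) (M plast)) (fun j => ccf (M (pii j)))
        hCinj hdiag habove hbelow
    · -- CASE C : c₃ = 3
      set r0 : Fin p := ⟨0, by omega⟩ with hr0
      set pt : Fin ℓ → Fin p := fun t => ⟨(t:ℕ)+1, by have := t.isLt; omega⟩ with hpt_def
      have hr0pt : ∀ t, r0 < pt t := by
        intro t; exact Fin.mk_lt_mk.mpr (by omega)
      have hptmono : ∀ t s : Fin ℓ, t < s → pt t < pt s := by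
        intro t s hts
        exact Fin.mk_lt_mk.mpr (by have := Fin.lt_def.mp hts; omega)
      have hCinj : Function.Injective (fun t : Fin ℓ => ccf (M (pt t))) := by
        intro a b hab
        simp only at hab
        rw [hccf _ (hMQ (pt a)), hccf _ (hMQ (pt b))] at hab
        have h1 := hcc hab
        simp only [Fin.mk.injEq] at h1
        have h2 := hMmono.injective h1
        simp only [hpt_def, Fin.mk.injEq] at h2
        exact Fin.ext (by omega)
      refine build_contra A FAM hAv (Imat ℓ v u) hIvu
        (fun t => zf (M r0) (M (pt t))) (fun t => ccf (M (pt t))) hCinj ?_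
        (Imat_rows_distinct v u (Ne.symm huv))
      intro t s
      by_cases hts : t = s
      · subst hts
        rw [Imat_eval_eq _ _ _ _ rfl]
        exact F2 r0 (pt t) (hr0pt t)
      · rw [Imat_eval_ne _ _ _ _ hts]
        rcases lt_or_gt_of_ne hts with hl2 | hl2
        · have hk := (key r0 (pt t) (pt s) (hr0pt t) (hptmono t s hl2)).1
          have hne : A (zf (M r0) (M (pt t))) (ccf (M (pt s))) ≠ v := by
            intro hv; have := hk.mp hv; omega
          rcases F3 r0 (pt t) (pt s) (hr0pt t) (hr0pt s) with h | h
          · exact h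
          · exact absurd h hne
        · have hk := (key r0 (pt s) (pt t) (hr0pt s) (hptmono s t hl2)).2
          have hne : A (zf (M r0) (M (pt t))) (ccf (M (pt s))) ≠ v := by
            intro hv; have := hk.mp hv; omega
          rcases F3 r0 (pt t) (pt s) (hr0pt t) (hr0pt s) with h | h
          · exact h
          · exact absurd h hne


/-- set of rows with a 1 in column j -/
def Oset {m n : ℕ} (A : MatN m n) (j : Fin n) : Finset (Fin m) :=
  Finset.univ.filter (fun i => A i j = 1)
/-- set of rows with a 2 in column j -/
def Tset {m n : ℕ} (A : MatN m n) (j : Fin n) : Finset (Fin m) :=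
  Finset.univ.filter (fun i => A i j = 2)

lemma mem_Oset {m n : ℕ} (A : MatN m n) (j : Fin n) (x : Fin m) :
    x ∈ Oset A j ↔ A x j = 1 := by simp [Oset]
lemma mem_Tset {m n : ℕ} (A : MatN m n) (j : Fin n) (x : Fin m) :
    x ∈ Tset A j ↔ A x j = 2 := by simp [Tset]

lemma col_det {m n : ℕ} (A : MatN m n) (hR : RMat 3 A) (j k : Fin n)
    (hO : Oset A j = Oset A k) (hT : Tset A j = Tset A k) : ∀ i, A i j = A i k := by
  intro i
  have h1 : A i j = 1 ↔ A i k = 1 := by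
    rw [← mem_Oset, ← mem_Oset, hO]
  have h2 : A i j = 2 ↔ A i k = 2 := by
    rw [← mem_Tset, ← mem_Tset, hT]
  have := hR i j; have := hR i k
  omega

/-- the group bound: boundedly many columns share a given Oset. -/
lemma group_bound (hl : 2 ≤ ℓ) :
    ∃ X : ℕ, 1 ≤ X ∧ ∀ (m n : ℕ) (A : MatN m n), RMat 3 A → SimpleM A →
      AvoidsFam A (famF ℓ) →
      ∀ cc : Fin X → Fin n, Function.Injective cc →
      (∀ a b, Oset A (cc a) = Oset A (cc b)) → False := by
  obtain ⟨Q2, hQ2ge, hQ2⟩ := zlemma hl (famF ℓ) 2 0 (by omega)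
    (fun w => w = 0 ∨ w = 2)
    (mem_famF_I hl 2 0 (by omega) (by omega) (by omega) (by omega))
    (mem_famF_I hl 0 2 (by omega) (by omega) (by omega) (by omega))
    (by
      intro w hw hnv
      rcases hw with h | h
      · exact absurd h hnv
      · subst h
        exact mem_famF_T hl 2 0 (by omega) (by omega) (by omega) (by omega))
  obtain ⟨X, hX⟩ := ramseyPairs 2 Q2 (by omega)
  have hX1 : 1 ≤ X := by
    obtain ⟨g, c, hm, hb, _⟩ := hX (fun _ _ => 0)
    have := hb ⟨0, by omega⟩
    omega
  refine ⟨X, hX1, ?_⟩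
  intro m n A hR hS hAv cc hinj hsame
  -- totalize cc
  obtain ⟨ccf, hccf⟩ : ∃ f : ℕ → Fin n, ∀ (t : ℕ) (h : t < X), f t = cc ⟨t, h⟩ :=
    ⟨fun t => if h : t < X then cc ⟨t, h⟩ else cc ⟨0, by omega⟩,
      fun t h => by simp only [dif_pos h]⟩
  -- distinct T-sets
  have hTdist : ∀ a b : Fin X, a ≠ b → Tset A (cc a) ≠ Tset A (cc b) := by
    intro a b hab hT
    exact (fun h => hab (hinj h)) (hS (cc a) (cc b) (col_det A hR _ _ (hsame a b) hT))
  -- direction coloring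
  obtain ⟨e, d, hemono, heb, hec⟩ := hX (fun a b =>
    if (Tset A (ccf a) \ Tset A (ccf b)).Nonempty then 0 else 1)
  -- the selected subsequence (possibly reversed)
  have main : ∀ cc2 : Fin Q2 → Fin n, Function.Injective cc2 →
      (∀ a b, Oset A (cc2 a) = Oset A (cc2 b)) →
      (∀ i j : Fin Q2, i < j → (Tset A (cc2 i) \ Tset A (cc2 j)).Nonempty) → False := by
    intro cc2 hinj2 hsame2 hwit
    have hz : ∀ i j : Fin Q2, i < j → ∃ x : Fin m,
        A x (cc2 i) = 2 ∧ A x (cc2 j) = 0 := by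
      intro i j hij
      obtain ⟨x, hx⟩ := hwit i j hij
      rw [Finset.mem_sdiff, mem_Tset, mem_Tset] at hx
      refine ⟨x, hx.1, ?_⟩
      have hno : A x (cc2 j) ≠ 1 := by
        intro h1
        have hxO : x ∈ Oset A (cc2 j) := (mem_Oset _ _ _).mpr h1
        rw [hsame2 j i, mem_Oset] at hxO
        omega
      have := hR x (cc2 j)
      omega
    have hz1 : ∀ (i j : Fin Q2) (h : i < j), A ((hz i j h).choose) (cc2 i) = 2 :=
      fun i j h => (hz i j h).choose_spec.1
    have hz2 : ∀ (i j : Fin Q2) (h : i < j), A ((hz i j h).choose) (cc2 j) = 0 :=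
      fun i j h => (hz i j h).choose_spec.2
    have hnot1 : ∀ (i j : Fin Q2) (h : i < j) (s : Fin Q2),
        A ((hz i j h).choose) (cc2 s) = 2 ∨ A ((hz i j h).choose) (cc2 s) = 0 := by
      intro i j h s
      have hno : A ((hz i j h).choose) (cc2 s) ≠ 1 := by
        intro h1
        have hxO : ((hz i j h).choose) ∈ Oset A (cc2 s) := (mem_Oset _ _ _).mpr h1
        rw [hsame2 s i, mem_Oset] at hxO
        have := hz1 i j h
        omega
      have := hR ((hz i j h).choose) (cc2 s)
      omega
    exact hQ2 m n A hR hAv cc2 hinj2 (fun i j h => (hz i j h).choose)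
      hz1 hz2 (fun i j h s _ => hnot1 i j h s)
      (fun i j h s _ => by
        rcases hnot1 i j h s with h2 | h2
        · exact Or.inr h2
        · exact Or.inl h2)
  -- case on the direction color d
  have hQpos : 0 < Q2 := by omega
  have hebQ : ∀ t : Fin Q2, e t < X := heb
  by_cases hd : d = 0
  · -- forward
    refine main (fun t => cc ⟨e t, hebQ t⟩) ?_ (fun a b => hsame _ _) ?_
    · intro a b hab
      have h1 := hinj hab
      simp only [Fin.mk.injEq] at h1
      exact hemono.injective h1
    · intro i j hij
      have h := hec i j hij
      rw [hd] at h
      by_cases hcond : (Tset A (ccf (e i)) \ Tset A (ccf (e j))).Nonempty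
      · rw [hccf _ (hebQ i), hccf _ (hebQ j)] at hcond
        exact hcond
      · rw [if_neg hcond] at h
        exact absurd (congrArg Fin.val h) (by omega)
  · -- backward
    have hd1 : d = 1 := by
      have := d.isLt
      have hv : (d:ℕ) ≠ 0 := fun h => hd (Fin.ext (by omega))
      exact Fin.ext (by omega)
    have hrvlt : ∀ t : Fin Q2, Q2 - 1 - (t:ℕ) < Q2 := fun t => by omega
    refine main (fun t => cc ⟨e ⟨Q2 - 1 - (t:ℕ), hrvlt t⟩, hebQ _⟩) ?_
      (fun a b => hsame _ _) ?_
    · intro a b hab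
      have h1 := hinj hab
      simp only [Fin.mk.injEq] at h1
      have h2 := hemono.injective h1
      simp only [Fin.mk.injEq] at h2
      have ha := a.isLt; have hb := b.isLt
      exact Fin.ext (by omega)
    · intro i j hij
      have hlt2 : (⟨Q2 - 1 - (j:ℕ), hrvlt j⟩ : Fin Q2) < ⟨Q2 - 1 - (i:ℕ), hrvlt i⟩ := by
        have := Fin.lt_def.mp hij
        have := j.isLt
        exact Fin.mk_lt_mk.mpr (by omega)
      have h := hec _ _ hlt2
      rw [hd1] at h
      by_cases hcond : (Tset A (ccf (e ⟨Q2 - 1 - (j:ℕ), hrvlt j⟩)) \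
          Tset A (ccf (e ⟨Q2 - 1 - (i:ℕ), hrvlt i⟩))).Nonempty
      · rw [if_pos hcond] at h
        exact absurd (congrArg Fin.val h) (by omega)
      · rw [hccf _ (hebQ _), hccf _ (hebQ _)] at hcond
        rw [Finset.not_nonempty_iff_eq_empty, Finset.sdiff_eq_empty_iff_subset] at hcond
        refine Finset.sdiff_nonempty.mpr (fun hsub => ?_)
        have heq : Tset A (cc ⟨e ⟨Q2 - 1 - (j:ℕ), hrvlt j⟩, hebQ _⟩) =
            Tset A (cc ⟨e ⟨Q2 - 1 - (i:ℕ), hrvlt i⟩, hebQ _⟩) :=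
          Finset.Subset.antisymm hcond hsub
        refine hTdist _ _ ?_ heq
        intro hfi
        simp only [Fin.mk.injEq] at hfi
        have h2 := hemono.injective hfi
        simp only [Fin.mk.injEq] at h2
        have := Fin.lt_def.mp hij
        have := j.isLt
        omega


/-- set of rows with a 0 in column j -/
def Zset {m n : ℕ} (A : MatN m n) (j : Fin n) : Finset (Fin m) :=
  Finset.univ.filter (fun i => A i j = 0)

lemma mem_Zset {m n : ℕ} (A : MatN m n) (j : Fin n) (x : Fin m) :
    x ∈ Zset A j ↔ A x j = 0 := by simp [Zset]

/-- the class bound: boundedly many distinct O-sets of equal size. -/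
lemma class_bound (hl : 2 ≤ ℓ) :
    ∃ Y : ℕ, 1 ≤ Y ∧ ∀ (m n : ℕ) (A : MatN m n), RMat 3 A → SimpleM A →
      AvoidsFam A (famF ℓ) →
      ∀ cc : Fin Y → Fin n, Function.Injective cc →
      (∀ a b, (Oset A (cc a)).card = (Oset A (cc b)).card) →
      (∀ a b, a ≠ b → Oset A (cc a) ≠ Oset A (cc b)) → False := by
  obtain ⟨Q1, hQ1ge, hQ1⟩ := zlemma hl (famF ℓ) 1 2 (by omega) (fun w => w < 3)
    (mem_famF_I hl 1 2 (by omega) (by omega) (by omega) (by omega))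
    (mem_famF_I hl 2 1 (by omega) (by omega) (by omega) (by omega))
    (by
      intro w hw hnv
      exact mem_famF_T hl w 2 (by omega) (by omega) hnv (by omega))
  obtain ⟨Y, hY⟩ := ramseyPairs 2 Q1 (by omega)
  have hY1 : 1 ≤ Y := by
    obtain ⟨g, c, hm, hb, _⟩ := hY (fun _ _ => 0)
    have := hb ⟨0, by omega⟩
    omega
  refine ⟨Y, hY1, ?_⟩
  intro m n A hR hS hAv cc hinj hcard hdist
  have hI2mem : (⟨2, 2, !![1, 0; 0, 1]⟩ : CMat) ∈ famF ℓ := Or.inr rfl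
  obtain ⟨ccf, hccf⟩ : ∃ f : ℕ → Fin n, ∀ (t : ℕ) (h : t < Y), f t = cc ⟨t, h⟩ :=
    ⟨fun t => if h : t < Y then cc ⟨t, h⟩ else cc ⟨0, by omega⟩,
      fun t h => by simp only [dif_pos h]⟩
  obtain ⟨e, d, hemono, heb, hec⟩ := hY (fun a b =>
    if (Oset A (ccf a) ∩ Zset A (ccf b)) = ∅ then 0 else 1)
  have main : ∀ cc2 : Fin Q1 → Fin n, Function.Injective cc2 →
      (∀ a b, (Oset A (cc2 a)).card = (Oset A (cc2 b)).card) →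
      (∀ a b, a ≠ b → Oset A (cc2 a) ≠ Oset A (cc2 b)) →
      (∀ i j : Fin Q1, i < j → (Oset A (cc2 i) ∩ Zset A (cc2 j)) = ∅) → False := by
    intro cc2 hinj2 hcard2 hdist2 hcov
    have hdiff : ∀ i j : Fin Q1, i ≠ j → (Oset A (cc2 i) \ Oset A (cc2 j)).Nonempty := by
      intro i j hij
      refine Finset.sdiff_nonempty.mpr (fun hsub => ?_)
      exact hdist2 i j hij (Finset.eq_of_subset_of_card_le hsub (le_of_eq (hcard2 j i)))
    have hz : ∀ i j : Fin Q1, i < j → ∃ x : Fin m,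
        A x (cc2 i) = 1 ∧ A x (cc2 j) = 2 := by
      intro i j hij
      obtain ⟨x, hx⟩ := hdiff i j (ne_of_lt hij)
      rw [Finset.mem_sdiff, mem_Oset, mem_Oset] at hx
      refine ⟨x, hx.1, ?_⟩
      have h0 : A x (cc2 j) ≠ 0 := by
        intro h0
        have : x ∈ Oset A (cc2 i) ∩ Zset A (cc2 j) := by
          rw [Finset.mem_inter, mem_Oset, mem_Zset]
          exact ⟨hx.1, h0⟩
        rw [hcov i j hij] at this
        exact absurd this (Finset.notMem_empty x)
      have := hR x (cc2 j)
      omega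
    have hz1 : ∀ (i j : Fin Q1) (h : i < j), A ((hz i j h).choose) (cc2 i) = 1 :=
      fun i j h => (hz i j h).choose_spec.1
    have hz2 : ∀ (i j : Fin Q1) (h : i < j), A ((hz i j h).choose) (cc2 j) = 2 :=
      fun i j h => (hz i j h).choose_spec.2
    refine hQ1 m n A hR hAv cc2 hinj2 (fun i j h => (hz i j h).choose)
      hz1 hz2 ?_ (fun i j h s _ => hR _ _)
    intro i j h s hs
    show A ((hz i j h).choose) (cc2 s) = 1 ∨ A ((hz i j h).choose) (cc2 s) = 2
    have h0 : A ((hz i j h).choose) (cc2 s) ≠ 0 := by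
      intro h0
      have : (hz i j h).choose ∈ Oset A (cc2 i) ∩ Zset A (cc2 s) := by
        rw [Finset.mem_inter, mem_Oset, mem_Zset]
        exact ⟨hz1 i j h, h0⟩
      rw [hcov i s hs] at this
      exact absurd this (Finset.notMem_empty _)
    have := hR ((hz i j h).choose) (cc2 s)
    omega
  have hebY : ∀ t : Fin Q1, e t < Y := heb
  -- dichotomy as Finsets
  have hdich : ∀ a b : Fin Y, a ≠ b →
      (Oset A (cc a) ∩ Zset A (cc b)) = ∅ ∨ (Oset A (cc b) ∩ Zset A (cc a)) = ∅ := by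
    intro a b hab
    have hne : cc a ≠ cc b := fun h => hab (hinj h)
    rcases i2_dichotomy A (famF ℓ) hI2mem hAv (cc a) (cc b) hne with h | h
    · left
      rw [Finset.eq_empty_iff_forall_notMem]
      intro x hx
      rw [Finset.mem_inter, mem_Oset, mem_Zset] at hx
      exact h x hx
    · right
      rw [Finset.eq_empty_iff_forall_notMem]
      intro x hx
      rw [Finset.mem_inter, mem_Oset, mem_Zset] at hx
      exact h x hx
  by_cases hd : d = 0
  · refine main (fun t => cc ⟨e t, hebY t⟩) ?_ (fun a b => hcard _ _) ?_ ?_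
    · intro a b hab
      have h1 := hinj hab
      simp only [Fin.mk.injEq] at h1
      exact hemono.injective h1
    · intro a b hab
      refine hdist _ _ ?_
      intro hfi
      simp only [Fin.mk.injEq] at hfi
      exact hab (hemono.injective hfi)
    · intro i j hij
      have h := hec i j hij
      rw [hd] at h
      by_cases hcond : (Oset A (ccf (e i)) ∩ Zset A (ccf (e j))) = ∅
      · rw [hccf _ (hebY i), hccf _ (hebY j)] at hcond
        exact hcond
      · rw [if_neg hcond] at h
        exact absurd (congrArg Fin.val h) (by omega)
  · have hd1 : d = 1 := by
      have := d.isLt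
      have hv : (d:ℕ) ≠ 0 := fun h => hd (Fin.ext (by omega))
      exact Fin.ext (by omega)
    have hrvlt : ∀ t : Fin Q1, Q1 - 1 - (t:ℕ) < Q1 := fun t => by omega
    have hrvne : ∀ a b : Fin Q1, a ≠ b →
        (⟨Q1 - 1 - (a:ℕ), hrvlt a⟩ : Fin Q1) ≠ ⟨Q1 - 1 - (b:ℕ), hrvlt b⟩ := by
      intro a b hab hfi
      simp only [Fin.mk.injEq] at hfi
      have := a.isLt; have := b.isLt
      exact hab (Fin.ext (by omega))
    refine main (fun t => cc ⟨e ⟨Q1 - 1 - (t:ℕ), hrvlt t⟩, hebY _⟩) ?_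
      (fun a b => hcard _ _) ?_ ?_
    · intro a b hab
      have h1 := hinj hab
      simp only [Fin.mk.injEq] at h1
      have h2 := hemono.injective h1
      simp only [Fin.mk.injEq] at h2
      have := a.isLt; have := b.isLt
      exact Fin.ext (by omega)
    · intro a b hab
      refine hdist _ _ ?_
      intro hfi
      simp only [Fin.mk.injEq] at hfi
      have h2 := hemono.injective hfi
      exact hrvne a b hab h2
    · intro i j hij
      have hlt2 : (⟨Q1 - 1 - (j:ℕ), hrvlt j⟩ : Fin Q1) < ⟨Q1 - 1 - (i:ℕ), hrvlt i⟩ := by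
        have := Fin.lt_def.mp hij
        have := j.isLt
        exact Fin.mk_lt_mk.mpr (by omega)
      have h := hec _ _ hlt2
      rw [hd1] at h
      by_cases hcond : (Oset A (ccf (e ⟨Q1 - 1 - (j:ℕ), hrvlt j⟩)) ∩
          Zset A (ccf (e ⟨Q1 - 1 - (i:ℕ), hrvlt i⟩))) = ∅
      · rw [if_pos hcond] at h
        exact absurd (congrArg Fin.val h) (by omega)
      · rw [hccf _ (hebY _), hccf _ (hebY _)] at hcond
        have hne2 : (⟨e ⟨Q1 - 1 - (j:ℕ), hrvlt j⟩, hebY _⟩ : Fin Y) ≠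
            ⟨e ⟨Q1 - 1 - (i:ℕ), hrvlt i⟩, hebY _⟩ := by
          intro hfi
          simp only [Fin.mk.injEq] at hfi
          have h2 := hemono.injective hfi
          exact hrvne _ _ (ne_of_lt hlt2) (by rw [h2])
        rcases hdich _ _ hne2 with hc | hc
        · exact absurd hc hcond
        · exact hc

/-- the global upper bound -/
lemma upper_bound (hl : 2 ≤ ℓ) :
    ∃ K : ℕ, 1 ≤ K ∧ ∀ (m n : ℕ) (A : MatN m n), RMat 3 A → SimpleM A →
      AvoidsFam A (famF ℓ) → n ≤ K * (m+1) := by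
  classical
  obtain ⟨X, hX1, hX⟩ := group_bound hl
  obtain ⟨Y, hY1, hY⟩ := class_bound hl
  refine ⟨X * Y, Nat.mul_pos hX1 hY1, ?_⟩
  intro m n A hR hS hAv
  set s1 : Finset (Fin n) := Finset.univ with hs1
  set f : Fin n → Finset (Fin m) := fun j => Oset A j with hf
  have hfib1 : ∀ v ∈ s1.image f, (s1.filter (fun j => f j = v)).card ≤ X := by
    intro v hv
    by_contra hcon
    push_neg at hcon
    obtain ⟨S, hSsub, hScard⟩ := Finset.exists_subset_card_eq (le_of_lt hcon)
    have hmem : ∀ i : Fin X, S.orderEmbOfFin hScard i ∈ S :=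
      fun i => S.orderEmbOfFin_mem hScard i
    refine hX m n A hR hS hAv (fun i => S.orderEmbOfFin hScard i)
      (fun a b hab => (S.orderEmbOfFin hScard).injective hab) ?_
    intro a b
    show f (S.orderEmbOfFin hScard a) = f (S.orderEmbOfFin hScard b)
    have ha := hSsub (hmem a); have hb := hSsub (hmem b)
    simp only [Finset.mem_filter] at ha hb
    rw [ha.2, hb.2]
  have h1 : s1.card ≤ X * (s1.image f).card :=
    Finset.card_le_mul_card_image s1 X hfib1
  set s2 : Finset (Finset (Fin m)) := s1.image f with hs2
  have hfib2 : ∀ c ∈ s2.image Finset.card,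
      (s2.filter (fun v => v.card = c)).card ≤ Y := by
    intro c hc
    by_contra hcon
    push_neg at hcon
    obtain ⟨S, hSsub, hScard⟩ := Finset.exists_subset_card_eq (le_of_lt hcon)
    set eS := (S.equivFinOfCardEq hScard).symm with heS
    have hmem : ∀ i : Fin Y, (eS i : Finset (Fin m)) ∈ S := fun i => (eS i).2
    have heSinj : ∀ a b : Fin Y, (eS a : Finset (Fin m)) = (eS b : Finset (Fin m)) →
        a = b := by
      intro a b hab
      have := Subtype.ext hab (p := fun x => x ∈ S)
      exact eS.injective this
    have hrep : ∀ i : Fin Y, ∃ j : Fin n, Oset A j = (eS i : Finset (Fin m)) := by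
      intro i
      have := hSsub (hmem i)
      simp only [Finset.mem_filter, hs2, Finset.mem_image] at this
      obtain ⟨⟨j, _, hj⟩, _⟩ := this
      exact ⟨j, hj⟩
    refine hY m n A hR hS hAv (fun i => (hrep i).choose) ?_ ?_ ?_
    · intro a b hab
      have hab' : (hrep a).choose = (hrep b).choose := hab
      have ha := (hrep a).choose_spec
      have hb := (hrep b).choose_spec
      rw [hab', hb] at ha
      exact heSinj _ _ ha.symm
    · intro a b
      show (Oset A ((hrep a).choose)).card = (Oset A ((hrep b).choose)).card
      have ha := (hrep a).choose_spec
      have hb := (hrep b).choose_spec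
      rw [ha, hb]
      have ha2 := hSsub (hmem a); have hb2 := hSsub (hmem b)
      simp only [Finset.mem_filter] at ha2 hb2
      rw [ha2.2, hb2.2]
    · intro a b hab
      show Oset A ((hrep a).choose) ≠ Oset A ((hrep b).choose)
      rw [(hrep a).choose_spec, (hrep b).choose_spec]
      intro heq
      exact hab (heSinj _ _ heq)
  have h2 : s2.card ≤ Y * (s2.image Finset.card).card :=
    Finset.card_le_mul_card_image s2 Y hfib2
  have h3 : (s2.image Finset.card).card ≤ m + 1 := by
    have hsub : s2.image Finset.card ⊆ Finset.range (m+1) := by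
      intro c hc
      simp only [Finset.mem_image] at hc
      obtain ⟨v, _, rfl⟩ := hc
      rw [Finset.mem_range]
      have := Finset.card_le_univ v
      simp only [Finset.card_univ, Fintype.card_fin] at this
      omega
    calc (s2.image Finset.card).card ≤ (Finset.range (m+1)).card :=
          Finset.card_le_card hsub
      _ = m + 1 := Finset.card_range _
  have hn : s1.card = n := by simp [hs1]
  calc n = s1.card := hn.symm
    _ ≤ X * s2.card := h1
    _ ≤ X * (Y * (s2.image Finset.card).card) := Nat.mul_le_mul_left _ h2
    _ ≤ X * (Y * (m+1)) := by
        exact Nat.mul_le_mul_left _ (Nat.mul_le_mul_left _ h3)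
    _ = X * Y * (m+1) := by ring


/-- the chain matrix -/
def chainM (m : ℕ) : MatN m (m+1) := fun i j => if (i:ℕ) < (j:ℕ) then 1 else 0

lemma chain_lt2 (m : ℕ) : RMat 2 (chainM m) := by
  intro i j
  unfold chainM
  split <;> omega

lemma chainM_eval (m : ℕ) (x : ℕ) (hx : x < m) (j : Fin (m+1)) :
    chainM m ⟨x, hx⟩ j = if x < (j:ℕ) then 1 else 0 := rfl

lemma chain_simple (m : ℕ) : SimpleM (chainM m) := by
  intro j₁ j₂ h
  by_contra hne
  rcases lt_or_gt_of_ne hne with hlt | hlt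
  · have hlt' := Fin.lt_def.mp hlt
    have hj : (j₁:ℕ) < m := by have := j₂.isLt; omega
    have e := h ⟨j₁, hj⟩
    rw [chainM_eval, chainM_eval, if_neg (by omega), if_pos hlt'] at e
    omega
  · have hlt' := Fin.lt_def.mp hlt
    have hj : (j₂:ℕ) < m := by have := j₁.isLt; omega
    have e := h ⟨j₂, hj⟩
    rw [chainM_eval, chainM_eval, if_pos hlt', if_neg (by omega)] at e
    omega

lemma chain_entry01 (m : ℕ) (i : Fin m) (j : Fin (m+1)) :
    chainM m i j = 0 ∨ chainM m i j = 1 := by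
  unfold chainM; split <;> simp

lemma chain_avoids_I2 (m : ℕ) : ¬ IsConfig !![1, 0; 0, 1] (chainM m) := by
  rintro ⟨f, g, hf, hg, hmatch⟩
  have e00 := hmatch 0 0
  have e01 := hmatch 0 1
  have e10 := hmatch 1 0
  have e11 := hmatch 1 1
  simp [Matrix.cons_val_zero, Matrix.cons_val_one, Matrix.head_cons] at e00 e01 e10 e11
  unfold chainM at e00 e01 e10 e11
  have h1 : (f 0 : ℕ) < (g 0 : ℕ) := by by_contra h; rw [if_neg h] at e00; omega
  have h2 : ¬ (f 0 : ℕ) < (g 1 : ℕ) := by intro h; rw [if_pos h] at e01; omega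
  have h3 : ¬ (f 1 : ℕ) < (g 0 : ℕ) := by intro h; rw [if_pos h] at e10; omega
  have h4 : (f 1 : ℕ) < (g 1 : ℕ) := by by_contra h; rw [if_neg h] at e11; omega
  omega

lemma chain_avoids_famF {ℓ : ℕ} (hl : 2 ≤ ℓ) (m : ℕ) :
    AvoidsFam (chainM m) (famF ℓ) := by
  rintro F (⟨⟨a, b, ha, hb, hab, (rfl | rfl)⟩, hnot⟩ | hF)
  · -- Imat
    have h2 : a = 2 ∨ b = 2 := by
      by_contra hc
      push_neg at hc
      exact hnot ⟨a, b, by omega, by omega, hab, Or.inl rfl⟩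
    rintro ⟨f, g, hf, hg, hmatch⟩
    have hmatch' : ∀ i j : Fin ℓ, chainM m (f i) (g j) = Imat ℓ a b i j := hmatch
    set i0 : Fin ℓ := ⟨0, by omega⟩ with hi0
    set i1 : Fin ℓ := ⟨1, by omega⟩ with hi1
    rcases h2 with h2 | h2
    · have := hmatch' i0 i0
      rw [Imat_eval_eq a b _ _ rfl] at this
      rcases chain_entry01 m (f i0) (g i0) with h | h <;> omega
    · have := hmatch' i0 i1
      rw [Imat_eval_ne a b _ _ (by simp [hi0, hi1, Fin.ext_iff])] at this
      rcases chain_entry01 m (f i0) (g i1) with h | h <;> omega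
  · -- Tmat
    have h2 : a = 2 ∨ b = 2 := by
      by_contra hc
      push_neg at hc
      exact hnot ⟨a, b, by omega, by omega, hab, Or.inr rfl⟩
    rintro ⟨f, g, hf, hg, hmatch⟩
    have hmatch' : ∀ i j : Fin ℓ, chainM m (f i) (g j) = Tmat ℓ a b i j := hmatch
    set i0 : Fin ℓ := ⟨0, by omega⟩ with hi0
    set i1 : Fin ℓ := ⟨1, by omega⟩ with hi1
    rcases h2 with h2 | h2
    · have := hmatch' i1 i0
      rw [Tmat_eval_lt a b _ _ (by simp [hi0, hi1])] at this
      rcases chain_entry01 m (f i1) (g i0) with h | h <;> omega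
    · have := hmatch' i0 i0
      rw [Tmat_eval_ge a b _ _ (by simp)] at this
      rcases chain_entry01 m (f i0) (g i0) with h | h <;> omega
  · -- I₂ member
    rw [Set.mem_singleton_iff] at hF
    subst hF
    exact chain_avoids_I2 m

/-- columns bound for any simple r-matrix -/
lemma simple_card_bound {m n r : ℕ} (A : MatN m n) (hR : RMat r A) (hS : SimpleM A) :
    n ≤ r ^ m := by
  have hinj : Function.Injective (fun j : Fin n => (fun i : Fin m => (⟨A i j, hR i j⟩ : Fin r))) := by
    intro a b hab
    apply hS
    intro i
    have := congrFun hab i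
    simpa [Fin.ext_iff] using this
  calc n = Fintype.card (Fin n) := (Fintype.card_fin n).symm
    _ ≤ Fintype.card (Fin m → Fin r) := Fintype.card_le_of_injective _ hinj
    _ = r ^ m := by simp

lemma forb_bddAbove (m r : ℕ) (𝓕 : Set CMat) :
    BddAbove { n : ℕ | ∃ A : MatN m n, RMat r A ∧ SimpleM A ∧ AvoidsFam A 𝓕 } := by
  refine ⟨r ^ m, ?_⟩
  rintro x ⟨A, hR, hS, _⟩
  exact simple_card_bound A hR hS

lemma forb_set_zero_mem (m r : ℕ) (𝓕 : Set CMat) (hcols : ∀ F ∈ 𝓕, 0 < F.cols) :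
    0 ∈ { n : ℕ | ∃ A : MatN m 0, RMat r A ∧ SimpleM A ∧ AvoidsFam A 𝓕 } := by
  refine ⟨fun i j => j.elim0, fun i j => j.elim0, fun j₁ j₂ _ => j₁.elim0, ?_⟩
  rintro F hF ⟨f, g, hf, hg, hmatch⟩
  exact (g ⟨0, hcols F hF⟩).elim0

lemma famF_cols_pos {ℓ : ℕ} (hl : 2 ≤ ℓ) : ∀ F ∈ famF ℓ, 0 < F.cols := by
  rintro F (⟨⟨a, b, ha, hb, hab, (rfl | rfl)⟩, -⟩ | hF)
  · exact Nat.lt_of_lt_of_le (by norm_num) hl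
  · exact Nat.lt_of_lt_of_le (by norm_num) hl
  · rw [Set.mem_singleton_iff] at hF; subst hF; exact Nat.zero_lt_two

lemma I2_cols_pos : ∀ F ∈ ({⟨2, 2, !![1, 0; 0, 1]⟩} : Set CMat), 0 < F.cols := by
  rintro F hF
  rw [Set.mem_singleton_iff] at hF; subst hF; exact Nat.zero_lt_two

/-- chains give the lower bound -/
lemma forb_ge_chain {ℓ : ℕ} (hl : 2 ≤ ℓ) (m : ℕ) :
    m + 1 ≤ forb m 3 (famF ℓ) := by
  apply le_csSup (forb_bddAbove m 3 (famF ℓ))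
  exact ⟨chainM m, fun i j => by have := chain_lt2 m i j; omega,
    chain_simple m, chain_avoids_famF hl m⟩

lemma forb2_ge_chain (m : ℕ) :
    m + 1 ≤ forb m 2 ({⟨2, 2, !![1, 0; 0, 1]⟩} : Set CMat) := by
  apply le_csSup (forb_bddAbove m 2 _)
  refine ⟨chainM m, chain_lt2 m, chain_simple m, ?_⟩
  rintro F hF
  rw [Set.mem_singleton_iff] at hF; subst hF
  exact chain_avoids_I2 m

/-- 0/1 simple matrices avoiding I₂ have at most m+1 columns. -/
lemma two_mat_bound {m n : ℕ} (A : MatN m n) (hR : RMat 2 A) (hS : SimpleM A)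
    (hAv : AvoidsFam A ({⟨2, 2, !![1, 0; 0, 1]⟩} : Set CMat)) : n ≤ m + 1 := by
  have hinj : Function.Injective
      (fun j : Fin n => (⟨(Oset A j).card, by
        have := Finset.card_le_univ (Oset A j)
        simp only [Finset.card_univ, Fintype.card_fin] at this
        omega⟩ : Fin (m+1))) := by
    intro a b hab
    simp only [Fin.mk.injEq] at hab
    by_contra hne
    -- O-sets are distinct
    have hOne : Oset A a ≠ Oset A b := by
      intro hO
      apply hne
      apply hS
      intro i
      have h1 : A i a = 1 ↔ A i b = 1 := by rw [← mem_Oset, ← mem_Oset, hO]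
      have := hR i a; have := hR i b
      omega
    have hsub : ∀ c d : Fin n, (∀ x, ¬(A x c = 1 ∧ A x d = 0)) →
        Oset A c ⊆ Oset A d := by
      intro c d h x hx
      rw [mem_Oset] at hx ⊢
      have := h x
      have := hR x d
      omega
    rcases i2_dichotomy A ({⟨2, 2, !![1, 0; 0, 1]⟩} : Set CMat) rfl hAv a b hne
        with h | h
    · exact hOne (Finset.eq_of_subset_of_card_le (hsub a b h) (le_of_eq hab.symm))
    · exact hOne (Finset.eq_of_subset_of_card_le (hsub b a h) (le_of_eq hab)).symm
  calc n = Fintype.card (Fin n) := (Fintype.card_fin n).symm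
    _ ≤ Fintype.card (Fin (m+1)) := Fintype.card_le_of_injective _ hinj
    _ = m + 1 := by simp

lemma forb2_eq (m : ℕ) : forb m 2 ({⟨2, 2, !![1, 0; 0, 1]⟩} : Set CMat) = m + 1 := by
  refine le_antisymm ?_ (forb2_ge_chain m)
  apply csSup_le
  · exact ⟨0, forb_set_zero_mem m 2 _ I2_cols_pos⟩
  · rintro x ⟨A, hR, hS, hAv⟩
    exact two_mat_bound A hR hS hAv

lemma forbmax2_eq (m : ℕ) :
    forbmax m 2 ({⟨2, 2, !![1, 0; 0, 1]⟩} : Set CMat) = m + 1 := by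
  apply le_antisymm
  · apply csSup_le
    · exact ⟨forb 0 2 _, 0, by omega, rfl⟩
    · rintro x ⟨m', hm', rfl⟩
      rw [forb2_eq m']
      omega
  · apply le_csSup
    · refine ⟨m + 1, ?_⟩
      rintro x ⟨m', hm', rfl⟩
      rw [forb2_eq m']
      omega
    · exact ⟨m, le_rfl, (forb2_eq m).symm⟩

lemma forb_le_K {ℓ : ℕ} (hl : 2 ≤ ℓ) :
    ∃ K : ℕ, 1 ≤ K ∧ ∀ m : ℕ, forb m 3 (famF ℓ) ≤ K * (m + 1) := by
  obtain ⟨K, hK1, hK⟩ := upper_bound hl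
  refine ⟨K, hK1, fun m => ?_⟩
  apply csSup_le
  · exact ⟨0, forb_set_zero_mem m 3 _ (famF_cols_pos hl)⟩
  · rintro x ⟨A, hR, hS, hAv⟩
    exact hK m x A hR hS hAv


end Stmt4Aux

/-- For `ℓ ≥ 2` and `I₂ = F_{0,1,1,0}` the `2×2` identity,
`forb(m, 3, (𝒯_ℓ(3) \ 𝒯_ℓ(2)) ∪ {I₂})` is `Θ(forbmax(m, I₂))`; in particular it
is `Θ(m)`. -/
theorem stmt4 (ℓ : ℕ) (hℓ : 2 ≤ ℓ) :
    (∃ c₁ c₂ : ℝ, 0 < c₁ ∧ 0 < c₂ ∧ ∀ m : ℕ, 1 ≤ m →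
      c₁ * (forbmax m 2 {⟨2, 2, !![1, 0; 0, 1]⟩} : ℝ) ≤
        (forb m 3 ((TFam ℓ 3 \ TFam ℓ 2) ∪ {⟨2, 2, !![1, 0; 0, 1]⟩}) : ℝ) ∧
      (forb m 3 ((TFam ℓ 3 \ TFam ℓ 2) ∪ {⟨2, 2, !![1, 0; 0, 1]⟩}) : ℝ) ≤
        c₂ * (forbmax m 2 {⟨2, 2, !![1, 0; 0, 1]⟩} : ℝ)) ∧
    (∃ c₁ c₂ : ℝ, 0 < c₁ ∧ 0 < c₂ ∧ ∀ m : ℕ, 1 ≤ m →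
      c₁ * (m : ℝ) ≤
        (forb m 3 ((TFam ℓ 3 \ TFam ℓ 2) ∪ {⟨2, 2, !![1, 0; 0, 1]⟩}) : ℝ) ∧
      (forb m 3 ((TFam ℓ 3 \ TFam ℓ 2) ∪ {⟨2, 2, !![1, 0; 0, 1]⟩}) : ℝ) ≤
        c₂ * (m : ℝ)) := by
  obtain ⟨K, hK1, hK⟩ := Stmt4Aux.forb_le_K hℓ
  have hfam : ((TFam ℓ 3 \ TFam ℓ 2) ∪ {⟨2, 2, !![1, 0; 0, 1]⟩}) = Stmt4Aux.famF ℓ := rfl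
  constructor
  · refine ⟨1, K, by norm_num, by exact_mod_cast hK1, fun m hm => ?_⟩
    rw [hfam, Stmt4Aux.forbmax2_eq m]
    constructor
    · rw [one_mul]
      exact_mod_cast Stmt4Aux.forb_ge_chain hℓ m
    · exact_mod_cast hK m
  · refine ⟨1, 2 * K, by norm_num, by positivity, fun m hm => ?_⟩
    rw [hfam]
    constructor
    · rw [one_mul]
      have := Stmt4Aux.forb_ge_chain hℓ m
      have : (m : ℝ) ≤ (forb m 3 (Stmt4Aux.famF ℓ) : ℝ) := by exact_mod_cast by omega
      exact this
    · have h1 := hK m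
      have h2 : K * (m + 1) ≤ 2 * K * m := by nlinarith
      exact_mod_cast le_trans h1 h2
end

section
/- Let ℓ ≥ 2 and let 𝓕 be a finite family of (0,1)-matrices. Then there is a constant c such that for every m ≥ 1, forb(m, 3, (𝒯_ℓ(3) \ 𝒯_ℓ(2)) ∪ {T_ℓ(0,2,1)} ∪ 𝓕) ≤ c · forbmax(m, 𝓕). -/
namespace Stmt10Aux
open Finset

/-- sSup for ℕ sets: bounded above pointwise implies sSup bounded. -/
lemma natSSup_le {S : Set ℕ} {b : ℕ} (h : ∀ a ∈ S, a ≤ b) : sSup S ≤ b := by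
  rcases Set.eq_empty_or_nonempty S with rfl | hne
  · simp [csSup_empty]
  · exact csSup_le hne h

/-- A simple r-matrix has at most r^m columns. -/
lemma simple_card_le {r m n : ℕ} (A : MatN m n) (hr : RMat r A) (hs : SimpleM A) :
    n ≤ r ^ m := by
  have hinj : Function.Injective (fun j : Fin n => fun i : Fin m => (⟨A i j, hr i j⟩ : Fin r)) := by
    intro j₁ j₂ h
    refine hs j₁ j₂ fun i => ?_
    have := congrFun h i
    exact congrArg Fin.val this
  have := Fintype.card_le_of_injective _ hinj
  simpa [Fintype.card_fun] using this

lemma forb_le_pow (m r : ℕ) (𝓕 : Set CMat) : forb m r 𝓕 ≤ r ^ m := by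
  refine natSSup_le fun n hn => ?_
  obtain ⟨A, h1, h2, _⟩ := hn
  exact simple_card_le A h1 h2

lemma le_forb {m r n : ℕ} (𝓕 : Set CMat) (A : MatN m n) (h1 : RMat r A)
    (h2 : SimpleM A) (h3 : AvoidsFam A 𝓕) : n ≤ forb m r 𝓕 := by
  refine le_csSup ⟨r ^ m, fun k hk => ?_⟩ ⟨A, h1, h2, h3⟩
  obtain ⟨B, hb1, hb2, _⟩ := hk
  exact simple_card_le B hb1 hb2

lemma forb_le_forbmax {m' m r : ℕ} (𝓕 : Set CMat) (h : m' ≤ m) (hr : 1 ≤ r) :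
    forb m' r 𝓕 ≤ forbmax m r 𝓕 := by
  refine le_csSup ⟨r ^ m, fun k hk => ?_⟩ ⟨m', h, rfl⟩
  obtain ⟨m'', hm'', rfl⟩ := hk
  exact le_trans (forb_le_pow _ _ _) (Nat.pow_le_pow_right hr hm'')

end Stmt10Aux
namespace Stmt10Aux
open Finset

lemma pigeon {α : Type} [Fintype α] [DecidableEq α] [Nonempty α] {n T : ℕ}
    (f : Fin n → α) (h : Fintype.card α * T ≤ n) :
    ∃ (a : α) (φ : Fin T → Fin n), StrictMono φ ∧ ∀ p, f (φ p) = a := by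
  classical
  have hcard : ∃ a : α, T ≤ (Finset.univ.filter (fun i : Fin n => f i = a)).card := by
    by_contra hc
    push_neg at hc
    have hsum : (Finset.univ : Finset (Fin n)).card
        = ∑ a : α, (Finset.univ.filter (fun i : Fin n => f i = a)).card :=
      Finset.card_eq_sum_card_fiberwise (fun x _ => Finset.mem_univ (f x))
    have h1 : ∑ a : α, (Finset.univ.filter (fun i : Fin n => f i = a)).card
        ≤ ∑ _a : α, (T - 1) := by
      refine Finset.sum_le_sum fun a _ => ?_
      have := hc a
      omega
    have hT : 1 ≤ T := by
      by_contra hT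
      have := hc (Classical.arbitrary α)
      omega
    have hcardpos : 1 ≤ Fintype.card α := Fintype.card_pos
    have : n ≤ Fintype.card α * (T - 1) := by
      calc n = (Finset.univ : Finset (Fin n)).card := by simp
      _ = _ := hsum
      _ ≤ ∑ _a : α, (T - 1) := h1
      _ = Fintype.card α * (T - 1) := by simp [Finset.sum_const, mul_comm]
    have h4 : Fintype.card α * (T - 1) < Fintype.card α * T :=
      mul_lt_mul_of_pos_left (by omega) (by omega)
    exact absurd (lt_of_le_of_lt this h4) (not_lt.mpr h)
  obtain ⟨a, ha⟩ := hcard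
  obtain ⟨t, hts, htc⟩ := Finset.exists_subset_card_eq ha
  refine ⟨a, fun p => t.orderEmbOfFin htc p, (t.orderEmbOfFin htc).strictMono, fun p => ?_⟩
  have := hts (t.orderEmbOfFin_mem htc p)
  exact (Finset.mem_filter.mp this).2

def gFun (C : ℕ) : ℕ → ℕ
  | 0 => 0
  | (t+1) => C * gFun C t + 1

lemma cone {α : Type} [Fintype α] [DecidableEq α] [Nonempty α] {n : ℕ}
    (χ : Fin n → Fin n → α) :
    ∀ (t : ℕ) (S : Finset (Fin n)), gFun (Fintype.card α) t ≤ S.card →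
    ∃ (ψ : Fin t → Fin n) (dc : Fin t → α), StrictMono ψ ∧ (∀ p, ψ p ∈ S) ∧
      ∀ p q : Fin t, p < q → χ (ψ p) (ψ q) = dc p := by
  classical
  intro t
  induction t with
  | zero =>
    intro S _
    exact ⟨Fin.elim0, Fin.elim0, fun a => a.elim0, fun p => p.elim0, fun p => p.elim0⟩
  | succ t IH =>
    intro S hS
    have hne : S.Nonempty := by
      refine Finset.card_pos.mp ?_
      simp only [gFun] at hS
      omega
    set x := S.min' hne with hx
    set S' := S.erase x with hS'def
    have hS'card : Fintype.card α * gFun (Fintype.card α) t ≤ S'.card := by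
      rw [hS'def, Finset.card_erase_of_mem (S.min'_mem hne)]
      simp only [gFun] at hS
      omega
    have hfib : ∃ a : α, gFun (Fintype.card α) t ≤ (S'.filter (fun y => χ x y = a)).card := by
      by_cases hg : gFun (Fintype.card α) t = 0
      · exact ⟨Classical.arbitrary α, by omega⟩
      by_contra hc
      push_neg at hc
      have hsum : S'.card = ∑ a : α, (S'.filter (fun y => χ x y = a)).card :=
        Finset.card_eq_sum_card_fiberwise (fun y _ => Finset.mem_univ (χ x y))
      have h1 : ∑ a : α, (S'.filter (fun y => χ x y = a)).card
          ≤ ∑ _a : α, (gFun (Fintype.card α) t - 1) := by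
        refine Finset.sum_le_sum fun a _ => ?_
        have := hc a; omega
      have h2 : ∑ _a : α, (gFun (Fintype.card α) t - 1)
          = Fintype.card α * (gFun (Fintype.card α) t - 1) := by
        simp [Finset.sum_const, mul_comm]
      have hcardpos : 1 ≤ Fintype.card α := Fintype.card_pos
      have : S'.card ≤ Fintype.card α * (gFun (Fintype.card α) t - 1) := by
        rw [hsum]; rw [h2] at h1; exact h1
      have h4 : Fintype.card α * (gFun (Fintype.card α) t - 1)
          < Fintype.card α * gFun (Fintype.card α) t :=
        mul_lt_mul_of_pos_left (by omega) (by omega)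
      exact absurd (lt_of_le_of_lt this h4) (not_lt.mpr hS'card)
    obtain ⟨a, ha⟩ := hfib
    obtain ⟨ψ', dc', hmono, hmem, hcone⟩ := IH (S'.filter (fun y => χ x y = a)) ha
    refine ⟨Fin.cons x ψ', Fin.cons a dc', ?_, ?_, ?_⟩
    · intro p q hpq
      rcases Fin.eq_zero_or_eq_succ p with rfl | ⟨p', rfl⟩
      · rcases Fin.eq_zero_or_eq_succ q with rfl | ⟨q', rfl⟩
        · exact absurd hpq (lt_irrefl _)
        · simp only [Fin.cons_zero, Fin.cons_succ]
          have hq := hmem q'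
          have hq' : ψ' q' ∈ S' := (Finset.mem_filter.mp hq).1
          exact S.min'_lt_of_mem_erase_min' hne (by rw [← hS'def]; exact hq')
      · rcases Fin.eq_zero_or_eq_succ q with rfl | ⟨q', rfl⟩
        · exact absurd hpq (Fin.not_lt_zero _)
        · simp only [Fin.cons_succ]
          exact hmono (Fin.succ_lt_succ_iff.mp hpq)
    · intro p
      rcases Fin.eq_zero_or_eq_succ p with rfl | ⟨p', rfl⟩
      · simpa using S.min'_mem hne
      · simp only [Fin.cons_succ]
        have := (Finset.mem_filter.mp (hmem p')).1
        exact Finset.mem_of_mem_erase (by rw [← hS'def]; exact this)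
    · intro p q hpq
      rcases Fin.eq_zero_or_eq_succ p with rfl | ⟨p', rfl⟩
      · rcases Fin.eq_zero_or_eq_succ q with rfl | ⟨q', rfl⟩
        · exact absurd hpq (lt_irrefl _)
        · simp only [Fin.cons_zero, Fin.cons_succ]
          exact (Finset.mem_filter.mp (hmem q')).2
      · rcases Fin.eq_zero_or_eq_succ q with rfl | ⟨q', rfl⟩
        · exact absurd hpq (Fin.not_lt_zero _)
        · simp only [Fin.cons_succ]
          exact hcone p' q' (Fin.succ_lt_succ_iff.mp hpq)

lemma ramsey {α : Type} [Fintype α] [DecidableEq α] [Nonempty α] {n : ℕ}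
    (χ : Fin n → Fin n → α) (s : ℕ)
    (h : gFun (Fintype.card α) (Fintype.card α * s) ≤ n) :
    ∃ (φ : Fin s → Fin n) (a : α), StrictMono φ ∧
      ∀ p q : Fin s, p < q → χ (φ p) (φ q) = a := by
  obtain ⟨ψ, dc, hmono, _, hcone⟩ := cone χ (Fintype.card α * s) Finset.univ (by simpa using h)
  obtain ⟨a, w, hw, hwa⟩ := pigeon dc (le_refl _)
  refine ⟨fun p => ψ (w p), a, hmono.comp hw, fun p q hpq => ?_⟩
  rw [hcone (w p) (w q) (hw hpq), hwa p]

end Stmt10Aux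
namespace Stmt10Aux
open Finset

lemma split {m : ℕ} : ∀ (T : ℕ) (S : Finset (Fin m → Bool)), 2 ^ T ≤ S.card →
    ∃ (x : Fin T → Fin m) (cc : Fin T → (Fin m → Bool)) (vals : Fin T → Bool)
      (cl : Fin m → Bool),
      (∀ j, cc j ∈ S) ∧ cl ∈ S ∧
      (∀ i j : Fin T, i < j → cc j (x i) = vals i) ∧
      (∀ j, cc j (x j) = !(vals j)) ∧
      (∀ i, cl (x i) = vals i) := by
  intro T
  induction T with
  | zero =>
    intro S hS
    have hne : S.Nonempty := Finset.card_pos.mp (by simpa using hS)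
    obtain ⟨cl, hcl⟩ := hne
    exact ⟨Fin.elim0, Fin.elim0, Fin.elim0, cl, fun j => j.elim0, hcl,
      fun i => i.elim0, fun j => j.elim0, fun i => i.elim0⟩
  | succ T IH =>
    intro S hS
    have h2 : 2 ≤ S.card := by
      have : 2 ≤ 2 ^ (T + 1) := by
        have : 2 ^ 1 ≤ 2 ^ (T + 1) := Nat.pow_le_pow_right (by omega) (by omega)
        simpa using this
      omega
    obtain ⟨a, ha, b, hb, hab⟩ := (Finset.one_lt_card (s := S)).mp (by omega)
    obtain ⟨x₀, hx₀⟩ := Function.ne_iff.mp hab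
    -- helper for the two symmetric cases
    have key : ∀ (v₀ : Bool) (B₀ : Fin m → Bool), B₀ ∈ S → B₀ x₀ = !v₀ →
        2 ^ T ≤ (S.filter (fun f => f x₀ = v₀)).card →
        ∃ (x : Fin (T+1) → Fin m) (cc : Fin (T+1) → (Fin m → Bool))
          (vals : Fin (T+1) → Bool) (cl : Fin m → Bool),
          (∀ j, cc j ∈ S) ∧ cl ∈ S ∧
          (∀ i j : Fin (T+1), i < j → cc j (x i) = vals i) ∧
          (∀ j, cc j (x j) = !(vals j)) ∧
          (∀ i, cl (x i) = vals i) := by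
      intro v₀ B₀ hB₀S hB₀ hbig
      obtain ⟨x', cc', vals', cl', hcc', hcl', hlt', hdiag', hclval'⟩ :=
        IH (S.filter (fun f => f x₀ = v₀)) hbig
      refine ⟨Fin.cons x₀ x', Fin.cons B₀ cc', Fin.cons v₀ vals', cl', ?_, ?_, ?_, ?_, ?_⟩
      · intro j
        rcases Fin.eq_zero_or_eq_succ j with rfl | ⟨j', rfl⟩
        · simpa using hB₀S
        · simp only [Fin.cons_succ]
          exact (Finset.mem_filter.mp (hcc' j')).1
      · exact (Finset.mem_filter.mp hcl').1
      · intro i j hij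
        rcases Fin.eq_zero_or_eq_succ i with rfl | ⟨i', rfl⟩
        · rcases Fin.eq_zero_or_eq_succ j with rfl | ⟨j', rfl⟩
          · exact absurd hij (lt_irrefl _)
          · simp only [Fin.cons_zero, Fin.cons_succ]
            exact (Finset.mem_filter.mp (hcc' j')).2
        · rcases Fin.eq_zero_or_eq_succ j with rfl | ⟨j', rfl⟩
          · exact absurd hij (Fin.not_lt_zero _)
          · simp only [Fin.cons_succ]
            exact hlt' i' j' (Fin.succ_lt_succ_iff.mp hij)
      · intro j
        rcases Fin.eq_zero_or_eq_succ j with rfl | ⟨j', rfl⟩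
        · simpa using hB₀
        · simp only [Fin.cons_succ]
          exact hdiag' j'
      · intro i
        rcases Fin.eq_zero_or_eq_succ i with rfl | ⟨i', rfl⟩
        · simp only [Fin.cons_zero]
          exact (Finset.mem_filter.mp hcl').2
        · simp only [Fin.cons_succ]
          exact hclval' i'
    have hsplit : (S.filter (fun f => f x₀ = true)).card
        + (S.filter (fun f => f x₀ = false)).card = S.card := by
      have := Finset.card_filter_add_card_filter_not
        (s := S) (p := fun f => f x₀ = true)
      simpa [Bool.not_eq_true] using this
    have hpow : 2 ^ (T + 1) = 2 ^ T + 2 ^ T := by ring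
    have hone : 2 ^ T + 2 ^ T ≤ (S.filter (fun f => f x₀ = true)).card
        + (S.filter (fun f => f x₀ = false)).card := by
      rw [hsplit, ← hpow]; exact hS
    have hbools : ∀ (u w : Bool), u ≠ w → (u = true ∧ w = false) ∨ (u = false ∧ w = true) := by
      decide
    rcases le_total ((S.filter (fun f => f x₀ = true)).card)
      ((S.filter (fun f => f x₀ = false)).card) with hle | hle
    · have hbig : 2 ^ T ≤ (S.filter (fun f => f x₀ = false)).card := by
        by_contra hcon
        push_neg at hcon
        exact absurd hone (not_le.mpr (Nat.add_lt_add (lt_of_le_of_lt hle hcon) hcon))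
      rcases hbools _ _ hx₀ with ⟨h1, _⟩ | ⟨_, h2⟩
      · exact key false a ha (by simp [h1]) hbig
      · exact key false b hb (by simp [h2]) hbig
    · have hbig : 2 ^ T ≤ (S.filter (fun f => f x₀ = true)).card := by
        by_contra hcon
        push_neg at hcon
        exact absurd hone (not_le.mpr (Nat.add_lt_add hcon (lt_of_le_of_lt hle hcon)))
      rcases hbools _ _ hx₀ with ⟨_, h2⟩ | ⟨h1, _⟩
      · exact key true b hb (by simp [h2]) hbig
      · exact key true a ha (by simp [h1]) hbig

end Stmt10Aux
namespace Stmt10Aux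
open Finset

lemma Imat_mem_diff {ℓ : ℕ} (hℓ : 2 ≤ ℓ) {a b : ℕ} (ha : a < 3) (hb : b < 3)
    (hab : a ≠ b) (h2 : a = 2 ∨ b = 2) :
    (⟨ℓ, ℓ, Imat ℓ a b⟩ : CMat) ∈ TFam ℓ 3 \ TFam ℓ 2 := by
  constructor
  · exact ⟨a, b, ha, hb, hab, Or.inl rfl⟩
  · rintro ⟨a', b', ha', hb', hab', h | h⟩
    · have hm : Imat ℓ a b = Imat ℓ a' b' := by
        injection h
      have e00 := congrFun (congrFun hm ⟨0, by omega⟩) ⟨0, by omega⟩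
      have e01 := congrFun (congrFun hm ⟨0, by omega⟩) ⟨1, by omega⟩
      simp [Imat, Fin.ext_iff] at e00 e01
      omega
    · have hm : Imat ℓ a b = Tmat ℓ a' b' := by
        injection h
      have e00 := congrFun (congrFun hm ⟨0, by omega⟩) ⟨0, by omega⟩
      have e01 := congrFun (congrFun hm ⟨0, by omega⟩) ⟨1, by omega⟩
      simp [Imat, Tmat, Fin.ext_iff] at e00 e01
      omega
lemma Tmat_mem_diff {ℓ : ℕ} (hℓ : 2 ≤ ℓ) {a b : ℕ} (ha : a < 3) (hb : b < 3)
    (hab : a ≠ b) (h2 : a = 2 ∨ b = 2) :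
    (⟨ℓ, ℓ, Tmat ℓ a b⟩ : CMat) ∈ TFam ℓ 3 \ TFam ℓ 2 := by
  constructor
  · exact ⟨a, b, ha, hb, hab, Or.inr rfl⟩
  · rintro ⟨a', b', ha', hb', hab', h | h⟩
    · have hm : Tmat ℓ a b = Imat ℓ a' b' := by
        injection h
      have e10 := congrFun (congrFun hm ⟨1, by omega⟩) ⟨0, by omega⟩
      have e01 := congrFun (congrFun hm ⟨0, by omega⟩) ⟨1, by omega⟩
      simp [Imat, Tmat, Fin.ext_iff] at e10 e01
      omega
    · have hm : Tmat ℓ a b = Tmat ℓ a' b' := by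
        injection h
      have e10 := congrFun (congrFun hm ⟨1, by omega⟩) ⟨0, by omega⟩
      have e01 := congrFun (congrFun hm ⟨0, by omega⟩) ⟨1, by omega⟩
      simp [Tmat, Fin.ext_iff] at e10 e01
      omega

/-- the 2-pattern of column j -/
def patFn {m n : ℕ} (A : MatN m n) : Fin n → Fin m → Bool :=
  fun j i => decide (A i j = 2)

lemma patFn_iff {m n : ℕ} (A : MatN m n) (j : Fin n) (i : Fin m) :
    patFn A j i = true ↔ A i j = 2 := by simp [patFn]

lemma patFn_false_iff {m n : ℕ} (A : MatN m n) (j : Fin n) (i : Fin m) :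
    patFn A j i = false ↔ ¬ A i j = 2 := by simp [patFn]

/-- each pattern class of columns has size at most forbmax m 2 𝓕 -/
lemma class_card_le (𝓕 : Set CMat) {m n : ℕ} (A : MatN m n) (h3 : RMat 3 A)
    (hs : SimpleM A) (hF : AvoidsFam A 𝓕) (p : Fin m → Bool) :
    (Finset.univ.filter (fun j : Fin n => patFn A j = p)).card ≤ forbmax m 2 𝓕 := by
  classical
  set Rows := Finset.univ.filter (fun i : Fin m => p i = false) with hRows
  set Cols := Finset.univ.filter (fun j : Fin n => patFn A j = p) with hCols
  set er := Rows.orderEmbOfFin (rfl : Rows.card = Rows.card) with her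
  set ec := Cols.orderEmbOfFin (rfl : Cols.card = Cols.card) with hec
  have hecp : ∀ j, patFn A (ec j) = p := by
    intro j
    have := Cols.orderEmbOfFin_mem (rfl : Cols.card = Cols.card) j
    exact (Finset.mem_filter.mp this).2
  have herp : ∀ i, p (er i) = false := by
    intro i
    have := Rows.orderEmbOfFin_mem (rfl : Rows.card = Rows.card) i
    exact (Finset.mem_filter.mp this).2
  set B : MatN Rows.card Cols.card := fun i j => A (er i) (ec j) with hB
  have hB2 : RMat 2 B := by
    intro i j
    have h1 : patFn A (ec j) (er i) = false := by rw [hecp j]; exact herp i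
    have h2 : ¬ A (er i) (ec j) = 2 := (patFn_false_iff A _ _).mp h1
    have := h3 (er i) (ec j)
    simp only [hB]
    omega
  have hBs : SimpleM B := by
    intro j₁ j₂ hj
    have hall : ∀ i₀ : Fin m, A i₀ (ec j₁) = A i₀ (ec j₂) := by
      intro i₀
      rcases Bool.eq_false_or_eq_true (p i₀) with hp0 | hp0
      · have h1 : A i₀ (ec j₁) = 2 := (patFn_iff A _ _).mp (by rw [hecp j₁]; exact hp0)
        have h2 : A i₀ (ec j₂) = 2 := (patFn_iff A _ _).mp (by rw [hecp j₂]; exact hp0)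
        rw [h1, h2]
      · have hi₀ : i₀ ∈ Rows := Finset.mem_filter.mpr ⟨Finset.mem_univ _, hp0⟩
        have : (i₀ : Fin m) ∈ Set.range er := by
          rw [her, Finset.range_orderEmbOfFin]
          exact hi₀
        obtain ⟨i, hi⟩ := this
        rw [← hi]
        exact hj i
    have := hs (ec j₁) (ec j₂) hall
    exact ec.injective this
  have hBav : AvoidsFam B 𝓕 := by
    intro F hFmem hconf
    obtain ⟨f, g, hf, hg, he⟩ := hconf
    exact hF F hFmem ⟨fun i => er (f i), fun j => ec (g j),
      er.injective.comp hf, ec.injective.comp hg, fun i j => he i j⟩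
  have h1 : Cols.card ≤ forb Rows.card 2 𝓕 := le_forb 𝓕 B hB2 hBs hBav
  have h2 : Rows.card ≤ m := by
    calc Rows.card ≤ (Finset.univ : Finset (Fin m)).card := Finset.card_filter_le _ _
    _ = m := by simp
  exact h1.trans (forb_le_forbmax 𝓕 h2 (by omega))

end Stmt10Aux
namespace Stmt10Aux
open Finset

/-- sizes -/
def RNv (ℓ : ℕ) : ℕ := gFun 9 (9 * (2 * ℓ + 1))
def Tv (ℓ : ℕ) : ℕ := 6 * RNv ℓ

lemma fin_ne_of_vne {N : ℕ} {a b : Fin N} (h : ¬ (a : ℕ) = (b : ℕ)) : ¬ a = b :=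
  fun hh => h (congrArg Fin.val hh)

lemma main_bound (ℓ : ℕ) (hℓ : 2 ≤ ℓ) (𝓕 : Set CMat) {m n : ℕ} (A : MatN m n)
    (h3 : RMat 3 A) (hs : SimpleM A)
    (hav : AvoidsFam A ((TFam ℓ 3 \ TFam ℓ 2) ∪ {⟨ℓ, ℓ, Tmat3 ℓ 0 2 1⟩} ∪ 𝓕)) :
    n ≤ 2 ^ Tv ℓ * forbmax m 2 𝓕 := by
  classical
  have hav𝓕 : AvoidsFam A 𝓕 := fun F hF => hav F (Or.inr hF)
  set img := Finset.univ.image (patFn A) with himg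
  -- MAIN CLAIM : few patterns
  have hK : img.card < 2 ^ Tv ℓ := by
    by_contra hK'
    push_neg at hK'
    obtain ⟨x, cc, vals, cl, hccS, hclS, hlt, hdiag, hclval⟩ := split (Tv ℓ) img hK'
    have hex : ∀ k : Fin (Tv ℓ), ∃ j : Fin n, patFn A j = cc k := by
      intro k
      obtain ⟨j, _, hj⟩ := Finset.mem_image.mp (hccS k)
      exact ⟨j, hj⟩
    choose col hcol using hex
    have fact1 : ∀ i k : Fin (Tv ℓ), i < k → (A (x i) (col k) = 2 ↔ vals i = true) := by
      intro i k h
      have hp : patFn A (col k) (x i) = vals i := by rw [hcol k]; exact hlt i k h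
      rw [← hp]
      exact (patFn_iff A _ _).symm
    have fact2 : ∀ k : Fin (Tv ℓ), (A (x k) (col k) = 2 ↔ vals k = false) := by
      intro k
      have hpk : patFn A (col k) (x k) = !(vals k) := by rw [hcol k]; exact hdiag k
      constructor
      · intro h2
        have h4 : (!(vals k)) = true := by rw [← hpk]; exact (patFn_iff A _ _).mpr h2
        simpa using h4
      · intro h2
        apply (patFn_iff A _ _).mp
        rw [hpk, h2]
        rfl
    have hxinj : Function.Injective x := by
      intro i i' hxe
      by_contra hne
      rcases lt_trichotomy i i' with hlt' | heq | hlt'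
      · have hv : vals i = vals i' := by rw [← hclval i, ← hclval i', hxe]
        have e3 : patFn A (col i') (x i) = vals i := by rw [hcol i']; exact hlt i i' hlt'
        have e4 : patFn A (col i') (x i') = !(vals i') := by rw [hcol i']; exact hdiag i'
        rw [hxe] at e3
        rw [e3, hv] at e4
        exact absurd e4 (by simp)
      · exact hne heq
      · have hv : vals i = vals i' := by rw [← hclval i, ← hclval i', hxe]
        have e3 : patFn A (col i) (x i') = vals i' := by rw [hcol i]; exact hlt i' i hlt'
        have e4 : patFn A (col i) (x i) = !(vals i) := by rw [hcol i]; exact hdiag i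
        rw [hxe, e3, hv] at e4
        exact absurd e4.symm (by simp)
    have hcolinj : Function.Injective col := by
      intro i i' hce
      by_contra hne
      rcases lt_trichotomy i i' with hlt' | heq | hlt'
      · have e3 : patFn A (col i') (x i) = vals i := by rw [hcol i']; exact hlt i i' hlt'
        have e4 : patFn A (col i) (x i) = !(vals i) := by rw [hcol i]; exact hdiag i
        rw [hce, e3] at e4
        exact absurd e4 (by simp)
      · exact hne heq
      · have e3 : patFn A (col i) (x i') = vals i' := by rw [hcol i]; exact hlt i' i hlt'
        have e4 : patFn A (col i') (x i') = !(vals i') := by rw [hcol i']; exact hdiag i'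
        rw [hce] at e3
        rw [e3] at e4
        exact absurd e4.symm (by simp)
    -- unary pigeonhole on (vals, diag entry)
    have hcard6 : Fintype.card (Bool × Fin 3) = 6 := by simp
    obtain ⟨⟨v, d⟩, w, hw, hvd⟩ := pigeon
      (fun k : Fin (Tv ℓ) => ((vals k, ⟨A (x k) (col k), h3 _ _⟩) : Bool × Fin 3))
      (by rw [hcard6]; exact le_of_eq rfl)
    have hvv : ∀ p, vals (w p) = v := fun p => congrArg Prod.fst (hvd p)
    have hdd : ∀ p, A (x (w p)) (col (w p)) = (d : ℕ) := by
      intro p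
      have h1 := congrArg (fun t : Bool × Fin 3 => ((t.2 : Fin 3) : ℕ)) (hvd p)
      simpa using h1
    -- Ramsey on pairs
    have hcard9 : Fintype.card (Fin 3 × Fin 3) = 9 := by simp
    obtain ⟨z, ⟨u, e⟩, hz, hze⟩ := ramsey
      (fun p q : Fin (RNv ℓ) =>
        ((⟨A (x (w p)) (col (w q)), h3 _ _⟩, ⟨A (x (w q)) (col (w p)), h3 _ _⟩) : Fin 3 × Fin 3))
      (2 * ℓ + 1) (by rw [hcard9]; exact le_of_eq rfl)
    have hU : ∀ p q : Fin (2 * ℓ + 1), p < q →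
        A (x (w (z p))) (col (w (z q))) = (u : ℕ) := by
      intro p q h
      have h1 := congrArg (fun t : Fin 3 × Fin 3 => ((t.1 : Fin 3) : ℕ)) (hze p q h)
      simpa using h1
    have hE : ∀ p q : Fin (2 * ℓ + 1), p < q →
        A (x (w (z q))) (col (w (z p))) = (e : ℕ) := by
      intro p q h
      have h1 := congrArg (fun t : Fin 3 × Fin 3 => ((t.2 : Fin 3) : ℕ)) (hze p q h)
      simpa using h1
    have hD : ∀ p : Fin (2 * ℓ + 1), A (x (w (z p))) (col (w (z p))) = (d : ℕ) :=
      fun p => hdd (z p)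
    have hXinj : ∀ a b : Fin (2 * ℓ + 1), x (w (z a)) = x (w (z b)) → a = b :=
      fun a b h => hz.injective (hw.injective (hxinj h))
    have hCinj : ∀ a b : Fin (2 * ℓ + 1), col (w (z a)) = col (w (z b)) → a = b :=
      fun a b h => hz.injective (hw.injective (hcolinj h))
    have hpat_lt : ∀ p q : Fin (2 * ℓ + 1), p < q →
        (A (x (w (z p))) (col (w (z q))) = 2 ↔ v = true) := by
      intro p q h
      rw [← hvv (z p)]
      exact fact1 (w (z p)) (w (z q)) (hw (hz h))
    have hpat_diag : ∀ p : Fin (2 * ℓ + 1),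
        (A (x (w (z p))) (col (w (z p))) = 2 ↔ v = false) := by
      intro p
      rw [← hvv (z p)]
      exact fact2 (w (z p))
    have hp01 : (⟨0, by omega⟩ : Fin (2 * ℓ + 1)) < ⟨1, by omega⟩ := by
      rw [Fin.mk_lt_mk]; omega
    have hud : (u : ℕ) < 3 := u.isLt
    have hed : (e : ℕ) < 3 := e.isLt
    have hdd3 : (d : ℕ) < 3 := d.isLt
    cases hv : v with
    | true =>
      have hU2 : (u : ℕ) = 2 := by
        rw [← hU ⟨0, by omega⟩ ⟨1, by omega⟩ hp01]
        exact (hpat_lt _ _ hp01).mpr hv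
      have hD2 : (d : ℕ) ≠ 2 := by
        intro hc
        have h5 := (hpat_diag ⟨0, by omega⟩).mp (by rw [hD]; exact hc)
        rw [hv] at h5
        exact absurd h5 (by simp)
      by_cases hE2 : (e : ℕ) = 2
      · -- Imat ℓ d 2
        refine hav ⟨ℓ, ℓ, Imat ℓ (d : ℕ) 2⟩
          (Or.inl (Or.inl (Imat_mem_diff hℓ hdd3 (by omega) hD2 (Or.inr rfl)))) ?_
        show IsConfig (Imat ℓ (d : ℕ) 2) A
        refine ⟨fun i : Fin ℓ => x (w (z ⟨2 * (i : ℕ), by have := i.isLt; omega⟩)),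
                fun j : Fin ℓ => col (w (z ⟨2 * (j : ℕ), by have := j.isLt; omega⟩)), ?_, ?_, ?_⟩
        · intro i j hij
          have h6 := hXinj _ _ hij
          rw [Fin.mk.injEq] at h6
          exact Fin.ext (by omega)
        · intro i j hij
          have h6 := hCinj _ _ hij
          rw [Fin.mk.injEq] at h6
          exact Fin.ext (by omega)
        · intro i j
          rcases lt_trichotomy (i : ℕ) (j : ℕ) with hij | hij | hij
          · rw [hU _ _ (by rw [Fin.mk_lt_mk]; omega), hU2]
            simp only [Imat]
            rw [if_neg (fin_ne_of_vne (by omega))]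
          · have hije : i = j := Fin.ext hij
            subst hije
            rw [hD]
            simp [Imat]
          · rw [hE _ _ (by rw [Fin.mk_lt_mk]; omega), hE2]
            simp only [Imat]
            rw [if_neg (fin_ne_of_vne (by omega))]
      · -- Tmat ℓ 2 e with reversed odd/even positions
        refine hav ⟨ℓ, ℓ, Tmat ℓ 2 (e : ℕ)⟩
          (Or.inl (Or.inl (Tmat_mem_diff hℓ (by omega) hed (fun hc => hE2 hc.symm) (Or.inl rfl)))) ?_
        show IsConfig (Tmat ℓ 2 (e : ℕ)) A
        refine ⟨fun i : Fin ℓ => x (w (z ⟨2 * (ℓ - 1 - (i : ℕ)) + 1, by have := i.isLt; omega⟩)),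
                fun j : Fin ℓ => col (w (z ⟨2 * (ℓ - 1 - (j : ℕ)), by have := j.isLt; omega⟩)),
                ?_, ?_, ?_⟩
        · intro i j hij
          have h6 := hXinj _ _ hij
          rw [Fin.mk.injEq] at h6
          exact Fin.ext (by have := i.isLt; have := j.isLt; omega)
        · intro i j hij
          have h6 := hCinj _ _ hij
          rw [Fin.mk.injEq] at h6
          exact Fin.ext (by have := i.isLt; have := j.isLt; omega)
        · intro i j
          rcases lt_or_ge (j : ℕ) (i : ℕ) with hij | hij
          · -- j < i : row position < col position, value u = 2
            rw [hU _ _ (by rw [Fin.mk_lt_mk]; have := i.isLt; have := j.isLt; omega), hU2]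
            simp only [Tmat]
            rw [if_pos hij]
          · -- i ≤ j : col position < row position, value e
            rw [hE _ _ (by rw [Fin.mk_lt_mk]; have := i.isLt; have := j.isLt; omega)]
            simp only [Tmat]
            rw [if_neg (by omega)]
    | false =>
      have hD2 : (d : ℕ) = 2 := by
        rw [← hD ⟨0, by omega⟩]
        exact (hpat_diag _).mpr hv
      have hU2 : (u : ℕ) ≠ 2 := by
        intro hc
        have h5 := (hpat_lt ⟨0, by omega⟩ ⟨1, by omega⟩ hp01).mp (by rw [hU _ _ hp01]; exact hc)
        rw [hv] at h5
        exact absurd h5 (by simp)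
      by_cases hE2 : (e : ℕ) = 2
      · -- Tmat ℓ 2 u : rows at odd, cols at even+2 positions
        refine hav ⟨ℓ, ℓ, Tmat ℓ 2 (u : ℕ)⟩
          (Or.inl (Or.inl (Tmat_mem_diff hℓ (by omega) hud (fun hc => hU2 hc.symm) (Or.inl rfl)))) ?_
        show IsConfig (Tmat ℓ 2 (u : ℕ)) A
        refine ⟨fun i : Fin ℓ => x (w (z ⟨2 * (i : ℕ) + 1, by have := i.isLt; omega⟩)),
                fun j : Fin ℓ => col (w (z ⟨2 * (j : ℕ) + 2, by have := j.isLt; omega⟩)),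
                ?_, ?_, ?_⟩
        · intro i j hij
          have h6 := hXinj _ _ hij
          rw [Fin.mk.injEq] at h6
          exact Fin.ext (by omega)
        · intro i j hij
          have h6 := hCinj _ _ hij
          rw [Fin.mk.injEq] at h6
          exact Fin.ext (by omega)
        · intro i j
          rcases lt_or_ge (j : ℕ) (i : ℕ) with hij | hij
          · -- j < i : col position < row position, value e = 2
            rw [hE _ _ (by rw [Fin.mk_lt_mk]; omega), hE2]
            simp only [Tmat]
            rw [if_pos hij]
          · rw [hU _ _ (by rw [Fin.mk_lt_mk]; omega)]
            simp only [Tmat]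
            rw [if_neg (by omega)]
      · have hel : (e : ℕ) < 2 := by omega
        have hul : (u : ℕ) < 2 := by omega
        by_cases heu : (e : ℕ) = (u : ℕ)
        · -- Imat ℓ 2 e
          refine hav ⟨ℓ, ℓ, Imat ℓ 2 (e : ℕ)⟩
            (Or.inl (Or.inl (Imat_mem_diff hℓ (by omega) hed (fun hc => hE2 hc.symm) (Or.inl rfl)))) ?_
          show IsConfig (Imat ℓ 2 (e : ℕ)) A
          refine ⟨fun i : Fin ℓ => x (w (z ⟨2 * (i : ℕ), by have := i.isLt; omega⟩)),
                  fun j : Fin ℓ => col (w (z ⟨2 * (j : ℕ), by have := j.isLt; omega⟩)), ?_, ?_, ?_⟩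
          · intro i j hij
            have h6 := hXinj _ _ hij
            rw [Fin.mk.injEq] at h6
            exact Fin.ext (by omega)
          · intro i j hij
            have h6 := hCinj _ _ hij
            rw [Fin.mk.injEq] at h6
            exact Fin.ext (by omega)
          · intro i j
            rcases lt_trichotomy (i : ℕ) (j : ℕ) with hij | hij | hij
            · rw [hU _ _ (by rw [Fin.mk_lt_mk]; omega), ← heu]
              simp only [Imat]
              rw [if_neg (fin_ne_of_vne (by omega))]
            · have hije : i = j := Fin.ext hij
              subst hije
              rw [hD, hD2]
              simp [Imat]
            · rw [hE _ _ (by rw [Fin.mk_lt_mk]; omega)]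
              simp only [Imat]
              rw [if_neg (fin_ne_of_vne (by omega))]
        · -- e ≠ u, both < 2 : get Tmat3 ℓ 0 2 1
          rcases (by omega : (e : ℕ) = 0 ∧ (u : ℕ) = 1 ∨ (e : ℕ) = 1 ∧ (u : ℕ) = 0) with
            ⟨he0, hu1⟩ | ⟨he1, hu0⟩
          · refine hav ⟨ℓ, ℓ, Tmat3 ℓ 0 2 1⟩ (Or.inl (Or.inr rfl)) ?_
            show IsConfig (Tmat3 ℓ 0 2 1) A
            refine ⟨fun i : Fin ℓ => x (w (z ⟨2 * (i : ℕ), by have := i.isLt; omega⟩)),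
                    fun j : Fin ℓ => col (w (z ⟨2 * (j : ℕ), by have := j.isLt; omega⟩)), ?_, ?_, ?_⟩
            · intro i j hij
              have h6 := hXinj _ _ hij
              rw [Fin.mk.injEq] at h6
              exact Fin.ext (by omega)
            · intro i j hij
              have h6 := hCinj _ _ hij
              rw [Fin.mk.injEq] at h6
              exact Fin.ext (by omega)
            · intro i j
              rcases lt_trichotomy (i : ℕ) (j : ℕ) with hij | hij | hij
              · rw [hU _ _ (by rw [Fin.mk_lt_mk]; omega), hu1]
                simp only [Tmat3]
                rw [if_neg (by omega), if_neg (fin_ne_of_vne (by omega))]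
              · have hije : i = j := Fin.ext hij
                subst hije
                rw [hD, hD2]
                simp [Tmat3]
              · rw [hE _ _ (by rw [Fin.mk_lt_mk]; omega), he0]
                simp only [Tmat3]
                rw [if_pos hij]
          · refine hav ⟨ℓ, ℓ, Tmat3 ℓ 0 2 1⟩ (Or.inl (Or.inr rfl)) ?_
            show IsConfig (Tmat3 ℓ 0 2 1) A
            refine ⟨fun i : Fin ℓ => x (w (z ⟨2 * (ℓ - 1 - (i : ℕ)), by have := i.isLt; omega⟩)),
                    fun j : Fin ℓ => col (w (z ⟨2 * (ℓ - 1 - (j : ℕ)), by have := j.isLt; omega⟩)),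
                    ?_, ?_, ?_⟩
            · intro i j hij
              have h6 := hXinj _ _ hij
              rw [Fin.mk.injEq] at h6
              exact Fin.ext (by have := i.isLt; have := j.isLt; omega)
            · intro i j hij
              have h6 := hCinj _ _ hij
              rw [Fin.mk.injEq] at h6
              exact Fin.ext (by have := i.isLt; have := j.isLt; omega)
            · intro i j
              rcases lt_trichotomy (i : ℕ) (j : ℕ) with hij | hij | hij
              · -- i < j : reversed, row position > col position, value e = 1
                rw [hE _ _ (by rw [Fin.mk_lt_mk]; have := i.isLt; have := j.isLt; omega), he1]
                simp only [Tmat3]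
                rw [if_neg (by omega), if_neg (fin_ne_of_vne (by omega))]
              · have hije : i = j := Fin.ext hij
                subst hije
                rw [hD, hD2]
                simp [Tmat3]
              · -- j < i : reversed, row position < col position, value u = 0
                rw [hU _ _ (by rw [Fin.mk_lt_mk]; have := i.isLt; have := j.isLt; omega), hu0]
                simp only [Tmat3]
                rw [if_pos hij]
  -- assemble the final count
  have hfib : n = ∑ p ∈ img, (Finset.univ.filter (fun j : Fin n => patFn A j = p)).card := by
    have h7 := Finset.card_eq_sum_card_fiberwise
      (f := patFn A) (s := Finset.univ) (t := img)
      (fun x _ => Finset.mem_image_of_mem (patFn A) (Finset.mem_univ x))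
    simpa using h7
  calc n = ∑ p ∈ img, (Finset.univ.filter (fun j : Fin n => patFn A j = p)).card := hfib
  _ ≤ ∑ _p ∈ img, forbmax m 2 𝓕 := by
      refine Finset.sum_le_sum fun p _ => ?_
      exact class_card_le 𝓕 A h3 hs hav𝓕 p
  _ = img.card * forbmax m 2 𝓕 := by simp [Finset.sum_const, smul_eq_mul]
  _ ≤ 2 ^ Tv ℓ * forbmax m 2 𝓕 := Nat.mul_le_mul_right _ hK.le

end Stmt10Aux

/-- For `ℓ ≥ 2` and a finite family `𝓕` of (0,1)-matrices, there is a
constant `c` with `forb(m, 3, (𝒯_ℓ(3)\𝒯_ℓ(2)) ∪ {T_ℓ(0,2,1)} ∪ 𝓕) ≤ c · forbmax(m, 𝓕)`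
for all `m ≥ 1`. -/
theorem stmt10 (ℓ : ℕ) (hℓ : 2 ≤ ℓ) (𝓕 : Set CMat) (hfin : 𝓕.Finite)
    (h01 : ∀ F ∈ 𝓕, RMat 2 F.mat) :
    ∃ c : ℕ, ∀ m : ℕ, 1 ≤ m →
      forb m 3 ((TFam ℓ 3 \ TFam ℓ 2) ∪ {⟨ℓ, ℓ, Tmat3 ℓ 0 2 1⟩} ∪ 𝓕) ≤
        c * forbmax m 2 𝓕 := by
  refine ⟨2 ^ Stmt10Aux.Tv ℓ, fun m _ => ?_⟩
  refine Stmt10Aux.natSSup_le fun n hn => ?_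
  obtain ⟨A, h1, h2, h3⟩ := hn
  exact Stmt10Aux.main_bound ℓ hℓ 𝓕 A h1 h2 h3
end

section
/- Let ℓ ≥ 1 and r > s ≥ 2 be given. Then there exists an integer t (depending only on r and ℓ) with the following property. Let x ∈ {0,…,r−1} and let G be any t×t r-matrix such that every entry of G strictly below the diagonal equals x, every diagonal entry of G is different from x, and moreover, if x ∈ {0,…,s−1}, then every diagonal entry of G lies in {s,…,r−1} (the entries above the diagonal are arbitrary). Then there is a matrix F with F ≺ G such that F belongs to (𝒯_ℓ(r) \ 𝒯_ℓ(s)) ∪ { T_ℓ(x,z,u) : u ∈ {0,…,s−1}, x ∈ {0,…,s−1}, x ≠ u, z ∈ {s,…,r−1} }. -/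
lemma ramseySeq {t r : ℕ} (hr : 2 ≤ r) (c : Fin t → Fin t → ℕ)
    (hc : ∀ i j, c i j < r) :
    ∀ (m : ℕ) (S : Finset (Fin t)), r ^ m ≤ S.card →
    ∃ a : Fin m → Fin t, ∃ d : Fin m → ℕ, StrictMono a ∧ (∀ i, a i ∈ S) ∧
      (∀ i, d i < r) ∧ ∀ i j : Fin m, i < j → c (a i) (a j) = d i := by
  intro m
  induction m with
  | zero =>
    intro S _
    exact ⟨Fin.elim0, Fin.elim0, fun i => i.elim0, fun i => i.elim0,
      fun i => i.elim0, fun i => i.elim0⟩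
  | succ m ih =>
    intro S hS
    have hpow : 0 < r ^ (m + 1) := pow_pos (by omega) _
    have hne : S.Nonempty := Finset.card_pos.mp (by omega)
    set a₀ := S.min' hne with ha₀
    have ha₀S : a₀ ∈ S := S.min'_mem hne
    set T := S.erase a₀ with hTdef
    have hT : S.card - 1 ≤ T.card := by
      rw [hTdef, Finset.card_erase_of_mem ha₀S]
    obtain ⟨p, hp⟩ : ∃ p, r ^ m = p + 1 := by
      have := Nat.one_le_pow m r (by omega)
      exact ⟨r ^ m - 1, by omega⟩
    have hstep : r ^ (m + 1) = r * p + r := by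
      rw [pow_succ, hp]; ring
    have hmap : ∀ b ∈ T, c a₀ b ∈ Finset.range r := by
      intro b _; exact Finset.mem_range.mpr (hc _ _)
    have hcard : (Finset.range r).card * p < T.card := by
      rw [Finset.card_range]; omega
    obtain ⟨v, hv, hvcard⟩ :=
      Finset.exists_lt_card_fiber_of_mul_lt_card_of_maps_to hmap hcard
    have hvr : v < r := Finset.mem_range.mp hv
    set S' := {x ∈ T | c a₀ x = v} with hS'
    have hS'card : r ^ m ≤ S'.card := by omega
    obtain ⟨a', d', hmono', hmem', hd', hcol'⟩ := ih S' hS'card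
    have hmemS' : ∀ i, a' i ∈ T ∧ c a₀ (a' i) = v := by
      intro i
      have := hmem' i
      rw [hS', Finset.mem_filter] at this
      exact this
    have hgt : ∀ i, a₀ < a' i := by
      intro i
      have h1 := (hmemS' i).1
      rw [hTdef, Finset.mem_erase] at h1
      exact lt_of_le_of_ne (S.min'_le _ h1.2) (Ne.symm h1.1)
    refine ⟨Fin.cons a₀ a', Fin.cons v d', ?_, ?_, ?_, ?_⟩
    · intro i j hij
      rcases Fin.eq_zero_or_eq_succ j with rfl | ⟨j', rfl⟩
      · exact absurd hij (by simp [Fin.lt_def])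
      · rcases Fin.eq_zero_or_eq_succ i with rfl | ⟨i', rfl⟩
        · simpa using hgt j'
        · simpa using hmono' (by simpa [Fin.succ_lt_succ_iff] using hij)
    · intro i
      rcases Fin.eq_zero_or_eq_succ i with rfl | ⟨i', rfl⟩
      · simpa using ha₀S
      · have h1 := (hmemS' i').1
        rw [hTdef, Finset.mem_erase] at h1
        simpa using h1.2
    · intro i
      rcases Fin.eq_zero_or_eq_succ i with rfl | ⟨i', rfl⟩
      · simpa using hvr
      · simpa using hd' i'
    · intro i j hij
      rcases Fin.eq_zero_or_eq_succ j with rfl | ⟨j', rfl⟩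
      · exact absurd hij (by simp [Fin.lt_def])
      · rcases Fin.eq_zero_or_eq_succ i with rfl | ⟨i', rfl⟩
        · simpa using (hmemS' j').2
        · simpa using hcol' i' j' (by simpa [Fin.succ_lt_succ_iff] using hij)

lemma extractMono (r ℓ : ℕ) (hr : 2 ≤ r) (hℓ : 1 ≤ ℓ) :
    ∃ t : ℕ, 2 ≤ t ∧ ∀ G : MatN t t, RMat r G →
      ∃ e : Fin (2 * ℓ) → Fin t, ∃ y u : ℕ, StrictMono e ∧ y < r ∧ u < r ∧
        (∀ i, G (e i) (e i) = y) ∧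
        (∀ i j : Fin (2 * ℓ), i < j → G (e i) (e j) = u) := by
  set m := r * (2 * ℓ) with hm
  refine ⟨r ^ (m + 1), ?_, ?_⟩
  · calc 2 ≤ r := hr
      _ = r ^ 1 := (pow_one r).symm
      _ ≤ r ^ (m + 1) := Nat.pow_le_pow_right (by omega) (by omega)
  · intro G hG
    -- pigeonhole on diagonal values
    obtain ⟨p, hp⟩ : ∃ p, r ^ m = p + 1 :=
      ⟨r ^ m - 1, by have := Nat.one_le_pow m r (by omega); omega⟩
    have hmap : ∀ i ∈ (Finset.univ : Finset (Fin (r ^ (m + 1)))), G i i ∈ Finset.range r :=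
      fun i _ => Finset.mem_range.mpr (hG i i)
    have hcard : (Finset.range r).card * p < (Finset.univ : Finset (Fin (r ^ (m + 1)))).card := by
      rw [Finset.card_range, Finset.card_univ, Fintype.card_fin, pow_succ, hp]
      nlinarith
    obtain ⟨y, hy, hycard⟩ :=
      Finset.exists_lt_card_fiber_of_mul_lt_card_of_maps_to hmap hcard
    have hyr : y < r := Finset.mem_range.mp hy
    set S := {i ∈ (Finset.univ : Finset (Fin (r ^ (m + 1)))) | G i i = y} with hSdef
    have hScard : r ^ m ≤ S.card := by omega
    obtain ⟨a, d, hamono, haS, hd, hcol⟩ :=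
      ramseySeq hr (fun i j => G i j) (fun i j => hG i j) m S hScard
    -- pigeonhole on d
    obtain ⟨q, hq⟩ : ∃ q, 2 * ℓ = q + 1 := ⟨2 * ℓ - 1, by omega⟩
    have hmap2 : ∀ i ∈ (Finset.univ : Finset (Fin m)), d i ∈ Finset.range r :=
      fun i _ => Finset.mem_range.mpr (hd i)
    have hcard2 : (Finset.range r).card * q < (Finset.univ : Finset (Fin m)).card := by
      rw [Finset.card_range, Finset.card_univ, Fintype.card_fin, hm, hq]
      nlinarith
    obtain ⟨u, hu, hucard⟩ :=
      Finset.exists_lt_card_fiber_of_mul_lt_card_of_maps_to hmap2 hcard2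
    have hur : u < r := Finset.mem_range.mp hu
    set B := {i ∈ (Finset.univ : Finset (Fin m)) | d i = u} with hBdef
    have hBcard : 2 * ℓ ≤ B.card := by omega
    set b := B.orderEmbOfCardLe hBcard with hb
    have hbB : ∀ i, b i ∈ B := fun i => B.orderEmbOfCardLe_mem hBcard i
    have hbd : ∀ i, d (b i) = u := by
      intro i
      have := hbB i
      rw [hBdef, Finset.mem_filter] at this
      exact this.2
    refine ⟨fun i => a (b i), y, u, ?_, hyr, hur, ?_, ?_⟩
    · exact hamono.comp b.strictMono
    · intro i
      have := haS (b i)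
      rw [hSdef, Finset.mem_filter] at this
      exact this.2
    · intro i j hij
      rw [hcol (b i) (b j) (b.strictMono hij), hbd i]

lemma notin_TFam_of_entry (ℓ s : ℕ) (hℓ : 1 ≤ ℓ) (M : MatN ℓ ℓ)
    (h : s ≤ M ⟨0, by omega⟩ ⟨0, by omega⟩) : (⟨ℓ, ℓ, M⟩ : CMat) ∉ TFam ℓ s := by
  rintro ⟨a, b, ha, hb, hab, (h' | h')⟩ <;>
  · simp only [CMat.mk.injEq, heq_eq_eq, true_and] at h'
    have := congrFun (congrFun h' ⟨0, by omega⟩) ⟨0, by omega⟩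
    simp [Imat, Tmat] at this
    omega

lemma tmat_notin_TFam (ℓ s x u : ℕ) (hℓ : 2 ≤ ℓ) (hxu : x ≠ u) (h : s ≤ x ∨ s ≤ u) :
    (⟨ℓ, ℓ, Tmat ℓ x u⟩ : CMat) ∉ TFam ℓ s := by
  rintro ⟨a, b, ha, hb, hab, (h' | h')⟩ <;>
    simp only [CMat.mk.injEq, heq_eq_eq, true_and] at h'
  · have h1 := congrFun (congrFun h' ⟨1, by omega⟩) ⟨0, by omega⟩
    have h2 := congrFun (congrFun h' ⟨0, by omega⟩) ⟨1, by omega⟩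
    have h3 := congrFun (congrFun h' ⟨0, by omega⟩) ⟨0, by omega⟩
    simp [Imat, Tmat, Fin.ext_iff] at h1 h2 h3
    omega
  · have h1 := congrFun (congrFun h' ⟨1, by omega⟩) ⟨0, by omega⟩
    have h3 := congrFun (congrFun h' ⟨0, by omega⟩) ⟨0, by omega⟩
    simp [Tmat, Fin.ext_iff] at h1 h3
    omega

lemma imat_notin_TFam (ℓ s y x : ℕ) (hℓ : 2 ≤ ℓ) (hyx : y ≠ x) (h : s ≤ y ∨ s ≤ x) :
    (⟨ℓ, ℓ, Imat ℓ y x⟩ : CMat) ∉ TFam ℓ s := by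
  rintro ⟨a, b, ha, hb, hab, (h' | h')⟩ <;>
    simp only [CMat.mk.injEq, heq_eq_eq, true_and] at h'
  · have h1 := congrFun (congrFun h' ⟨1, by omega⟩) ⟨0, by omega⟩
    have h3 := congrFun (congrFun h' ⟨0, by omega⟩) ⟨0, by omega⟩
    simp [Imat, Fin.ext_iff] at h1 h3
    omega
  · have h1 := congrFun (congrFun h' ⟨1, by omega⟩) ⟨0, by omega⟩
    have h2 := congrFun (congrFun h' ⟨0, by omega⟩) ⟨1, by omega⟩
    have h3 := congrFun (congrFun h' ⟨0, by omega⟩) ⟨0, by omega⟩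
    simp [Imat, Tmat, Fin.ext_iff] at h1 h2 h3
    omega

/-- For `ℓ ≥ 1` and `r > s ≥ 2` there is `t` (depending only on `r`, `ℓ`)
such that any `t×t` `r`-matrix `G` with all entries strictly below the diagonal equal
to some `x < r`, all diagonal entries different from `x`, and (when `x < s`) all
diagonal entries in `{s,…,r-1}`, contains as a configuration some member of
`(𝒯_ℓ(r) \ 𝒯_ℓ(s)) ∪ {T_ℓ(x,z,u) : x,u ∈ {0,…,s-1}, x ≠ u, z ∈ {s,…,r-1}}`. -/
theorem stmt11 (ℓ r s : ℕ) (hℓ : 1 ≤ ℓ) (hs : 2 ≤ s) (hrs : s < r) :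
    ∃ t : ℕ, ∀ x : ℕ, x < r →
      ∀ G : MatN t t, RMat r G →
        (∀ i j : Fin t, (j : ℕ) < (i : ℕ) → G i j = x) →
        (∀ i : Fin t, G i i ≠ x) →
        (x < s → ∀ i : Fin t, s ≤ G i i) →
        ∃ F : CMat,
          (F ∈ TFam ℓ r \ TFam ℓ s ∨
            ∃ z u : ℕ, x < s ∧ u < s ∧ x ≠ u ∧ s ≤ z ∧ z < r ∧
              F = ⟨ℓ, ℓ, Tmat3 ℓ x z u⟩) ∧
          IsConfig F.mat G := by
  have hr : 2 ≤ r := by omega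
  obtain ⟨t, ht2, hext⟩ := extractMono r ℓ hr hℓ
  refine ⟨t, ?_⟩
  intro x hx G hG hbelow hdiag hdiags
  obtain ⟨e, y, u, he, hy, hu, hdiagv, habove⟩ := hext G hG
  have hℓ2 : (0 : ℕ) < 2 * ℓ := by omega
  have hyx : y ≠ x := by
    have := hdiag (e ⟨0, hℓ2⟩)
    rw [hdiagv ⟨0, hℓ2⟩] at this
    exact this
  have hsy : x < s → s ≤ y := by
    intro hxs
    have := hdiags hxs (e ⟨0, hℓ2⟩)
    rwa [hdiagv ⟨0, hℓ2⟩] at this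
  have hxy2 : s ≤ x ∨ s ≤ y := by
    by_cases h : x < s
    · exact Or.inr (hsy h)
    · exact Or.inl (by omega)
  rcases Nat.lt_or_ge ℓ 2 with hℓ1 | hℓge2
  · -- ℓ = 1
    have hℓeq : ℓ = 1 := by omega
    subst hℓeq
    rcases hxy2 with hxs | hys
    · -- x ≥ s : use F = [x] realized below the diagonal
      refine ⟨⟨1, 1, Tmat 1 0 x⟩, Or.inl ⟨⟨0, x, by omega, hx, by omega, Or.inr rfl⟩, ?_⟩, ?_⟩
      · exact notin_TFam_of_entry 1 s (by omega) _ (by simpa [Tmat] using hxs)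
      · refine ⟨fun _ => ⟨1, by omega⟩, fun _ => ⟨0, by omega⟩,
          fun a b _ => Subsingleton.elim a b, fun a b _ => Subsingleton.elim a b, ?_⟩
        intro i j
        have : G ⟨1, by omega⟩ ⟨0, by omega⟩ = x := hbelow _ _ (by simp)
        simp [Tmat, this]
    · -- y ≥ s : use F = [y] on the diagonal
      refine ⟨⟨1, 1, Imat 1 y 0⟩, Or.inl ⟨⟨y, 0, hy, by omega, by omega, Or.inl rfl⟩, ?_⟩, ?_⟩
      · exact notin_TFam_of_entry 1 s (by omega) _ (by simpa [Imat] using hys)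
      · refine ⟨fun _ => e ⟨0, hℓ2⟩, fun _ => e ⟨0, hℓ2⟩,
          fun a b _ => Subsingleton.elim a b, fun a b _ => Subsingleton.elim a b, ?_⟩
        intro i j
        have hij : i = j := Subsingleton.elim i j
        subst hij
        simp [Imat, hdiagv]
  · -- ℓ ≥ 2
    have hemb : ∀ i : Fin ℓ, (i : ℕ) < 2 * ℓ := fun i => by omega
    have hfmono : StrictMono (fun i : Fin ℓ => (⟨(i : ℕ), hemb i⟩ : Fin (2 * ℓ))) :=
      fun i j hij => Fin.mk_lt_mk.mpr (Fin.lt_def.mp hij)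
    by_cases hux : u = x
    · subst hux
      refine ⟨⟨ℓ, ℓ, Imat ℓ y u⟩,
        Or.inl ⟨⟨y, u, hy, hu, hyx, Or.inl rfl⟩,
          imat_notin_TFam ℓ s y u hℓge2 hyx (by tauto)⟩, ?_⟩
      refine ⟨fun i => e ⟨(i : ℕ), hemb i⟩, fun i => e ⟨(i : ℕ), hemb i⟩,
        (he.comp hfmono).injective, (he.comp hfmono).injective, ?_⟩
      intro i j
      rcases lt_trichotomy i j with hij | hij | hij
      · rw [habove _ _ (hfmono hij)]
        simp [Imat, ne_of_lt hij]
      · subst hij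
        rw [hdiagv]
        simp [Imat]
      · rw [hbelow _ _ (he (hfmono hij))]
        simp [Imat, Ne.symm (ne_of_lt hij)]
    · by_cases hsmall : x < s ∧ u < s
      · refine ⟨⟨ℓ, ℓ, Tmat3 ℓ x y u⟩,
          Or.inr ⟨y, u, hsmall.1, hsmall.2, fun h => hux (h.symm), hsy hsmall.1, hy, rfl⟩, ?_⟩
        refine ⟨fun i => e ⟨(i : ℕ), hemb i⟩, fun i => e ⟨(i : ℕ), hemb i⟩,
          (he.comp hfmono).injective, (he.comp hfmono).injective, ?_⟩
        intro i j
        rcases lt_trichotomy i j with hij | hij | hij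
        · rw [habove _ _ (hfmono hij)]
          have hij' : (i : ℕ) < (j : ℕ) := hij
          have h1 : ¬ ((j : ℕ) < (i : ℕ)) := by omega
          simp [Tmat3, h1, ne_of_lt hij]
        · subst hij
          rw [hdiagv]
          simp [Tmat3]
        · rw [hbelow _ _ (he (hfmono hij))]
          have hij' : (j : ℕ) < (i : ℕ) := hij
          simp [Tmat3, hij']
      · have hbig : s ≤ x ∨ s ≤ u := by omega
        refine ⟨⟨ℓ, ℓ, Tmat ℓ x u⟩,
          Or.inl ⟨⟨x, u, hx, hu, fun h => hux h.symm, Or.inr rfl⟩,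
            tmat_notin_TFam ℓ s x u hℓge2 (fun h => hux h.symm) hbig⟩, ?_⟩
        have hb1 : ∀ i : Fin ℓ, 2 * (i : ℕ) < 2 * ℓ := fun i => by omega
        have hb2 : ∀ j : Fin ℓ, 2 * (j : ℕ) + 1 < 2 * ℓ := fun j => by omega
        have hg1 : StrictMono (fun i : Fin ℓ => (⟨2 * (i : ℕ), hb1 i⟩ : Fin (2 * ℓ))) :=
          fun i j hij => Fin.mk_lt_mk.mpr (by have := Fin.lt_def.mp hij; omega)
        have hg2 : StrictMono (fun j : Fin ℓ => (⟨2 * (j : ℕ) + 1, hb2 j⟩ : Fin (2 * ℓ))) :=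
          fun i j hij => Fin.mk_lt_mk.mpr (by have := Fin.lt_def.mp hij; omega)
        refine ⟨fun i => e ⟨2 * (i : ℕ), hb1 i⟩, fun j => e ⟨2 * (j : ℕ) + 1, hb2 j⟩,
          (he.comp hg1).injective, (he.comp hg2).injective, ?_⟩
        intro i j
        rcases Nat.lt_or_ge (j : ℕ) (i : ℕ) with hij | hij
        · rw [hbelow _ _ (he (Fin.mk_lt_mk.mpr (by omega)))]
          simp [Tmat, hij]
        · rw [habove _ _ (Fin.mk_lt_mk.mpr (by omega))]
          simp [Tmat, Nat.not_lt.mpr hij]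
end

section
/- Let ℓ ≥ 2 and let 𝓕 be a finite set of (0,1)-matrices. Then there exist constants c and d (depending only on ℓ and 𝓕) such that for all m ≥ 1 and all k with 0 ≤ k ≤ m, forb_k(m, 3, (𝒯_ℓ(3) \ 𝒯_ℓ(2)) ∪ {T_ℓ(0,2,1)} ∪ 𝓕) ≤ c · Σ_{j = max(0, k−d)}^{k} forbmax_j(m, 𝓕). -/
-- ===== auxiliary =====

def ramQ (ℓ : ℕ) : ℕ := 4 ^ (4 * (ℓ - 1) + 1) + 2 ^ (2 * (ℓ - 1) + 1) + 2 * ℓ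

def ramT (ℓ : ℕ) : ℕ := 4 ^ (4 * (ramQ ℓ - 1) + 1)

lemma ramQ_pos {ℓ : ℕ} (hl : 2 ≤ ℓ) : 0 < ramQ ℓ :=
  Nat.add_pos_right _ (by omega)

lemma ramQ_ge1 (ℓ : ℕ) : 4 ^ (4 * (ℓ - 1) + 1) ≤ ramQ ℓ :=
  le_trans (Nat.le_add_right _ _) (Nat.le_add_right _ _)

lemma ramQ_ge2 (ℓ : ℕ) : 2 ^ (2 * (ℓ - 1) + 1) ≤ ramQ ℓ :=
  le_trans (Nat.le_add_left _ _) (Nat.le_add_right _ _)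

lemma ramQ_ge3 (ℓ : ℕ) : 2 * ℓ ≤ ramQ ℓ := Nat.le_add_left _ _

lemma not_mem_TFam2 {ℓ : ℕ} (X : MatN ℓ ℓ) (i j : Fin ℓ) (hx : X i j = 2) :
    (⟨ℓ, ℓ, X⟩ : CMat) ∉ TFam ℓ 2 := by
  rintro ⟨a, b, ha, hb, hne, h | h⟩
  · have hX : X = Imat ℓ a b := by simpa [CMat.mk.injEq] using h
    rw [hX] at hx
    unfold Imat at hx
    split at hx <;> omega
  · have hX : X = Tmat ℓ a b := by simpa [CMat.mk.injEq] using h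
    rw [hX] at hx
    unfold Tmat at hx
    split at hx <;> omega

lemma mem_diff_Imat {ℓ : ℕ} (a b : ℕ) (ha : a < 3) (hb : b < 3) (hne : a ≠ b)
    (i j : Fin ℓ) (h2 : Imat ℓ a b i j = 2) :
    (⟨ℓ, ℓ, Imat ℓ a b⟩ : CMat) ∈ TFam ℓ 3 \ TFam ℓ 2 :=
  ⟨⟨a, b, ha, hb, hne, Or.inl rfl⟩, not_mem_TFam2 _ i j h2⟩

lemma mem_diff_Tmat {ℓ : ℕ} (a b : ℕ) (ha : a < 3) (hb : b < 3) (hne : a ≠ b)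
    (i j : Fin ℓ) (h2 : Tmat ℓ a b i j = 2) :
    (⟨ℓ, ℓ, Tmat ℓ a b⟩ : CMat) ∈ TFam ℓ 3 \ TFam ℓ 2 :=
  ⟨⟨a, b, ha, hb, hne, Or.inr rfl⟩, not_mem_TFam2 _ i j h2⟩

/-- `A` admits none of the `ℓ × ℓ` "2-involving" patterns as configurations. -/
def NoPat (ℓ : ℕ) {m n : ℕ} (A : MatN m n) : Prop :=
  ∀ X : MatN ℓ ℓ,
    ((⟨ℓ, ℓ, X⟩ : CMat) ∈ TFam ℓ 3 \ TFam ℓ 2 ∨ X = Tmat3 ℓ 0 2 1) → ¬ IsConfig X A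

open Finset

section Ramsey

variable {C : Type} [DecidableEq C] [Fintype C]

lemma exists_big_fiber {ι : Type*} [DecidableEq ι] (s : Finset ι) (f : ι → C) (q : ℕ)
    (hq : 1 ≤ q) (h : Fintype.card C * (q - 1) < s.card) :
    ∃ c₀ : C, q ≤ (s.filter (fun x => f x = c₀)).card := by
  by_contra hcon
  push_neg at hcon
  have hsum : s.card = ∑ c₀ ∈ (Finset.univ : Finset C), (s.filter (fun x => f x = c₀)).card :=
    Finset.card_eq_sum_card_fiberwise (fun x _ => Finset.mem_univ (f x))
  have hle : ∀ c₀ ∈ (Finset.univ : Finset C), (s.filter (fun x => f x = c₀)).card ≤ q - 1 := by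
    intro c₀ _
    have := hcon c₀
    omega
  have hfin : s.card ≤ Fintype.card C * (q - 1) := by
    rw [hsum]
    calc ∑ c₀ ∈ (Finset.univ : Finset C), (s.filter (fun x => f x = c₀)).card
        ≤ ∑ _c₀ ∈ (Finset.univ : Finset C), (q - 1) := Finset.sum_le_sum hle
      _ = Fintype.card C * (q - 1) := by
          rw [Finset.sum_const, Finset.card_univ, smul_eq_mul]
  omega

lemma ramsey_seq (hC : 2 ≤ Fintype.card C) :
    ∀ (t : ℕ) (s : Finset ℕ) (χ : ℕ → ℕ → C), Fintype.card C ^ t ≤ s.card →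
    ∃ (g : Fin t → ℕ) (γ : Fin t → C), StrictMono g ∧ (∀ i, g i ∈ s) ∧
      ∀ i j : Fin t, i < j → χ (g i) (g j) = γ i := by
  intro t
  induction t with
  | zero =>
    intro s χ _
    exact ⟨Fin.elim0, Fin.elim0, fun i => i.elim0, fun i => i.elim0, fun i => i.elim0⟩
  | succ t ih =>
    intro s χ hs
    have hcpos : 0 < Fintype.card C := by omega
    have hpos : 0 < s.card := lt_of_lt_of_le (Nat.pow_pos hcpos) hs
    have hne : s.Nonempty := Finset.card_pos.1 hpos
    set x := s.min' hne with hx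
    have hxs : x ∈ s := s.min'_mem hne
    set s' := s.erase x with hs'
    have hcard' : s'.card = s.card - 1 := Finset.card_erase_of_mem hxs
    have h1 : 1 ≤ Fintype.card C ^ t := Nat.one_le_pow _ _ hcpos
    have hkey : Fintype.card C * (Fintype.card C ^ t - 1) + Fintype.card C
        = Fintype.card C * Fintype.card C ^ t := by
      have h2 : Fintype.card C ^ t - 1 + 1 = Fintype.card C ^ t :=
        Nat.succ_pred_eq_of_pos h1
      calc Fintype.card C * (Fintype.card C ^ t - 1) + Fintype.card C
          = Fintype.card C * ((Fintype.card C ^ t - 1) + 1) := by ring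
        _ = Fintype.card C * Fintype.card C ^ t := by rw [h2]
    have hspow : Fintype.card C * Fintype.card C ^ t ≤ s.card := by
      have : Fintype.card C ^ (t + 1) = Fintype.card C * Fintype.card C ^ t := by ring
      omega
    have hbig : Fintype.card C * (Fintype.card C ^ t - 1) < s'.card := by omega
    obtain ⟨γ₀, hγ₀⟩ := exists_big_fiber s' (χ x) (Fintype.card C ^ t) h1 hbig
    obtain ⟨g', γ', hg'm, hg's, hg'c⟩ := ih (s'.filter (fun y => χ x y = γ₀)) χ hγ₀
    have hg'x : ∀ i, x < g' i := by
      intro i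
      have hmem : g' i ∈ s' := Finset.filter_subset _ _ (hg's i)
      have h3 := Finset.mem_erase.1 hmem
      exact lt_of_le_of_ne (s.min'_le _ h3.2) (Ne.symm h3.1)
    refine ⟨Fin.cons x g', Fin.cons γ₀ γ', ?_, ?_, ?_⟩
    · intro a b hab
      induction b using Fin.cases with
      | zero => exact absurd hab (Fin.not_lt_zero a).elim
      | succ j =>
        induction a using Fin.cases with
        | zero => simpa [Fin.cons_zero, Fin.cons_succ] using hg'x j
        | succ i =>
          simp only [Fin.cons_succ]
          exact hg'm (Fin.succ_lt_succ_iff.1 hab)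
    · intro i
      induction i using Fin.cases with
      | zero => simpa [Fin.cons_zero] using hxs
      | succ i =>
        have hmem : g' i ∈ s' := Finset.filter_subset _ _ (hg's i)
        simpa [Fin.cons_succ] using Finset.erase_subset _ _ hmem
    · intro i j hij
      induction j using Fin.cases with
      | zero => exact absurd hij (Fin.not_lt_zero i).elim
      | succ j =>
        induction i using Fin.cases with
        | zero =>
          simp only [Fin.cons_zero, Fin.cons_succ]
          exact (Finset.mem_filter.1 (hg's j)).2
        | succ i =>
          simp only [Fin.cons_succ]
          exact hg'c i j (Fin.succ_lt_succ_iff.1 hij)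

lemma ramsey_mono (q : ℕ) (s : Finset ℕ) (χ : ℕ → ℕ → C) (hC : 2 ≤ Fintype.card C)
    (hq : 1 ≤ q)
    (hs : Fintype.card C ^ (Fintype.card C * (q - 1) + 1) ≤ s.card) :
    ∃ (z : Fin q → ℕ) (γ : C), StrictMono z ∧ (∀ i, z i ∈ s) ∧
      ∀ i j : Fin q, i < j → χ (z i) (z j) = γ := by
  obtain ⟨g, γf, hgm, hgs, hgc⟩ := ramsey_seq hC (Fintype.card C * (q - 1) + 1) s χ hs
  obtain ⟨γ₀, hγ₀⟩ := exists_big_fiber (Finset.univ : Finset (Fin _)) γf q hq (by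
    rw [Finset.card_univ, Fintype.card_fin]; omega)
  obtain ⟨u, hus, huc⟩ := Finset.exists_subset_card_eq hγ₀
  set w := u.orderIsoOfFin huc with hw
  have hwm : ∀ {i j : Fin q}, i < j → (w i).1 < (w j).1 := by
    intro i j hij
    exact Subtype.coe_lt_coe.2 (w.strictMono hij)
  refine ⟨fun i => g (w i).1, γ₀, ?_, ?_, ?_⟩
  · intro i j hij
    exact hgm (hwm hij)
  · intro i
    exact hgs _
  · intro i j hij
    rw [hgc _ _ (hwm hij)]
    have hmem : (w i).1 ∈ Finset.filter (fun x => γf x = γ₀) Finset.univ :=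
      hus (w i).2
    exact (Finset.mem_filter.1 hmem).2

end Ramsey

section Kill

variable {ℓ m n : ℕ} {A : MatN m n}

lemma beq_one_decode {x : ℕ} {b : Bool} (h : (x == 1) = b) : (x = 1) ↔ b = true := by
  cases b <;> simp_all

lemma kill_diag (hl : 2 ≤ ℓ) (hA3 : RMat 3 A) (hNP : NoPat ℓ A)
    (r : Fin (ramQ ℓ) → Fin m) (β : Fin (ramQ ℓ) → Fin n)
    (hr : Function.Injective r) (hβ : Function.Injective β)
    (hd : ∀ i, A (r i) (β i) = 2)
    (ho : ∀ i j, i ≠ j → A (r i) (β j) ≠ 2) : False := by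
  classical
  have hQpos : 0 < ramQ ℓ := ramQ_pos hl
  set lift : ℕ → Fin (ramQ ℓ) := fun x => if h : x < ramQ ℓ then ⟨x, h⟩ else ⟨0, hQpos⟩
    with hliftdef
  set χ : ℕ → ℕ → Bool × Bool := fun x y =>
    (A (r (lift x)) (β (lift y)) == 1, A (r (lift y)) (β (lift x)) == 1) with hχ
  have hcard : Fintype.card (Bool × Bool) = 4 := by simp
  obtain ⟨z, γ, hzm, hzs, hzc⟩ := ramsey_mono ℓ (Finset.range (ramQ ℓ)) χ
    (by rw [hcard]; omega) (by omega)
    (by rw [hcard, Finset.card_range]; exact ramQ_ge1 ℓ)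
  have hzlt : ∀ i, z i < ramQ ℓ := fun i => Finset.mem_range.1 (hzs i)
  set z' : Fin ℓ → Fin (ramQ ℓ) := fun i => ⟨z i, hzlt i⟩ with hz'
  have hlift : ∀ i, lift (z i) = z' i := fun i => dif_pos (hzlt i)
  have hz'm : StrictMono z' := fun i j h => by
    simp only [hz', Fin.mk_lt_mk]
    exact hzm h
  have hz'inj : Function.Injective z' := hz'm.injective
  obtain ⟨b₁, b₂⟩ := γ
  have hAB : ∀ i j : Fin ℓ, i < j →
      ((A (r (z' i)) (β (z' j)) = 1) ↔ b₁ = true) ∧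
      ((A (r (z' j)) (β (z' i)) = 1) ↔ b₂ = true) := by
    intro i j hij
    have h := hzc i j hij
    rw [hχ] at h
    simp only [hlift] at h
    rw [Prod.mk.injEq] at h
    exact ⟨beq_one_decode h.1, beq_one_decode h.2⟩
  have hne3 : ∀ i j, A i j < 3 := hA3
  have i0 : Fin ℓ := ⟨0, by omega⟩
  cases b₁ <;> cases b₂
  · -- (false, false) : Imat ℓ 2 0
    refine hNP (Imat ℓ 2 0)
      (Or.inl (mem_diff_Imat 2 0 (by omega) (by omega) (by omega) i0 i0 (by simp [Imat])))
      ⟨fun i => r (z' i), fun j => β (z' j), hr.comp hz'inj, hβ.comp hz'inj, ?_⟩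
    intro i j
    unfold Imat
    by_cases hij : i = j
    · subst hij; simp [hd (z' i)]
    · simp only [hij, if_false]
      have hne2 : A (r (z' i)) (β (z' j)) ≠ 2 := ho _ _ (fun h => hij (hz'inj h))
      have h3 := hne3 (r (z' i)) (β (z' j))
      rcases lt_or_gt_of_ne hij with h | h
      · have h1 := (hAB i j h).1
        simp only [Bool.false_eq_true, iff_false] at h1
        omega
      · have h1 := (hAB j i h).2
        simp only [Bool.false_eq_true, iff_false] at h1
        omega
  · -- (false, true) : below=1 above=0 → reversed Tmat3 ℓ 0 2 1
    refine hNP (Tmat3 ℓ 0 2 1) (Or.inr rfl)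
      ⟨fun i => r (z' i.rev), fun j => β (z' j.rev),
        hr.comp (hz'inj.comp Fin.rev_injective),
        hβ.comp (hz'inj.comp Fin.rev_injective), ?_⟩
    intro i j
    unfold Tmat3
    rcases lt_trichotomy (j : ℕ) (i : ℕ) with h | h | h
    · have hji : j < i := h
      have hrev : i.rev < j.rev := Fin.rev_lt_rev.2 hji
      have h1 := (hAB i.rev j.rev hrev).1
      simp only [Bool.false_eq_true, iff_false] at h1
      have hne2 : A (r (z' i.rev)) (β (z' j.rev)) ≠ 2 :=
        ho _ _ (fun hc => (ne_of_lt hrev) (hz'inj hc))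
      have h3 := hne3 (r (z' i.rev)) (β (z' j.rev))
      simp only [h, if_true]
      omega
    · have hij : i = j := Fin.ext (by omega)
      subst hij
      simp only [lt_irrefl, if_false, if_pos rfl]
      exact hd (z' i.rev)
    · have hij : i < j := h
      have hrev : j.rev < i.rev := Fin.rev_lt_rev.2 hij
      have h1 := (hAB j.rev i.rev hrev).2
      simp only [iff_true] at h1
      have : ¬ ((j : ℕ) < (i : ℕ)) := by omega
      simp only [this, if_false]
      have : i ≠ j := ne_of_lt hij
      simp only [this, if_false]
      exact h1
  · -- (true, false) : above=1 below=0 → Tmat3 ℓ 0 2 1 directly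
    refine hNP (Tmat3 ℓ 0 2 1) (Or.inr rfl)
      ⟨fun i => r (z' i), fun j => β (z' j), hr.comp hz'inj, hβ.comp hz'inj, ?_⟩
    intro i j
    unfold Tmat3
    rcases lt_trichotomy (j : ℕ) (i : ℕ) with h | h | h
    · have hji : j < i := h
      have h1 := (hAB j i hji).2
      simp only [Bool.false_eq_true, iff_false] at h1
      have hne2 : A (r (z' i)) (β (z' j)) ≠ 2 :=
        ho _ _ (fun hc => (ne_of_gt hji) (hz'inj hc))
      have h3 := hne3 (r (z' i)) (β (z' j))
      simp only [h, if_true]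
      omega
    · have hij : i = j := Fin.ext (by omega)
      subst hij
      simp only [lt_irrefl, if_false, if_pos rfl]
      exact hd (z' i)
    · have hij : i < j := h
      have h1 := (hAB i j hij).1
      simp only [iff_true] at h1
      have hnl : ¬ ((j : ℕ) < (i : ℕ)) := by omega
      have hnej : i ≠ j := ne_of_lt hij
      simp only [hnl, if_false, hnej]
      exact h1
  · -- (true, true) : Imat ℓ 2 1
    refine hNP (Imat ℓ 2 1)
      (Or.inl (mem_diff_Imat 2 1 (by omega) (by omega) (by omega) i0 i0 (by simp [Imat])))
      ⟨fun i => r (z' i), fun j => β (z' j), hr.comp hz'inj, hβ.comp hz'inj, ?_⟩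
    intro i j
    unfold Imat
    by_cases hij : i = j
    · subst hij; simp [hd (z' i)]
    · simp only [hij, if_false]
      rcases lt_or_gt_of_ne hij with h | h
      · have h1 := (hAB i j h).1
        simp only [iff_true] at h1
        exact h1
      · have h1 := (hAB j i h).2
        simp only [iff_true] at h1
        exact h1

end Kill

section Kill2

variable {ℓ m n : ℕ} {A : MatN m n}

lemma kill_codiag (hl : 2 ≤ ℓ) (hA3 : RMat 3 A) (hNP : NoPat ℓ A)
    (r : Fin (ramQ ℓ) → Fin m) (β : Fin (ramQ ℓ) → Fin n)
    (hr : Function.Injective r) (hβ : Function.Injective β)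
    (hd : ∀ i, A (r i) (β i) ≠ 2)
    (ho : ∀ i j, i ≠ j → A (r i) (β j) = 2) : False := by
  classical
  obtain ⟨b, hb⟩ := exists_big_fiber (Finset.univ : Finset (Fin (ramQ ℓ)))
    (fun i => A (r i) (β i) == 1) ℓ (by omega)
    (by
      rw [Finset.card_univ, Fintype.card_fin, Fintype.card_bool]
      have := ramQ_ge3 ℓ
      omega)
  obtain ⟨u, hus, huc⟩ := Finset.exists_subset_card_eq hb
  set w := u.orderIsoOfFin huc with hw
  set e : Fin ℓ → Fin (ramQ ℓ) := fun i => (w i).1 with he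
  have hem : StrictMono e := fun i j hij => Subtype.coe_lt_coe.2 (w.strictMono hij)
  have heinj : Function.Injective e := hem.injective
  have hef : ∀ i, (A (r (e i)) (β (e i)) == 1) = b := by
    intro i
    have hmem := hus (w i).2
    exact (Finset.mem_filter.1 hmem).2
  have hne3 : ∀ i j, A i j < 3 := hA3
  have i0 : Fin ℓ := ⟨0, by omega⟩
  have i1 : Fin ℓ := ⟨1, by omega⟩
  have hIval : ∀ a : ℕ, a ≠ 2 → Imat ℓ a 2 (⟨0, by omega⟩ : Fin ℓ) (⟨1, by omega⟩ : Fin ℓ) = 2 := by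
    intro a ha
    simp [Imat, Fin.ext_iff]
  cases b
  · -- diagonal entries are 0
    refine hNP (Imat ℓ 0 2)
      (Or.inl (mem_diff_Imat 0 2 (by omega) (by omega) (by omega) _ _ (hIval 0 (by omega))))
      ⟨fun i => r (e i), fun j => β (e j), hr.comp heinj, hβ.comp heinj, ?_⟩
    intro i j
    unfold Imat
    by_cases hij : i = j
    · subst hij
      rw [if_pos rfl]
      have h1 := hef i
      simp only [beq_eq_false_iff_ne, ne_eq] at h1
      have h2 := hd (e i)
      have h3 := hne3 (r (e i)) (β (e i))
      simp only [if_true]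
      omega
    · simp only [hij, if_false]
      exact ho _ _ (fun h => hij (heinj h))
  · -- diagonal entries are 1
    refine hNP (Imat ℓ 1 2)
      (Or.inl (mem_diff_Imat 1 2 (by omega) (by omega) (by omega) _ _ (hIval 1 (by omega))))
      ⟨fun i => r (e i), fun j => β (e j), hr.comp heinj, hβ.comp heinj, ?_⟩
    intro i j
    unfold Imat
    by_cases hij : i = j
    · subst hij
      rw [if_pos rfl]
      have h1 := hef i
      simpa using h1
    · simp only [hij, if_false]
      exact ho _ _ (fun h => hij (heinj h))

lemma kill_upper (hl : 2 ≤ ℓ) (hA3 : RMat 3 A) (hNP : NoPat ℓ A)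
    (r : Fin (ramQ ℓ) → Fin m) (β : Fin (ramQ ℓ) → Fin n)
    (hr : Function.Injective r) (hβ : Function.Injective β)
    (hp : ∀ i j, A (r i) (β j) = 2 ↔ i ≤ j) : False := by
  classical
  have hQpos : 0 < ramQ ℓ := ramQ_pos hl
  set lift : ℕ → Fin (ramQ ℓ) := fun x => if h : x < ramQ ℓ then ⟨x, h⟩ else ⟨0, hQpos⟩
    with hliftdef
  set χ : ℕ → ℕ → Bool := fun x y => A (r (lift y)) (β (lift x)) == 1 with hχ
  obtain ⟨z, b, hzm, hzs, hzc⟩ := ramsey_mono ℓ (Finset.range (ramQ ℓ)) χ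
    (by rw [Fintype.card_bool]) (by omega)
    (by rw [Fintype.card_bool, Finset.card_range]; exact ramQ_ge2 ℓ)
  have hzlt : ∀ i, z i < ramQ ℓ := fun i => Finset.mem_range.1 (hzs i)
  set z' : Fin ℓ → Fin (ramQ ℓ) := fun i => ⟨z i, hzlt i⟩ with hz'
  have hlift : ∀ i, lift (z i) = z' i := fun i => dif_pos (hzlt i)
  have hz'm : StrictMono z' := fun i j h => by
    simp only [hz', Fin.mk_lt_mk]
    exact hzm h
  have hz'inj : Function.Injective z' := hz'm.injective
  have hAB : ∀ i j : Fin ℓ, i < j → ((A (r (z' j)) (β (z' i)) = 1) ↔ b = true) := by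
    intro i j hij
    have h := hzc i j hij
    rw [hχ] at h
    simp only [hlift] at h
    exact beq_one_decode h
  have hne3 : ∀ i j, A i j < 3 := hA3
  have hTval : ∀ a : ℕ, Tmat ℓ a 2 (⟨0, by omega⟩ : Fin ℓ) (⟨0, by omega⟩ : Fin ℓ) = 2 := by
    intro a
    simp [Tmat]
  have hmain : ∀ a : ℕ, a < 2 →
      (∀ i j : Fin ℓ, (j : ℕ) < (i : ℕ) → A (r (z' i)) (β (z' j)) = a) → False := by
    intro a ha hval
    refine hNP (Tmat ℓ a 2)
      (Or.inl (mem_diff_Tmat a 2 (by omega) (by omega) (by omega) _ _ (hTval a)))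
      ⟨fun i => r (z' i), fun j => β (z' j), hr.comp hz'inj, hβ.comp hz'inj, ?_⟩
    intro i j
    unfold Tmat
    by_cases hij : (j : ℕ) < (i : ℕ)
    · simp only [hij, if_true]
      exact hval i j hij
    · simp only [hij, if_false]
      exact (hp (z' i) (z' j)).2 (hz'm.monotone (Fin.le_def.2 (by omega)))
  cases b
  · refine hmain 0 (by omega) ?_
    intro i j hji
    have hlt : j < i := Fin.lt_def.2 hji
    have h1 := hAB j i hlt
    simp only [Bool.false_eq_true, iff_false] at h1
    have h2 : A (r (z' i)) (β (z' j)) ≠ 2 := fun h =>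
      absurd ((hp _ _).1 h) (not_le.2 (hz'm hlt))
    have h3 := hne3 (r (z' i)) (β (z' j))
    omega
  · refine hmain 1 (by omega) ?_
    intro i j hji
    have hlt : j < i := Fin.lt_def.2 hji
    have h1 := hAB j i hlt
    simpa using h1

end Kill2

section Kill3

variable {ℓ m n : ℕ} {A : MatN m n}

lemma kill_lower (hl : 2 ≤ ℓ) (hA3 : RMat 3 A) (hNP : NoPat ℓ A)
    (r : Fin (ramQ ℓ) → Fin m) (β : Fin (ramQ ℓ) → Fin n)
    (hr : Function.Injective r) (hβ : Function.Injective β)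
    (hp : ∀ i j, A (r i) (β j) = 2 ↔ j ≤ i) : False := by
  classical
  have hQpos : 0 < ramQ ℓ := ramQ_pos hl
  set lift : ℕ → Fin (ramQ ℓ) := fun x => if h : x < ramQ ℓ then ⟨x, h⟩ else ⟨0, hQpos⟩
    with hliftdef
  set χ : ℕ → ℕ → Bool := fun x y => A (r (lift x)) (β (lift y)) == 1 with hχ
  obtain ⟨z, b, hzm, hzs, hzc⟩ := ramsey_mono ℓ (Finset.range (ramQ ℓ)) χ
    (by rw [Fintype.card_bool]) (by omega)
    (by rw [Fintype.card_bool, Finset.card_range]; exact ramQ_ge2 ℓ)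
  have hzlt : ∀ i, z i < ramQ ℓ := fun i => Finset.mem_range.1 (hzs i)
  set z' : Fin ℓ → Fin (ramQ ℓ) := fun i => ⟨z i, hzlt i⟩ with hz'
  have hlift : ∀ i, lift (z i) = z' i := fun i => dif_pos (hzlt i)
  have hz'm : StrictMono z' := fun i j h => by
    simp only [hz', Fin.mk_lt_mk]
    exact hzm h
  have hz'inj : Function.Injective z' := hz'm.injective
  have hAB : ∀ i j : Fin ℓ, i < j → ((A (r (z' i)) (β (z' j)) = 1) ↔ b = true) := by
    intro i j hij
    have h := hzc i j hij
    rw [hχ] at h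
    simp only [hlift] at h
    exact beq_one_decode h
  have hne3 : ∀ i j, A i j < 3 := hA3
  have hTval : ∀ a : ℕ, Tmat ℓ a 2 (⟨0, by omega⟩ : Fin ℓ) (⟨0, by omega⟩ : Fin ℓ) = 2 := by
    intro a
    simp [Tmat]
  have hinj : Function.Injective (fun i : Fin ℓ => z' i.rev) :=
    hz'inj.comp Fin.rev_injective
  have hmain : ∀ a : ℕ, a < 2 →
      (∀ i j : Fin ℓ, (j : ℕ) < (i : ℕ) → A (r (z' i.rev)) (β (z' j.rev)) = a) → False := by
    intro a ha hval
    refine hNP (Tmat ℓ a 2)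
      (Or.inl (mem_diff_Tmat a 2 (by omega) (by omega) (by omega) _ _ (hTval a)))
      ⟨fun i => r (z' i.rev), fun j => β (z' j.rev), hr.comp hinj, hβ.comp hinj, ?_⟩
    intro i j
    unfold Tmat
    by_cases hij : (j : ℕ) < (i : ℕ)
    · simp only [hij, if_true]
      exact hval i j hij
    · simp only [hij, if_false]
      have hle : i ≤ j := Fin.le_def.2 (by omega)
      exact (hp (z' i.rev) (z' j.rev)).2 (hz'm.monotone (Fin.rev_le_rev.2 hle))
  cases b
  · refine hmain 0 (by omega) ?_
    intro i j hji
    have hrev : i.rev < j.rev := Fin.rev_lt_rev.2 (Fin.lt_def.2 hji)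
    have h1 := hAB i.rev j.rev hrev
    simp only [Bool.false_eq_true, iff_false] at h1
    have h2 : A (r (z' i.rev)) (β (z' j.rev)) ≠ 2 := fun h =>
      absurd ((hp _ _).1 h) (not_le.2 (hz'm hrev))
    have h3 := hne3 (r (z' i.rev)) (β (z' j.rev))
    omega
  · refine hmain 1 (by omega) ?_
    intro i j hji
    have hrev : i.rev < j.rev := Fin.rev_lt_rev.2 (Fin.lt_def.2 hji)
    have h1 := hAB i.rev j.rev hrev
    simpa using h1

end Kill3

section Supp

variable {ℓ m n : ℕ}

lemma decide_decode {p : Prop} [Decidable p] {b : Bool} (h : decide p = b) : p ↔ b = true := by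
  cases b <;> simp_all

lemma supp_card_le (hl : 2 ≤ ℓ) (A : MatN m n) (hA3 : RMat 3 A) (hNP : NoPat ℓ A) :
    (Finset.univ.image
      (fun j : Fin n => Finset.univ.filter (fun i : Fin m => A i j = 2))).card ≤ 2 ^ ramT ℓ := by
  classical
  set supp : Fin n → Finset (Fin m) :=
    fun j => Finset.univ.filter (fun i : Fin m => A i j = 2) with hsuppdef
  set S : Finset (Finset (Fin m)) := Finset.univ.image supp with hSdef
  by_contra hcon
  push_neg at hcon
  -- minimal distinguishing row set
  set P : ℕ → Prop := fun c => ∃ R : Finset (Fin m), R.card = c ∧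
    Set.InjOn (fun T : Finset (Fin m) => T ∩ R) ↑S with hPdef
  have hPuniv : P (Finset.univ : Finset (Fin m)).card := by
    refine ⟨Finset.univ, rfl, ?_⟩
    intro a _ b _ h
    simpa using h
  have hPne : {c | P c}.Nonempty := ⟨_, hPuniv⟩
  set c₀ := sInf {c | P c} with hc₀def
  have hc₀ : P c₀ := Nat.sInf_mem hPne
  obtain ⟨R, hRc, hRinj⟩ := hc₀
  have hSle : S.card ≤ 2 ^ c₀ := by
    have h1 : S.card ≤ R.powerset.card := by
      apply Finset.card_le_card_of_injOn (fun T => T ∩ R)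
      · intro T _
        exact Finset.mem_powerset.2 Finset.inter_subset_right
      · intro a ha b hb h
        exact hRinj ha hb h
    rw [Finset.card_powerset, hRc] at h1
    exact h1
  have hc₀big : ramT ℓ < c₀ := by
    have h2 : 2 ^ ramT ℓ < 2 ^ c₀ := lt_of_lt_of_le hcon hSle
    exact (Nat.pow_lt_pow_iff_right (by omega)).1 h2
  -- witness pairs for each row of R
  have hwit : ∀ x : Fin m, ∃ UV : Finset (Fin m) × Finset (Fin m),
      x ∈ R → (UV.1 ∈ S ∧ UV.2 ∈ S ∧ x ∈ UV.1 ∧ x ∉ UV.2 ∧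
        ∀ y ∈ R, y ≠ x → (y ∈ UV.1 ↔ y ∈ UV.2)) := by
    intro x
    by_cases hx : x ∈ R
    swap
    · exact ⟨(∅, ∅), fun h => absurd h hx⟩
    have hlt : c₀ - 1 < c₀ := by omega
    have hnP : ¬ P (c₀ - 1) := Nat.notMem_of_lt_sInf hlt
    have hcard' : (R.erase x).card = c₀ - 1 := by
      rw [Finset.card_erase_of_mem hx, hRc]
    have hninj : ¬ Set.InjOn (fun T : Finset (Fin m) => T ∩ (R.erase x)) ↑S :=
      fun h => hnP ⟨_, hcard', h⟩
    rw [Set.InjOn] at hninj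
    push_neg at hninj
    obtain ⟨U, hU, V, hV, hUV, hne⟩ := hninj
    have hUS : U ∈ S := hU
    have hVS : V ∈ S := hV
    have hagree : ∀ y ∈ R, y ≠ x → (y ∈ U ↔ y ∈ V) := by
      intro y hy hyx
      have h3 := Finset.ext_iff.1 hUV y
      simp only [Finset.mem_inter, Finset.mem_erase] at h3
      constructor
      · intro hyU
        exact (h3.1 ⟨hyU, hyx, hy⟩).1
      · intro hyV
        exact (h3.2 ⟨hyV, hyx, hy⟩).1
    have hx' : (x ∈ U ∧ x ∉ V) ∨ (x ∈ V ∧ x ∉ U) := by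
      by_contra hcc
      push_neg at hcc
      apply hne
      apply hRinj hU hV
      ext y
      simp only [Finset.mem_inter]
      by_cases hyx : y = x
      · subst hyx
        constructor
        · rintro ⟨h4, _⟩
          exact ⟨hcc.1 h4, hx⟩
        · rintro ⟨h4, _⟩
          exact ⟨hcc.2 h4, hx⟩
      · constructor
        · rintro ⟨h4, h5⟩
          exact ⟨(hagree y h5 hyx).1 h4, h5⟩
        · rintro ⟨h4, h5⟩
          exact ⟨(hagree y h5 hyx).2 h4, h5⟩
    rcases hx' with ⟨h1, h2⟩ | ⟨h1, h2⟩
    · exact ⟨(U, V), fun _ => ⟨hUS, hVS, h1, h2, hagree⟩⟩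
    · refine ⟨(V, U), fun _ => ⟨hVS, hUS, h1, h2, ?_⟩⟩
      intro y hy hyx
      exact (hagree y hy hyx).symm
  choose UV hUV using hwit
  set Uf : Fin m → Finset (Fin m) := fun x => (UV x).1 with hUfdef
  set Vf : Fin m → Finset (Fin m) := fun x => (UV x).2 with hVfdef
  -- ramsey setup
  have hRne : R.Nonempty := by
    rw [← Finset.card_pos, hRc]
    omega
  obtain ⟨r₀, hr₀⟩ := hRne
  set lift : ℕ → Fin m := fun x => if h : x < m then ⟨x, h⟩ else r₀ with hliftdef
  set s : Finset ℕ := R.map ⟨Fin.val, Fin.val_injective⟩ with hsdef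
  have hscard : s.card = c₀ := by rw [hsdef, Finset.card_map, hRc]
  have hsmem : ∀ x ∈ s, lift x ∈ R ∧ (lift x).val = x := by
    intro x hx
    obtain ⟨a, haR, ha⟩ := Finset.mem_map.1 hx
    simp only [Function.Embedding.coeFn_mk] at ha
    have hxm : x < m := ha ▸ a.isLt
    have hla : lift x = a := by
      rw [hliftdef]
      simp only [dif_pos hxm]
      exact Fin.ext (by simp [ha])
    rw [hla]
    exact ⟨haR, ha⟩
  set χ : ℕ → ℕ → Bool × Bool := fun x y =>
    (decide (lift x ∈ Uf (lift y)), decide (lift y ∈ Uf (lift x))) with hχdef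
  have hcard4 : Fintype.card (Bool × Bool) = 4 := by simp
  obtain ⟨z, γ, hzm, hzs, hzc⟩ := ramsey_mono (ramQ ℓ) s χ
    (by rw [hcard4]; omega) (by have := ramQ_pos hl; omega)
    (by
      rw [hcard4, hscard]
      have : ramT ℓ = 4 ^ (4 * (ramQ ℓ - 1) + 1) := rfl
      omega)
  set r' : Fin (ramQ ℓ) → Fin m := fun i => lift (z i) with hr'def
  have hr'R : ∀ i, r' i ∈ R ∧ (r' i).val = z i := fun i => hsmem _ (hzs i)
  have hr'inj : Function.Injective r' := by
    intro i j h
    apply hzm.injective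
    rw [← (hr'R i).2, ← (hr'R j).2, h]
  have hr'ne : ∀ i j : Fin (ramQ ℓ), i ≠ j → r' i ≠ r' j :=
    fun i j hij h => hij (hr'inj h)
  -- representative columns
  have hSne : S.Nonempty := by
    rw [← Finset.card_pos]
    exact lt_of_le_of_lt (Nat.zero_le _) hcon
  have hrep' : ∀ T : Finset (Fin m), ∃ j : Fin n, T ∈ S → supp j = T := by
    intro T
    by_cases hT : T ∈ S
    · obtain ⟨j, _, hj⟩ := Finset.mem_image.1 hT
      exact ⟨j, fun _ => hj⟩
    · obtain ⟨T₀, hT₀⟩ := hSne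
      obtain ⟨j₀, _, _⟩ := Finset.mem_image.1 hT₀
      exact ⟨j₀, fun h => absurd h hT⟩
  choose rep hrepp using hrep'
  have hsupp2 : ∀ (x : Fin m) (T : Finset (Fin m)), T ∈ S → (A x (rep T) = 2 ↔ x ∈ T) := by
    intro x T hT
    have h5 := hrepp T hT
    conv_rhs => rw [← h5]
    rw [hsuppdef]
    simp
  -- witness facts on R
  have hUfS : ∀ x ∈ R, Uf x ∈ S := fun x hx => (hUV x hx).1
  have hVfS : ∀ x ∈ R, Vf x ∈ S := fun x hx => (hUV x hx).2.1
  have hxU : ∀ x ∈ R, x ∈ Uf x := fun x hx => (hUV x hx).2.2.1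
  have hxV : ∀ x ∈ R, x ∉ Vf x := fun x hx => (hUV x hx).2.2.2.1
  have hagr : ∀ x ∈ R, ∀ y ∈ R, y ≠ x → (y ∈ Uf x ↔ y ∈ Vf x) :=
    fun x hx y hy hyx => (hUV x hx).2.2.2.2 y hy hyx
  obtain ⟨b₁, b₂⟩ := γ
  have hpat : ∀ i j : Fin (ramQ ℓ), i < j →
      ((r' i ∈ Uf (r' j)) ↔ b₁ = true) ∧ ((r' j ∈ Uf (r' i)) ↔ b₂ = true) := by
    intro i j hij
    have h := hzc i j hij
    rw [hχdef] at h
    simp only [] at h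
    rw [Prod.mk.injEq] at h
    exact ⟨decide_decode h.1, decide_decode h.2⟩
  -- general membership pattern for all pairs
  have hpat' : ∀ i j : Fin (ramQ ℓ), i ≠ j →
      ((r' i ∈ Uf (r' j)) ↔ (if i < j then b₁ else b₂) = true) := by
    intro i j hij
    rcases lt_or_gt_of_ne hij with h | h
    · rw [if_pos h]
      exact (hpat i j h).1
    · rw [if_neg (asymm h)]
      exact (hpat j i h).2
  have hUval : ∀ i j : Fin (ramQ ℓ),
      A (r' i) (rep (Uf (r' j))) = 2 ↔ r' i ∈ Uf (r' j) :=
    fun i j => hsupp2 _ _ (hUfS _ (hr'R j).1)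
  have hVval : ∀ i j : Fin (ramQ ℓ),
      A (r' i) (rep (Vf (r' j))) = 2 ↔ r' i ∈ Vf (r' j) :=
    fun i j => hsupp2 _ _ (hVfS _ (hr'R j).1)
  have hUdiag : ∀ i, r' i ∈ Uf (r' i) := fun i => hxU _ (hr'R i).1
  have hUinj : ∀ (c : Fin (ramQ ℓ) → Finset (Fin m)),
      (∀ i j : Fin (ramQ ℓ), (rep (c i) = rep (c j)) → c i ∈ S → c j ∈ S → c i = c j) := by
    intro c i j h hi hj
    rw [← hrepp _ hi, ← hrepp _ hj, h]
  cases b₁ <;> cases b₂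
  · -- (false, false) : diagonal-2 system
    set β : Fin (ramQ ℓ) → Fin n := fun i => rep (Uf (r' i)) with hβdef
    have hoff : ∀ i j : Fin (ramQ ℓ), i ≠ j → r' i ∉ Uf (r' j) := by
      intro i j hij hmem
      have h := (hpat' i j hij).1 hmem
      split at h <;> simp at h
    have hβinj : Function.Injective β := by
      intro i j h
      by_contra hij
      have hUeq : Uf (r' i) = Uf (r' j) :=
        hUinj (fun i => Uf (r' i)) i j h (hUfS _ (hr'R i).1) (hUfS _ (hr'R j).1)
      exact hoff i j hij (hUeq ▸ hUdiag i)
    exact kill_diag hl hA3 hNP r' β hr'inj hβinj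
      (fun i => (hUval i i).2 (hUdiag i))
      (fun i j hij h => hoff i j hij ((hUval i j).1 h))
  · -- (false, true) : r' i ∈ Uf (r' j) ↔ j ≤ i
    set β : Fin (ramQ ℓ) → Fin n := fun i => rep (Uf (r' i)) with hβdef
    have hiff : ∀ i j : Fin (ramQ ℓ), (r' i ∈ Uf (r' j)) ↔ j ≤ i := by
      intro i j
      by_cases hij : i = j
      · subst hij
        exact iff_of_true (hUdiag i) le_rfl
      · rw [hpat' i j hij]
        rcases lt_or_gt_of_ne hij with h | h
        · rw [if_pos h]
          exact iff_of_false (by simp) (not_le.2 h)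
        · rw [if_neg (asymm h)]
          exact iff_of_true rfl (le_of_lt h)
    have hβinj : Function.Injective β := by
      intro i j h
      have hUeq : Uf (r' i) = Uf (r' j) :=
        hUinj (fun i => Uf (r' i)) i j h (hUfS _ (hr'R i).1) (hUfS _ (hr'R j).1)
      have h1 : i ≤ j := (hiff j i).1 (hUeq ▸ hUdiag j)
      have h2 : j ≤ i := (hiff i j).1 (hUeq.symm ▸ hUdiag i)
      exact le_antisymm h1 h2
    exact kill_lower hl hA3 hNP r' β hr'inj hβinj
      (fun i j => (hUval i j).trans (hiff i j))
  · -- (true, false) : r' i ∈ Uf (r' j) ↔ i ≤ j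
    set β : Fin (ramQ ℓ) → Fin n := fun i => rep (Uf (r' i)) with hβdef
    have hiff : ∀ i j : Fin (ramQ ℓ), (r' i ∈ Uf (r' j)) ↔ i ≤ j := by
      intro i j
      by_cases hij : i = j
      · subst hij
        exact iff_of_true (hUdiag i) le_rfl
      · rw [hpat' i j hij]
        rcases lt_or_gt_of_ne hij with h | h
        · rw [if_pos h]
          exact iff_of_true rfl (le_of_lt h)
        · rw [if_neg (asymm h)]
          exact iff_of_false (by simp) (not_le.2 h)
    have hβinj : Function.Injective β := by
      intro i j h
      have hUeq : Uf (r' i) = Uf (r' j) :=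
        hUinj (fun i => Uf (r' i)) i j h (hUfS _ (hr'R i).1) (hUfS _ (hr'R j).1)
      have h1 : j ≤ i := (hiff j i).1 (hUeq ▸ hUdiag j)
      have h2 : i ≤ j := (hiff i j).1 (hUeq.symm ▸ hUdiag i)
      exact le_antisymm h2 h1
    exact kill_upper hl hA3 hNP r' β hr'inj hβinj
      (fun i j => (hUval i j).trans (hiff i j))
  · -- (true, true) : co-diagonal system via Vf
    set β : Fin (ramQ ℓ) → Fin n := fun i => rep (Vf (r' i)) with hβdef
    have hUtrue : ∀ i j : Fin (ramQ ℓ), i ≠ j → r' i ∈ Uf (r' j) := by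
      intro i j hij
      rw [hpat' i j hij]
      split <;> rfl
    have hVtrue : ∀ i j : Fin (ramQ ℓ), i ≠ j → r' i ∈ Vf (r' j) := by
      intro i j hij
      exact (hagr (r' j) (hr'R j).1 (r' i) (hr'R i).1 (hr'ne i j hij)).1 (hUtrue i j hij)
    have hβinj : Function.Injective β := by
      intro i j h
      by_contra hij
      have hVeq : Vf (r' i) = Vf (r' j) :=
        hUinj (fun i => Vf (r' i)) i j h (hVfS _ (hr'R i).1) (hVfS _ (hr'R j).1)
      exact hxV _ (hr'R i).1 (hVeq ▸ hVtrue i j hij)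
    exact kill_codiag hl hA3 hNP r' β hr'inj hβinj
      (fun i h => hxV _ (hr'R i).1 ((hVval i i).1 h))
      (fun i j hij => (hVval i j).2 (hVtrue i j hij))

end Supp

section Final

lemma simple_card_le_two_pow {m n : ℕ} (A : MatN m n) (h2 : RMat 2 A) (hs : SimpleM A) :
    n ≤ 2 ^ m := by
  classical
  have hinj : Function.Injective
      (fun j : Fin n => (fun i : Fin m => (⟨A i j, h2 i j⟩ : Fin 2))) := by
    intro j₁ j₂ h
    refine hs j₁ j₂ (fun i => ?_)
    have := congrFun h i
    simpa [Fin.ext_iff] using this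
  calc n = Fintype.card (Fin n) := (Fintype.card_fin n).symm
    _ ≤ Fintype.card (Fin m → Fin 2) := Fintype.card_le_of_injective _ hinj
    _ = 2 ^ m := by simp

lemma forbK_le_two_pow (k m : ℕ) (𝓕 : Set CMat) : forbK k m 2 𝓕 ≤ 2 ^ m := by
  apply csSup_le'
  rintro x ⟨A, hA2, hAs, _, _⟩
  exact simple_card_le_two_pow A hA2 hAs

lemma forbK_bddAbove (k m : ℕ) (𝓕 : Set CMat) :
    BddAbove { n : ℕ | ∃ A : MatN m n, RMat 2 A ∧ SimpleM A ∧ (∀ j, colSum A j = k) ∧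
      AvoidsFam A 𝓕 } := by
  refine ⟨2 ^ m, ?_⟩
  rintro x ⟨A, hA2, hAs, _, _⟩
  exact simple_card_le_two_pow A hA2 hAs

lemma forbK_le_forbmaxK (k m m' : ℕ) (h : m' ≤ m) (𝓕 : Set CMat) :
    forbK k m' 2 𝓕 ≤ forbmaxK k m 2 𝓕 := by
  apply le_csSup
  · refine ⟨2 ^ m, ?_⟩
    rintro x ⟨m'', hm'', rfl⟩
    exact le_trans (forbK_le_two_pow k m'' 𝓕)
      (Nat.pow_le_pow_right (by omega) hm'')
  · exact ⟨m', h, rfl⟩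

lemma fiber_le {m n k : ℕ} (𝓕 : Set CMat) (A : MatN m n) (hA3 : RMat 3 A)
    (hAs : SimpleM A) (hcs : ∀ j, colSum A j = k)
    (hAv : ∀ F ∈ 𝓕, ¬ IsConfig F.mat A) (S : Finset (Fin m)) :
    (Finset.univ.filter (fun j : Fin n =>
        Finset.univ.filter (fun i => A i j = 2) = S)).card ≤ forbK k (m - S.card) 2 𝓕 := by
  classical
  set fib := Finset.univ.filter (fun j : Fin n =>
      Finset.univ.filter (fun i => A i j = 2) = S) with hfibdef
  have hcompl : Sᶜ.card = m - S.card := by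
    rw [Finset.card_compl]
    simp
  set rowE := Sᶜ.orderIsoOfFin hcompl with hrowE
  set colE := fib.orderIsoOfFin rfl with hcolE
  set B : MatN (m - S.card) fib.card := fun i j => A (rowE i).1 (colE j).1 with hBdef
  have hc2 : ∀ (j : Fin fib.card) (x : Fin m), A x (colE j).1 = 2 ↔ x ∈ S := by
    intro j x
    have hj : (colE j).1 ∈ fib := (colE j).2
    have hj2 : Finset.univ.filter (fun i => A i (colE j).1 = 2) = S :=
      (Finset.mem_filter.1 hj).2
    have h6 := Finset.ext_iff.1 hj2 x
    simpa using h6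
  have hrow_ne : ∀ (i : Fin (m - S.card)), (rowE i).1 ∉ S := by
    intro i
    exact Finset.mem_compl.1 (rowE i).2
  apply le_csSup (forbK_bddAbove k (m - S.card) 𝓕)
  refine ⟨B, ?_, ?_, ?_, ?_⟩
  · -- RMat 2
    intro i j
    have h1 : B i j ≠ 2 := fun h => hrow_ne i ((hc2 j _).1 h)
    have h2 : B i j < 3 := hA3 _ _
    omega
  · -- SimpleM
    intro j₁ j₂ hj
    have hcols : ∀ x : Fin m, A x (colE j₁).1 = A x (colE j₂).1 := by
      intro x
      by_cases hx : x ∈ S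
      · rw [(hc2 j₁ x).2 hx, (hc2 j₂ x).2 hx]
      · have hx' : x ∈ Sᶜ := Finset.mem_compl.2 hx
        have h : A (↑(rowE (rowE.symm ⟨x, hx'⟩))) (colE j₁).1
            = A (↑(rowE (rowE.symm ⟨x, hx'⟩))) (colE j₂).1 := hj (rowE.symm ⟨x, hx'⟩)
        simpa only [OrderIso.apply_symm_apply] using h
    have : (colE j₁).1 = (colE j₂).1 := hAs _ _ hcols
    exact colE.injective (Subtype.ext this)
  · -- colSum
    intro j
    have hk := hcs (colE j).1
    rw [← hk]
    unfold colSum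
    apply Finset.card_bij (fun i _ => (rowE i).1)
    · intro i hi
      rw [Finset.mem_filter] at hi ⊢
      exact ⟨Finset.mem_univ _, hi.2⟩
    · intro i₁ _ i₂ _ h
      exact rowE.injective (Subtype.ext h)
    · intro x hx
      rw [Finset.mem_filter] at hx
      have hxS : x ∉ S := by
        intro hmem
        have := (hc2 j x).2 hmem
        omega
      have hx' : x ∈ Sᶜ := Finset.mem_compl.2 hxS
      refine ⟨rowE.symm ⟨x, hx'⟩, ?_, ?_⟩
      · rw [Finset.mem_filter]
        refine ⟨Finset.mem_univ _, ?_⟩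
        show A (↑(rowE (rowE.symm ⟨x, hx'⟩))) (colE j).1 = 1
        simp only [OrderIso.apply_symm_apply]
        exact hx.2
      · simp only [OrderIso.apply_symm_apply]
  · -- avoids 𝓕
    rintro F hF ⟨f, g, hf, hg, hv⟩
    refine hAv F hF ⟨fun i => (rowE (f i)).1, fun j => (colE (g j)).1, ?_, ?_, ?_⟩
    · exact Subtype.val_injective.comp (rowE.injective.comp hf)
    · exact Subtype.val_injective.comp (colE.injective.comp hg)
    · intro i j
      exact hv i j

end Final


/-- For `ℓ ≥ 2` and a finite set `𝓕` of (0,1)-matrices there are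
constants `c`, `d` such that for all `m ≥ 1` and `0 ≤ k ≤ m`,
`forb_k(m, 3, (𝒯_ℓ(3)\𝒯_ℓ(2)) ∪ {T_ℓ(0,2,1)} ∪ 𝓕) ≤ c · Σ_{j=max(0,k-d)}^{k} forbmax_j(m, 𝓕)`. -/
theorem stmt12 (ℓ : ℕ) (hℓ : 2 ≤ ℓ) (𝓕 : Set CMat) (hfin : 𝓕.Finite)
    (h01 : ∀ F ∈ 𝓕, RMat 2 F.mat) :
    ∃ c d : ℕ, ∀ m : ℕ, 1 ≤ m → ∀ k : ℕ, k ≤ m →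
      forbK k m 3 ((TFam ℓ 3 \ TFam ℓ 2) ∪ {⟨ℓ, ℓ, Tmat3 ℓ 0 2 1⟩} ∪ 𝓕) ≤
        c * ∑ j ∈ Finset.Icc (k - d) k, forbmaxK j m 2 𝓕 := by
  classical
  refine ⟨2 ^ ramT ℓ, 0, ?_⟩
  intro m _ k _
  rw [Nat.sub_zero, Finset.Icc_self, Finset.sum_singleton]
  apply csSup_le'
  rintro n ⟨A, hA3, hAs, hcs, hAv⟩
  have hNP : NoPat ℓ A := by
    intro X hX hcfg
    rcases hX with hX | hX
    · exact hAv ⟨ℓ, ℓ, X⟩ (Set.mem_union_left _ (Set.mem_union_left _ hX)) hcfg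
    · subst hX
      exact hAv ⟨ℓ, ℓ, Tmat3 ℓ 0 2 1⟩
        (Set.mem_union_left _ (Set.mem_union_right _ rfl)) hcfg
  have hAvF : ∀ F ∈ 𝓕, ¬ IsConfig F.mat A := fun F hF =>
    hAv F (Set.mem_union_right _ hF)
  have hScard := supp_card_le hℓ A hA3 hNP
  have hn : n = ∑ T ∈ Finset.univ.image
      (fun j : Fin n => Finset.univ.filter (fun i : Fin m => A i j = 2)),
      (Finset.univ.filter (fun j : Fin n =>
        Finset.univ.filter (fun i : Fin m => A i j = 2) = T)).card := by
    have h0 := Finset.card_eq_sum_card_fiberwise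
      (s := (Finset.univ : Finset (Fin n)))
      (t := Finset.univ.image (fun j : Fin n => Finset.univ.filter (fun i : Fin m => A i j = 2)))
      (f := fun j => Finset.univ.filter (fun i : Fin m => A i j = 2))
      (fun j _ => Finset.mem_image_of_mem _ (Finset.mem_univ j))
    rw [Finset.card_fin] at h0
    exact h0
  have hfib : ∀ T ∈ Finset.univ.image
      (fun j : Fin n => Finset.univ.filter (fun i : Fin m => A i j = 2)),
      (Finset.univ.filter (fun j : Fin n =>
        Finset.univ.filter (fun i : Fin m => A i j = 2) = T)).card ≤ forbmaxK k m 2 𝓕 := by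
    intro T _
    calc (Finset.univ.filter (fun j : Fin n =>
          Finset.univ.filter (fun i : Fin m => A i j = 2) = T)).card
        ≤ forbK k (m - T.card) 2 𝓕 := fiber_le 𝓕 A hA3 hAs hcs hAvF T
      _ ≤ forbmaxK k m 2 𝓕 := forbK_le_forbmaxK k m (m - T.card) (Nat.sub_le _ _) 𝓕
  calc n = _ := hn
    _ ≤ ∑ _T ∈ Finset.univ.image
        (fun j : Fin n => Finset.univ.filter (fun i : Fin m => A i j = 2)),
        forbmaxK k m 2 𝓕 := Finset.sum_le_sum hfib
    _ = (Finset.univ.image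
        (fun j : Fin n => Finset.univ.filter (fun i : Fin m => A i j = 2))).card
        * forbmaxK k m 2 𝓕 := by
        rw [Finset.sum_const, smul_eq_mul]
    _ ≤ 2 ^ ramT ℓ * forbmaxK k m 2 𝓕 := Nat.mul_le_mul_right _ hScard
end
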